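/- arXiv:1106.0871 — 4 statements merged into one kernel-verified Lean document; each statement's English description precedes it below -/
import Mathlib

section
/- There exists an absolute constant C > 0 such that for every N ≥ 1, every real-valued orthonormal system {φ_n}_{n=1}^N on 𝕋 = [0,1], and all real coefficients a_1, …, a_N, the function f = ∑_{n=1}^N a_n φ_n satisfies ‖S[f]‖_{L²(V²)} ≤ C (∑_{n=1}^N a_n² ln²(n+1))^{1/2}, where ln denotes the natural logarithm. -/
open MeasureTheory

/-- The square variation norm of the finite sequence `a 1, …, a N`:
the supremum over all partitions of `{1, …, N}` into consecutive intervals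
(given by cut points `0 = c 0 < c 1 < ⋯ < c m = N`) of
`( ∑_j ( ∑_{n ∈ (c j, c (j+1)]} a n )² )^{1/2}`. -/
noncomputable def sqVar (N : ℕ) (a : ℕ → ℝ) : ℝ :=
  sSup { r : ℝ | ∃ (m : ℕ) (c : ℕ → ℕ), StrictMono c ∧ c 0 = 0 ∧ c m = N ∧
    r = Real.sqrt (∑ j ∈ Finset.range m,
      (∑ n ∈ Finset.Ioc (c j) (c (j + 1)), a n) ^ 2) }

namespace SqVarRM

open Finset

/-- Prefix sum. -/
noncomputable def Pf (g : ℕ → ℝ) (t : ℕ) : ℝ := ∑ n ∈ Finset.Ioc 0 t, g n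

lemma sum_Ioc_eq (g : ℕ → ℝ) {p q : ℕ} (h : p ≤ q) :
    ∑ n ∈ Finset.Ioc p q, g n = Pf g q - Pf g p := by
  have := Finset.sum_Ioc_consecutive g (Nat.zero_le p) h
  unfold Pf; linarith

/-- dyadic piece of the prefix decomposition. -/
noncomputable def Tf (g : ℕ → ℝ) (t l : ℕ) : ℝ :=
  ∑ n ∈ Finset.Ioc (2^(l+1) * (t / 2^(l+1))) (2^l * (t / 2^l)), g n

lemma Q_succ_le (t l : ℕ) : 2^(l+1) * (t / 2^(l+1)) ≤ 2^l * (t / 2^l) := by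
  have h1 : t / 2^(l+1) = t / 2^l / 2 := by
    rw [Nat.div_div_eq_div_mul, pow_succ]
  rw [h1, pow_succ]
  have := Nat.div_mul_le_self (t / 2^l) 2
  calc 2^l * 2 * (t / 2^l / 2) = 2^l * (t / 2^l / 2 * 2) := by ring
  _ ≤ 2^l * (t / 2^l) := by
      exact Nat.mul_le_mul_left _ (Nat.div_mul_le_self _ 2)

lemma Tf_eq (g : ℕ → ℝ) (t l : ℕ) :
    Tf g t l = Pf g (2^l * (t / 2^l)) - Pf g (2^(l+1) * (t / 2^(l+1))) :=
  sum_Ioc_eq g (Q_succ_le t l)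

lemma Pf_decomp (g : ℕ → ℝ) (K t : ℕ) (ht : t < 2^(K+1)) :
    Pf g t = ∑ l ∈ Finset.range (K+1), Tf g t l := by
  have h : ∀ l ∈ Finset.range (K+1), Tf g t l =
      (fun l => Pf g (2^l * (t / 2^l))) l - (fun l => Pf g (2^l * (t / 2^l))) (l+1) := by
    intro l _; exact Tf_eq g t l
  rw [Finset.sum_congr rfl h, Finset.sum_range_sub' (fun l => Pf g (2^l * (t / 2^l)))]
  simp [Nat.div_eq_of_lt ht, Pf]

lemma div2_parity {t l : ℕ} (h : 2^(l+1) * (t / 2^(l+1)) ≠ 2^l * (t / 2^l)) :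
    (t / 2^l) % 2 = 1 ∧ 2^(l+1) * (t / 2^(l+1)) = 2^l * (t / 2^l - 1) := by
  have h1 : t / 2^(l+1) = t / 2^l / 2 := by rw [Nat.div_div_eq_div_mul, pow_succ]
  set u := t / 2^l with hu
  have h2 : 2^(l+1) * (t / 2^(l+1)) = 2^l * (2 * (u/2)) := by
    rw [h1, pow_succ]; ring
  have h3 := Nat.div_add_mod u 2
  have h4 : u % 2 = 0 ∨ u % 2 = 1 := Nat.mod_two_eq_zero_or_one u
  rcases h4 with h4 | h4
  · exfalso; apply h; rw [h2]; congr 1; omega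
  · exact ⟨h4, by rw [h2]; congr 1; omega⟩

/-- Cauchy-Schwarz: square of sum ≤ card times sum of squares -/
lemma sq_sum_le (s : Finset ℕ) (f : ℕ → ℝ) :
    (∑ i ∈ s, f i)^2 ≤ (s.card : ℝ) * ∑ i ∈ s, f i^2 :=
  sq_sum_le_card_mul_sum_sq

/-- helper: sum over s of f bounded by sum over t of G via an injection on the support -/
lemma sum_le_of_inj (s t : Finset ℕ) (h : ℕ → ℕ) (f G : ℕ → ℝ)
    (hG : ∀ b ∈ t, 0 ≤ G b)
    (hf0 : ∀ a ∈ s, 0 ≤ f a)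
    (hmem : ∀ a ∈ s, f a ≠ 0 → h a ∈ t)
    (hval : ∀ a ∈ s, f a ≠ 0 → f a ≤ G (h a))
    (hinj : ∀ a ∈ s, ∀ a' ∈ s, f a ≠ 0 → f a' ≠ 0 → h a = h a' → a = a') :
    ∑ a ∈ s, f a ≤ ∑ b ∈ t, G b := by
  classical
  have h1 : ∑ a ∈ s, f a = ∑ a ∈ s.filter (fun a => f a ≠ 0), f a :=
    (Finset.sum_filter_of_ne (fun a ha hne => hne)).symm
  rw [h1]
  have h2 : ∑ a ∈ s.filter (fun a => f a ≠ 0), f a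
      ≤ ∑ a ∈ s.filter (fun a => f a ≠ 0), G (h a) := by
    apply Finset.sum_le_sum
    intro a ha
    rw [Finset.mem_filter] at ha
    exact hval a ha.1 ha.2
  refine h2.trans ?_
  rw [← Finset.sum_image (f := G) (g := h) ?inj]
  case inj =>
    intro a ha a' ha' hh
    rw [Finset.mem_coe, Finset.mem_filter] at ha ha'
    exact hinj a ha.1 a' ha'.1 ha.2 ha'.2 hh
  apply Finset.sum_le_sum_of_subset_of_nonneg
  · intro b hb
    rw [Finset.mem_image] at hb
    obtain ⟨a, ha, rfl⟩ := hb
    rw [Finset.mem_filter] at ha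
    exact hmem a ha.1 ha.2
  · intro b hb _; exact hG b hb


/-- the dyadic grid sum at scale `2^K`. -/
noncomputable def Dy (g : ℕ → ℝ) (K : ℕ) : ℝ :=
  ∑ l ∈ Finset.range (K+1), ∑ κ ∈ Finset.Icc 1 (2^(K-l)),
    (∑ n ∈ Finset.Ioc ((κ-1)*2^l) (κ*2^l), g n)^2

lemma Dy_nonneg (g : ℕ → ℝ) (K : ℕ) : 0 ≤ Dy g K := by
  unfold Dy; positivity

/-- Lemma A': disjoint consecutive intervals inside `(0, 2^K]`. -/
theorem lemmaA (g : ℕ → ℝ) (K m : ℕ) (d e : ℕ → ℕ)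
    (hde : ∀ j, j < m → d j ≤ e j)
    (hadj : ∀ j, j + 1 < m → e j ≤ d (j+1))
    (hb : ∀ j, j < m → e j ≤ 2^K) :
    ∑ j ∈ Finset.range m, (∑ n ∈ Finset.Ioc (d j) (e j), g n)^2
      ≤ 4*((K:ℝ)+1) * Dy g K := by
  classical
  -- chain
  have chain : ∀ j j', j < j' → j' < m → e j ≤ d j' := by
    intro j j' hjj' hj'm
    induction j' with
    | zero => omega
    | succ i ih =>
      rcases Nat.lt_succ_iff_lt_or_eq.mp hjj' with h | h
      · exact le_trans (ih h (by omega)) (le_trans (hde i (by omega)) (hadj i hj'm))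
      · subst h; exact hadj j hj'm
  set χ : ℕ → ℕ → ℝ := fun j l => if d j / 2^l = e j / 2^l then 0 else 1 with hχ
  -- step 1: per-j Cauchy-Schwarz bound
  have step1 : ∀ j, j < m → (∑ n ∈ Finset.Ioc (d j) (e j), g n)^2
      ≤ ((K:ℝ)+1) * ∑ l ∈ Finset.range (K+1),
          (2 * (χ j l * (Tf g (e j) l)^2) + 2 * (χ j l * (Tf g (d j) l)^2)) := by
    intro j hj
    have hd2 : d j < 2^(K+1) := lt_of_le_of_lt (le_trans (hde j hj) (hb j hj))
      (by have : (2:ℕ)^K < 2^(K+1) := Nat.pow_lt_pow_right (by norm_num) (by omega); omega)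
    have he2 : e j < 2^(K+1) := lt_of_le_of_lt (hb j hj)
      (by have : (2:ℕ)^K < 2^(K+1) := Nat.pow_lt_pow_right (by norm_num) (by omega); omega)
    have hS : ∑ n ∈ Finset.Ioc (d j) (e j), g n
        = ∑ l ∈ Finset.range (K+1), (Tf g (e j) l - Tf g (d j) l) := by
      rw [sum_Ioc_eq g (hde j hj), Pf_decomp g K _ he2, Pf_decomp g K _ hd2,
        Finset.sum_sub_distrib]
    rw [hS]
    calc (∑ l ∈ Finset.range (K+1), (Tf g (e j) l - Tf g (d j) l))^2
        ≤ ((Finset.range (K+1)).card : ℝ)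
          * ∑ l ∈ Finset.range (K+1), (Tf g (e j) l - Tf g (d j) l)^2 :=
          sq_sum_le _ _
      _ ≤ ((K:ℝ)+1) * ∑ l ∈ Finset.range (K+1),
          (2 * (χ j l * (Tf g (e j) l)^2) + 2 * (χ j l * (Tf g (d j) l)^2)) := by
          apply mul_le_mul
          · simp
          · apply Finset.sum_le_sum
            intro l _
            by_cases hdl : d j / 2^l = e j / 2^l
            · have hT : Tf g (e j) l = Tf g (d j) l := by
                unfold Tf
                have h2 : d j / 2^(l+1) = e j / 2^(l+1) := by
                  have hd' : d j / 2^(l+1) = d j / 2^l / 2 := by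
                    rw [Nat.div_div_eq_div_mul, pow_succ]
                  have he' : e j / 2^(l+1) = e j / 2^l / 2 := by
                    rw [Nat.div_div_eq_div_mul, pow_succ]
                  rw [hd', he', hdl]
                rw [hdl, h2]
              simp [hχ, hdl, hT]
            · simp only [hχ, if_neg hdl]
              nlinarith [sq_nonneg (Tf g (e j) l + Tf g (d j) l)]
          · positivity
          · positivity
  -- sum over j, swap
  have step2 : ∑ j ∈ Finset.range m, (∑ n ∈ Finset.Ioc (d j) (e j), g n)^2
      ≤ ((K:ℝ)+1) * ∑ l ∈ Finset.range (K+1), (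
          2 * (∑ j ∈ Finset.range m, χ j l * (Tf g (e j) l)^2)
          + 2 * (∑ j ∈ Finset.range m, χ j l * (Tf g (d j) l)^2)) := by
    calc ∑ j ∈ Finset.range m, (∑ n ∈ Finset.Ioc (d j) (e j), g n)^2
        ≤ ∑ j ∈ Finset.range m, ((K:ℝ)+1) * ∑ l ∈ Finset.range (K+1),
          (2 * (χ j l * (Tf g (e j) l)^2) + 2 * (χ j l * (Tf g (d j) l)^2)) := by
          apply Finset.sum_le_sum; intro j hj
          exact step1 j (Finset.mem_range.mp hj)
      _ = ((K:ℝ)+1) * ∑ l ∈ Finset.range (K+1), (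
          2 * (∑ j ∈ Finset.range m, χ j l * (Tf g (e j) l)^2)
          + 2 * (∑ j ∈ Finset.range m, χ j l * (Tf g (d j) l)^2)) := by
          rw [← Finset.mul_sum, Finset.sum_comm]
          congr 1; apply Finset.sum_congr rfl; intro l _
          rw [Finset.sum_add_distrib, Finset.mul_sum, Finset.mul_sum]
  -- per-level bounds
  have key : ∀ (l : ℕ), l < K+1 → ∀ (w : ℕ → ℕ), (∀ j, j < m → w j ≤ e j) →
      (∀ j, j < m → d j ≤ w j) →
      (∀ j j', j < j' → j' < m → (χ j l ≠ 0 → w j / 2^l < 2^K) → True) → True := fun _ _ _ _ _ _ => trivial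
  -- e-type bound
  have ebound : ∀ l, l ∈ Finset.range (K+1) →
      ∑ j ∈ Finset.range m, χ j l * (Tf g (e j) l)^2
      ≤ ∑ κ ∈ Finset.Icc 1 (2^(K-l)), (∑ n ∈ Finset.Ioc ((κ-1)*2^l) (κ*2^l), g n)^2 := by
    intro l hl
    rw [Finset.mem_range] at hl
    apply sum_le_of_inj _ _ (fun j => e j / 2^l)
    · intro b _; positivity
    · intro j _
      have : 0 ≤ (Tf g (e j) l)^2 := sq_nonneg _
      by_cases h : d j / 2^l = e j / 2^l <;> simp [hχ, h, this]
    · intro j hj hne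
      beta_reduce
      beta_reduce at hne
      rw [Finset.mem_range] at hj
      have hT : Tf g (e j) l ≠ 0 := by
        intro h0; apply hne; simp [h0]
      have hQ : 2^(l+1) * (e j / 2^(l+1)) ≠ 2^l * (e j / 2^l) := by
        intro hq; apply hT; unfold Tf; rw [hq]; simp
      obtain ⟨hpar, _⟩ := div2_parity hQ
      rw [Finset.mem_Icc]
      constructor
      · rcases Nat.eq_zero_or_pos (e j / 2 ^ l) with h0 | h0
        · rw [h0] at hpar; simp at hpar
        · exact h0
      · have : e j / 2^l ≤ 2^K / 2^l := Nat.div_le_div_right (hb j hj)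
        rwa [Nat.pow_div (by omega) (by norm_num)] at this
    · intro j hj hne
      beta_reduce
      beta_reduce at hne
      have hT : Tf g (e j) l ≠ 0 := by intro h0; apply hne; simp [h0]
      have hQ : 2^(l+1) * (e j / 2^(l+1)) ≠ 2^l * (e j / 2^l) := by
        intro hq; apply hT; unfold Tf; rw [hq]; simp
      obtain ⟨hpar, heq⟩ := div2_parity hQ
      have hχ1 : χ j l = 1 := by
        by_cases h : d j / 2^l = e j / 2^l
        · exfalso; apply hne; simp [hχ, h]
        · simp [hχ, h]
      rw [hχ1, one_mul]
      apply le_of_eq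
      unfold Tf
      rw [heq]
      congr 2 <;> ring
    · intro j hj j' hj' hne hne' hhe
      beta_reduce at hne hne' hhe
      rw [Finset.mem_range] at hj hj'
      by_contra hjj
      have hχj : d j / 2^l ≠ e j / 2^l := by
        intro h; apply hne; simp [hχ, h]
      have hχj' : d j' / 2^l ≠ e j' / 2^l := by
        intro h; apply hne'; simp [hχ, h]
      rcases lt_trichotomy j j' with h | h | h
      · have h1 : e j ≤ d j' := chain j j' h hj'
        have h2 : e j / 2^l ≤ d j' / 2^l := Nat.div_le_div_right h1
        have h3 : d j' / 2^l ≤ e j' / 2^l := Nat.div_le_div_right (hde j' hj')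
        omega
      · exact hjj h
      · have h1 : e j' ≤ d j := chain j' j h hj
        have h2 : e j' / 2^l ≤ d j / 2^l := Nat.div_le_div_right h1
        have h3 : d j / 2^l ≤ e j / 2^l := Nat.div_le_div_right (hde j hj)
        omega
  -- d-type bound
  have dbound : ∀ l, l ∈ Finset.range (K+1) →
      ∑ j ∈ Finset.range m, χ j l * (Tf g (d j) l)^2
      ≤ ∑ κ ∈ Finset.Icc 1 (2^(K-l)), (∑ n ∈ Finset.Ioc ((κ-1)*2^l) (κ*2^l), g n)^2 := by
    intro l hl
    rw [Finset.mem_range] at hl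
    apply sum_le_of_inj _ _ (fun j => d j / 2^l)
    · intro b _; positivity
    · intro j _
      have : 0 ≤ (Tf g (d j) l)^2 := sq_nonneg _
      by_cases h : d j / 2^l = e j / 2^l <;> simp [hχ, h, this]
    · intro j hj hne
      beta_reduce
      beta_reduce at hne
      rw [Finset.mem_range] at hj
      have hT : Tf g (d j) l ≠ 0 := by intro h0; apply hne; simp [h0]
      have hQ : 2^(l+1) * (d j / 2^(l+1)) ≠ 2^l * (d j / 2^l) := by
        intro hq; apply hT; unfold Tf; rw [hq]; simp
      obtain ⟨hpar, _⟩ := div2_parity hQ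
      rw [Finset.mem_Icc]
      constructor
      · rcases Nat.eq_zero_or_pos (d j / 2 ^ l) with h0 | h0
        · rw [h0] at hpar; simp at hpar
        · exact h0
      · have : d j / 2^l ≤ 2^K / 2^l := Nat.div_le_div_right (le_trans (hde j hj) (hb j hj))
        rwa [Nat.pow_div (by omega) (by norm_num)] at this
    · intro j hj hne
      beta_reduce
      beta_reduce at hne
      have hT : Tf g (d j) l ≠ 0 := by intro h0; apply hne; simp [h0]
      have hQ : 2^(l+1) * (d j / 2^(l+1)) ≠ 2^l * (d j / 2^l) := by
        intro hq; apply hT; unfold Tf; rw [hq]; simp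
      obtain ⟨hpar, heq⟩ := div2_parity hQ
      have hχ1 : χ j l = 1 := by
        by_cases h : d j / 2^l = e j / 2^l
        · exfalso; apply hne; simp [hχ, h]
        · simp [hχ, h]
      rw [hχ1, one_mul]
      apply le_of_eq
      unfold Tf
      rw [heq]
      congr 2 <;> ring
    · intro j hj j' hj' hne hne' hhe
      beta_reduce at hne hne' hhe
      rw [Finset.mem_range] at hj hj'
      by_contra hjj
      have hχj : d j / 2^l ≠ e j / 2^l := by
        intro h; apply hne; simp [hχ, h]
      have hχj' : d j' / 2^l ≠ e j' / 2^l := by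
        intro h; apply hne'; simp [hχ, h]
      rcases lt_trichotomy j j' with h | h | h
      · have h1 : e j ≤ d j' := chain j j' h hj'
        have h2 : e j / 2^l ≤ d j' / 2^l := Nat.div_le_div_right h1
        have h3 : d j / 2^l ≤ e j / 2^l := Nat.div_le_div_right (hde j hj)
        omega
      · exact hjj h
      · have h1 : e j' ≤ d j := chain j' j h hj
        have h2 : e j' / 2^l ≤ d j / 2^l := Nat.div_le_div_right h1
        have h3 : d j' / 2^l ≤ e j' / 2^l := Nat.div_le_div_right (hde j' hj')
        omega
  -- combine
  refine step2.trans ?_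
  unfold Dy
  rw [show (4:ℝ)*((K:ℝ)+1) * ∑ l ∈ Finset.range (K+1), ∑ κ ∈ Finset.Icc 1 (2^(K-l)),
      (∑ n ∈ Finset.Ioc ((κ-1)*2^l) (κ*2^l), g n)^2
    = ((K:ℝ)+1) * ∑ l ∈ Finset.range (K+1), (4 * ∑ κ ∈ Finset.Icc 1 (2^(K-l)),
      (∑ n ∈ Finset.Ioc ((κ-1)*2^l) (κ*2^l), g n)^2) by rw [← Finset.mul_sum]; ring]
  apply mul_le_mul_of_nonneg_left _ (by positivity)
  apply Finset.sum_le_sum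
  intro l hl
  have h1 := ebound l hl
  have h2 := dbound l hl
  linarith

/-- block endpoints -/
def sblk (N k : ℕ) : ℕ := min (2^k - 1) N

lemma sblk_mono (N : ℕ) : Monotone (sblk N) := by
  apply monotone_nat_of_le_succ
  intro k
  have h : (2:ℕ)^k ≤ 2^(k+1) := Nat.pow_le_pow_right (by norm_num) (by omega)
  unfold sblk; omega

lemma sblk_zero (N : ℕ) : sblk N 0 = 0 := by unfold sblk; simp

lemma sblk_top (N K : ℕ) (h : N ≤ 2^(K+1) - 1) : sblk N (K+1) = N := by
  unfold sblk; omega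

lemma sblk_succ_le (N k : ℕ) : sblk N (k+1) ≤ sblk N k + 2^k := by
  have h : (2:ℕ)^(k+1) = 2*2^k := by rw [pow_succ]; ring
  have h1 : (1:ℕ) ≤ 2^k := Nat.one_le_two_pow
  unfold sblk; omega

/-- shifted sum over Ioc -/
lemma shift_sum (g : ℕ → ℝ) (s a b : ℕ) :
    ∑ n ∈ Finset.Ioc a b, g (n + s) = ∑ n ∈ Finset.Ioc (s + a) (s + b), g n := by
  rw [show Finset.Ioc (s+a) (s+b) = Finset.Ioc (a+s) (b+s) by rw [Nat.add_comm s a, Nat.add_comm s b]]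
  rw [← Finset.map_add_right_Ioc]
  rw [Finset.sum_map]
  rfl

lemma shift_sum' (g : ℕ → ℝ) (s p q : ℕ) (hp : s ≤ p) (hq : s ≤ q) :
    ∑ n ∈ Finset.Ioc (p - s) (q - s), g (n + s) = ∑ n ∈ Finset.Ioc p q, g n := by
  rw [shift_sum]
  rw [Nat.add_sub_cancel' hp, Nat.add_sub_cancel' hq]

/-- harmonic square sum bound -/
lemma harmonic_sq (R : ℕ) : ∑ k ∈ Finset.range R, (1/((k:ℝ)+1))^2 ≤ 2 := by
  have h1 : ∀ k ∈ Finset.range R, (1/((k:ℝ)+1))^2 ≤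
      (fun j : ℕ => 2/((j:ℝ)+1)) k - (fun j : ℕ => 2/((j:ℝ)+1)) (k+1) := by
    intro k _
    simp only []
    push_cast
    have hk0 : (0:ℝ) < (k:ℝ)+1 := by positivity
    have hk1 : (0:ℝ) < (k:ℝ)+1+1 := by positivity
    rw [div_sub_div _ _ (ne_of_gt hk0) (ne_of_gt hk1), div_pow, one_pow,
      div_le_div_iff₀ (by positivity) (by positivity)]
    nlinarith [sq_nonneg ((k:ℝ)+1)]
  calc ∑ k ∈ Finset.range R, (1/((k:ℝ)+1))^2
      ≤ ∑ k ∈ Finset.range R,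
        ((fun j : ℕ => 2/((j:ℝ)+1)) k - (fun j : ℕ => 2/((j:ℝ)+1)) (k+1)) :=
        Finset.sum_le_sum h1
    _ = 2/(((0:ℕ):ℝ)+1) - 2/((R:ℝ)+1) := by
        rw [Finset.sum_range_sub' (fun j : ℕ => 2/((j:ℝ)+1))]
    _ ≤ 2 := by
        have h2 : (0:ℝ) ≤ 2/((R:ℝ)+1) := by positivity
        norm_num at *
        linarith

/-- weighted Cauchy-Schwarz with weights (k+1)^2 -/
lemma weighted_cs (R : ℕ) (f : ℕ → ℝ) :
    (∑ k ∈ Finset.range R, f k)^2 ≤ 2 * ∑ k ∈ Finset.range R, ((k:ℝ)+1)^2 * f k^2 := by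
  have h0 : ∀ k ∈ Finset.range R, f k = (1/((k:ℝ)+1)) * (((k:ℝ)+1) * f k) := by
    intro k _
    have : ((k:ℝ)+1) ≠ 0 := by positivity
    field_simp
  calc (∑ k ∈ Finset.range R, f k)^2
      = (∑ k ∈ Finset.range R, (1/((k:ℝ)+1)) * (((k:ℝ)+1) * f k))^2 := by
        rw [← Finset.sum_congr rfl h0]
    _ ≤ (∑ k ∈ Finset.range R, (1/((k:ℝ)+1))^2) * (∑ k ∈ Finset.range R, (((k:ℝ)+1) * f k)^2) :=
        Finset.sum_mul_sq_le_sq_mul_sq _ _ _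
    _ ≤ 2 * ∑ k ∈ Finset.range R, ((k:ℝ)+1)^2 * f k^2 := by
        apply mul_le_mul (harmonic_sq R)
        · apply le_of_eq; apply Finset.sum_congr rfl; intro k _; ring
        · positivity
        · norm_num

/-- clamped cut points -/
def vv (c : ℕ → ℕ) (N j k : ℕ) : ℕ := min (max (c j) (sblk N k)) (c (j+1))

/-- the majorant -/
noncomputable def Mexpr (g : ℕ → ℝ) (N K : ℕ) : ℝ :=
  4 * ∑ k ∈ Finset.range (K+1), ((k:ℝ)+1)^2
        * (∑ n ∈ Finset.Ioc (sblk N k) (sblk N (k+1)), g n)^2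
  + 16 * ∑ k ∈ Finset.range (K+1), ((k:ℝ)+1) *
      ∑ l ∈ Finset.range (k+1), ∑ κ ∈ Finset.Icc 1 (2^(k-l)),
        (∑ n ∈ Finset.Ioc (sblk N k + (κ-1)*2^l) (sblk N k + κ*2^l), g n)^2

theorem master (g : ℕ → ℝ) (N K m : ℕ) (c : ℕ → ℕ)
    (hNK : N ≤ 2^(K+1) - 1)
    (hc : StrictMono c) (hc0 : c 0 = 0) (hcm : c m = N) :
    ∑ j ∈ Finset.range m, (∑ n ∈ Finset.Ioc (c j) (c (j+1)), g n)^2 ≤ Mexpr g N K := by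
  classical
  have hcmono : Monotone c := hc.monotone
  have hccons : ∀ j, c j ≤ c (j+1) := fun j => hcmono (by omega)
  have hcle : ∀ j, j ≤ m → c j ≤ N := fun j hj => hcm ▸ hcmono hj
  have hsm : ∀ k, sblk N k ≤ sblk N (k+1) := fun k => sblk_mono N (by omega)
  -- definitions
  set FF : ℕ → ℕ → ℝ := fun j k =>
    if c j ≤ sblk N k ∧ sblk N (k+1) ≤ c (j+1)
    then ∑ n ∈ Finset.Ioc (sblk N k) (sblk N (k+1)), g n else 0 with hFF
  set pp : ℕ → ℕ → ℕ := fun j k =>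
    min (if c j ≤ sblk N k ∧ sblk N (k+1) ≤ c (j+1) then vv c N j (k+1) else vv c N j k)
      (sblk N (k+1)) with hpp
  set qq : ℕ → ℕ → ℕ := fun j k => min (vv c N j (k+1)) (sblk N (k+1)) with hqq
  set EE : ℕ → ℕ → ℝ := fun j k => ∑ n ∈ Finset.Ioc (pp j k) (qq j k), g n with hEE
  have hvmono : ∀ j k, vv c N j k ≤ vv c N j (k+1) := by
    intro j k
    have h1 := hsm k
    have h2 := hccons j
    unfold vv; omega
  have hppqq : ∀ j k, pp j k ≤ qq j k := by
    intro j k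
    simp only [hpp, hqq]
    by_cases hcond : c j ≤ sblk N k ∧ sblk N (k+1) ≤ c (j+1)
    · rw [if_pos hcond]
    · rw [if_neg hcond]
      have := hvmono j k
      omega
  -- splitting identity
  have split : ∀ j k, ∑ n ∈ Finset.Ioc (vv c N j k) (vv c N j (k+1)), g n
      = FF j k + EE j k := by
    intro j k
    have h1 := hsm k
    have h2 := hccons j
    simp only [hFF, hEE, hpp, hqq]
    by_cases hcond : c j ≤ sblk N k ∧ sblk N (k+1) ≤ c (j+1)
    · rw [if_pos hcond, if_pos hcond]
      have hv1 : vv c N j k = sblk N k := by unfold vv; omega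
      have hv2 : vv c N j (k+1) = sblk N (k+1) := by unfold vv; omega
      rw [hv1, hv2]
      simp
    · rw [if_neg hcond, if_neg hcond]
      by_cases hcase : c j < sblk N (k+1) ∧ sblk N k < c (j+1)
      · -- the clamps are no-ops
        have hv2 : vv c N j (k+1) ≤ sblk N (k+1) := by unfold vv; omega
        have hv1 : vv c N j k ≤ sblk N (k+1) := le_trans (hvmono j k) hv2
        rw [min_eq_left hv1, min_eq_left hv2]
        simp
      · -- degenerate: piece empty
        have hv12 : vv c N j k = vv c N j (k+1) := by unfold vv; omega
        rw [hv12]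
        simp
  -- telescoping
  have tele : ∀ j, j < m → ∑ n ∈ Finset.Ioc (c j) (c (j+1)), g n
      = ∑ k ∈ Finset.range (K+1), (FF j k + EE j k) := by
    intro j hj
    rw [← Finset.sum_congr rfl (fun k _ => split j k)]
    have hpc : ∀ k, ∑ n ∈ Finset.Ioc (vv c N j k) (vv c N j (k+1)), g n
        = Pf g (vv c N j (k+1)) - Pf g (vv c N j k) := by
      intro k; exact sum_Ioc_eq g (hvmono j k)
    have htel := Finset.sum_range_sub (fun k => Pf g (vv c N j k)) (K+1)
    beta_reduce at htel
    rw [Finset.sum_congr rfl (fun k _ => hpc k), htel]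
    have hv0 : vv c N j 0 = c j := by
      have := sblk_zero N; have := hccons j; unfold vv; omega
    have hvK : vv c N j (K+1) = c (j+1) := by
      have h1 := sblk_top N K hNK
      have h2 := hcle j (by omega)
      have h3 := hcle (j+1) (by omega)
      unfold vv; omega
    rw [hv0, hvK, sum_Ioc_eq g (hccons j)]
  -- per-j square bound
  have perj : ∀ j, j < m → (∑ n ∈ Finset.Ioc (c j) (c (j+1)), g n)^2
      ≤ 4 * ∑ k ∈ Finset.range (K+1), ((k:ℝ)+1)^2 * (FF j k)^2
        + 4 * ∑ k ∈ Finset.range (K+1), (EE j k)^2 := by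
    intro j hj
    rw [tele j hj, Finset.sum_add_distrib]
    have hF : (∑ k ∈ Finset.range (K+1), FF j k)^2
        ≤ 2 * ∑ k ∈ Finset.range (K+1), ((k:ℝ)+1)^2 * (FF j k)^2 :=
      weighted_cs (K+1) (FF j)
    -- E part: support has ≤ 2 elements
    have hEsupp : (∑ k ∈ Finset.range (K+1), EE j k)^2
        ≤ 2 * ∑ k ∈ Finset.range (K+1), (EE j k)^2 := by
      set t := (Finset.range (K+1)).filter (fun k => EE j k ≠ 0) with ht
      have hsum : ∑ k ∈ Finset.range (K+1), EE j k = ∑ k ∈ t, EE j k :=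
        (Finset.sum_filter_of_ne (fun k _ h => h)).symm
      have hA : ((Finset.range (K+1)).filter
          (fun k => sblk N k < c j ∧ c j < sblk N (k+1))).card ≤ 1 := by
        apply Finset.card_le_one.mpr
        intro x hx y hy
        rw [Finset.mem_filter] at hx hy
        rcases lt_trichotomy x y with h | h | h
        · exfalso
          have := sblk_mono N (show x+1 ≤ y by omega)
          omega
        · exact h
        · exfalso
          have := sblk_mono N (show y+1 ≤ x by omega)
          omega
      have hB : ((Finset.range (K+1)).filter
          (fun k => sblk N k < c (j+1) ∧ c (j+1) < sblk N (k+1))).card ≤ 1 := by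
        apply Finset.card_le_one.mpr
        intro x hx y hy
        rw [Finset.mem_filter] at hx hy
        rcases lt_trichotomy x y with h | h | h
        · exfalso
          have := sblk_mono N (show x+1 ≤ y by omega)
          omega
        · exact h
        · exfalso
          have := sblk_mono N (show y+1 ≤ x by omega)
          omega
      have hsub : t ⊆ ((Finset.range (K+1)).filter
            (fun k => sblk N k < c j ∧ c j < sblk N (k+1)))
          ∪ ((Finset.range (K+1)).filter
            (fun k => sblk N k < c (j+1) ∧ c (j+1) < sblk N (k+1))) := by
        intro k hk
        rw [ht, Finset.mem_filter] at hk
        obtain ⟨hkr, hkne⟩ := hk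
        have hpq : pp j k < qq j k := by
          by_contra hnot
          apply hkne
          simp only [hEE]
          rw [Finset.Ioc_eq_empty hnot]
          simp
        rw [Finset.mem_union, Finset.mem_filter, Finset.mem_filter]
        rw [Finset.mem_range] at hkr
        simp only [Finset.mem_range]
        have h1 := hsm k
        have h2 := hccons j
        by_cases hcond : c j ≤ sblk N k ∧ sblk N (k+1) ≤ c (j+1)
        · exfalso
          simp only [hpp, hqq, if_pos hcond] at hpq
          omega
        · simp only [hpp, hqq, if_neg hcond] at hpq
          have hvk : vv c N j k = min (max (c j) (sblk N k)) (c (j+1)) := rfl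
          have hvk1 : vv c N j (k+1) = min (max (c j) (sblk N (k+1))) (c (j+1)) := rfl
          omega
      have hcard : t.card ≤ 2 := by
        calc t.card ≤ _ := Finset.card_le_card hsub
        _ ≤ _ := Finset.card_union_le _ _
        _ ≤ 2 := by omega
      calc (∑ k ∈ Finset.range (K+1), EE j k)^2
          = (∑ k ∈ t, EE j k)^2 := by rw [hsum]
        _ ≤ (t.card : ℝ) * ∑ k ∈ t, (EE j k)^2 := sq_sum_le t (EE j)
        _ ≤ 2 * ∑ k ∈ t, (EE j k)^2 := by
            apply mul_le_mul_of_nonneg_right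
            · exact_mod_cast hcard
            · positivity
        _ ≤ 2 * ∑ k ∈ Finset.range (K+1), (EE j k)^2 := by
            apply mul_le_mul_of_nonneg_left _ (by norm_num)
            apply Finset.sum_le_sum_of_subset_of_nonneg (Finset.filter_subset _ _)
            intro k _ _; positivity
    nlinarith [sq_nonneg (∑ k ∈ Finset.range (K+1), FF j k - ∑ k ∈ Finset.range (K+1), EE j k)]
  -- sum over j
  have main : ∑ j ∈ Finset.range m, (∑ n ∈ Finset.Ioc (c j) (c (j+1)), g n)^2
      ≤ 4 * ∑ k ∈ Finset.range (K+1), ((k:ℝ)+1)^2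
            * (∑ j ∈ Finset.range m, (FF j k)^2)
        + 4 * ∑ k ∈ Finset.range (K+1), (∑ j ∈ Finset.range m, (EE j k)^2) := by
    calc ∑ j ∈ Finset.range m, (∑ n ∈ Finset.Ioc (c j) (c (j+1)), g n)^2
        ≤ ∑ j ∈ Finset.range m,
          (4 * ∑ k ∈ Finset.range (K+1), ((k:ℝ)+1)^2 * (FF j k)^2
            + 4 * ∑ k ∈ Finset.range (K+1), (EE j k)^2) := by
          apply Finset.sum_le_sum
          intro j hj
          exact perj j (Finset.mem_range.mp hj)
      _ = _ := by
          rw [Finset.sum_add_distrib, ← Finset.mul_sum, ← Finset.mul_sum,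
            Finset.sum_comm (s := Finset.range m) (t := Finset.range (K+1)),
            Finset.sum_comm (s := Finset.range m) (t := Finset.range (K+1))]
          congr 1
          · congr 1
            apply Finset.sum_congr rfl
            intro k _
            rw [Finset.mul_sum]
      _ ≤ _ := le_refl _
  refine main.trans ?_
  -- F-block bound
  have Fblock : ∀ k, ∑ j ∈ Finset.range m, (FF j k)^2
      ≤ (∑ n ∈ Finset.Ioc (sblk N k) (sblk N (k+1)), g n)^2 := by
    intro k
    have hsq : ∀ j, (FF j k)^2 = if c j ≤ sblk N k ∧ sblk N (k+1) ≤ c (j+1)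
        then (∑ n ∈ Finset.Ioc (sblk N k) (sblk N (k+1)), g n)^2 else 0 := by
      intro j
      simp only [hFF]
      by_cases hcond : c j ≤ sblk N k ∧ sblk N (k+1) ≤ c (j+1)
      · rw [if_pos hcond, if_pos hcond]
      · rw [if_neg hcond, if_neg hcond]; ring
    rw [Finset.sum_congr rfl (fun j _ => hsq j), ← Finset.sum_filter]
    rw [Finset.sum_const]
    by_cases hk : sblk N k < sblk N (k+1)
    · have hcard : ((Finset.range m).filter
          (fun j => c j ≤ sblk N k ∧ sblk N (k+1) ≤ c (j+1))).card ≤ 1 := by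
        apply Finset.card_le_one.mpr
        intro x hx y hy
        rw [Finset.mem_filter] at hx hy
        rcases lt_trichotomy x y with h | h | h
        · exfalso
          have := hcmono (show x+1 ≤ y by omega)
          omega
        · exact h
        · exfalso
          have := hcmono (show y+1 ≤ x by omega)
          omega
      calc _ ≤ (1:ℕ) • (∑ n ∈ Finset.Ioc (sblk N k) (sblk N (k+1)), g n)^2 := by
            apply smul_le_smul_of_nonneg_right hcard (sq_nonneg _)
        _ = _ := by simp
    · have : Finset.Ioc (sblk N k) (sblk N (k+1)) = ∅ := Finset.Ioc_eq_empty hk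
      rw [this]
      simp
  -- E-block bound
  have Eblock : ∀ k, ∑ j ∈ Finset.range m, (EE j k)^2
      ≤ 4*((k:ℝ)+1) * ∑ l ∈ Finset.range (k+1), ∑ κ ∈ Finset.Icc 1 (2^(k-l)),
          (∑ n ∈ Finset.Ioc (sblk N k + (κ-1)*2^l) (sblk N k + κ*2^l), g n)^2 := by
    intro k
    have hEeq : ∀ j, j < m → EE j k
        = ∑ n ∈ Finset.Ioc (pp j k - (sblk N k)) (qq j k - (sblk N k)), (fun n => g (n + (sblk N k))) n := by
      intro j hj
      simp only [hEE]
      by_cases hp : (sblk N k) ≤ pp j k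
      · have hq : (sblk N k) ≤ qq j k := le_trans hp (hppqq j k)
        rw [shift_sum' g (sblk N k) (pp j k) (qq j k) hp hq]
      · -- pp < (sblk N k) : degenerate, pp = qq
        have h1 := hsm k
        have h2 := hccons j
        have hpq : pp j k = qq j k := by
          by_cases hcond : c j ≤ sblk N k ∧ sblk N (k+1) ≤ c (j+1)
          · simp only [hpp, hqq, if_pos hcond]
          · simp only [hpp, hqq, if_neg hcond] at *
            have hvk : vv c N j k = min (max (c j) (sblk N k)) (c (j+1)) := rfl
            have hvk1 : vv c N j (k+1) = min (max (c j) (sblk N (k+1))) (c (j+1)) := rfl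
            omega
        rw [hpq]
        simp
    rw [Finset.sum_congr rfl (fun j hj => by
      rw [hEeq j (Finset.mem_range.mp hj)])]
    have happ := lemmaA (fun n => g (n + (sblk N k))) k m
      (fun j => pp j k - (sblk N k)) (fun j => qq j k - (sblk N k))
      (fun j hj => Nat.sub_le_sub_right (hppqq j k) (sblk N k))
      (fun j hj => by
        beta_reduce
        apply Nat.sub_le_sub_right
        -- qq j k ≤ pp (j+1) k
        have h2 := hccons (j+1)
        have h3 := hccons j
        have h1 := hsm k
        have hcc : c (j+1+1) = c (j+2) := congrArg c (by omega)
        by_cases hcond : c (j+1) ≤ sblk N k ∧ sblk N (k+1) ≤ c (j+1+1)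
        · simp only [hpp, hqq, if_pos hcond]
          have hvk1 : vv c N j (k+1) = min (max (c j) (sblk N (k+1))) (c (j+1)) := rfl
          have hvk2 : vv c N (j+1) (k+1) = min (max (c (j+1)) (sblk N (k+1))) (c (j+1+1)) := rfl
          omega
        · simp only [hpp, hqq, if_neg hcond]
          have hvk1 : vv c N j (k+1) = min (max (c j) (sblk N (k+1))) (c (j+1)) := rfl
          have hvk2 : vv c N (j+1) k = min (max (c (j+1)) (sblk N k)) (c (j+1+1)) := rfl
          omega)
      (fun j hj => by
        beta_reduce
        have h1 := sblk_succ_le N k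
        have h2 : qq j k ≤ sblk N (k+1) := by simp only [hqq]; omega
        have h3 : (1:ℕ) ≤ 2^k := Nat.one_le_two_pow
        omega)
    refine happ.trans ?_
    apply le_of_eq
    unfold Dy
    congr 1
    apply Finset.sum_congr rfl
    intro l _
    apply Finset.sum_congr rfl
    intro κ _
    rw [shift_sum g (sblk N k)]
  -- final combination
  unfold Mexpr
  have h1 : 4 * ∑ k ∈ Finset.range (K+1), ((k:ℝ)+1)^2
        * (∑ j ∈ Finset.range m, (FF j k)^2)
      ≤ 4 * ∑ k ∈ Finset.range (K+1), ((k:ℝ)+1)^2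
        * (∑ n ∈ Finset.Ioc (sblk N k) (sblk N (k+1)), g n)^2 := by
    apply mul_le_mul_of_nonneg_left _ (by norm_num)
    apply Finset.sum_le_sum
    intro k _
    apply mul_le_mul_of_nonneg_left (Fblock k) (by positivity)
  have h2 : 4 * ∑ k ∈ Finset.range (K+1), (∑ j ∈ Finset.range m, (EE j k)^2)
      ≤ 16 * ∑ k ∈ Finset.range (K+1), ((k:ℝ)+1) *
        ∑ l ∈ Finset.range (k+1), ∑ κ ∈ Finset.Icc 1 (2^(k-l)),
          (∑ n ∈ Finset.Ioc (sblk N k + (κ-1)*2^l) (sblk N k + κ*2^l), g n)^2 := by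
    rw [show (16:ℝ) * ∑ k ∈ Finset.range (K+1), ((k:ℝ)+1) *
        ∑ l ∈ Finset.range (k+1), ∑ κ ∈ Finset.Icc 1 (2^(k-l)),
          (∑ n ∈ Finset.Ioc (sblk N k + (κ-1)*2^l) (sblk N k + κ*2^l), g n)^2
      = 4 * ∑ k ∈ Finset.range (K+1), (4*((k:ℝ)+1) *
        ∑ l ∈ Finset.range (k+1), ∑ κ ∈ Finset.Icc 1 (2^(k-l)),
          (∑ n ∈ Finset.Ioc (sblk N k + (κ-1)*2^l) (sblk N k + κ*2^l), g n)^2) by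
        rw [Finset.mul_sum, Finset.mul_sum]
        apply Finset.sum_congr rfl
        intro k _
        ring]
    apply mul_le_mul_of_nonneg_left _ (by norm_num)
    apply Finset.sum_le_sum
    intro k _
    exact Eblock k
  linarith


section Integration

variable (φ : ℕ → ℝ → ℝ) (a : ℕ → ℝ) (N : ℕ)

/-- the truncated coefficients -/
def bc (a : ℕ → ℝ) (N n : ℕ) : ℝ := if 1 ≤ n ∧ n ≤ N then a n else 0

lemma bc_sq_le (n : ℕ) : (bc a N n)^2 ≤ (if 1 ≤ n ∧ n ≤ N then a n else 0)^2 := le_of_eq rfl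

theorem integral_sq_sum
    (hm : ∀ n, Measurable (φ n))
    (hortho : ∀ m ∈ Finset.Icc 1 N, ∀ n ∈ Finset.Icc 1 N,
      (∫ x in Set.Icc (0:ℝ) 1, φ m x * φ n x) = if m = n then (1:ℝ) else 0)
    (I : Finset ℕ) :
    Integrable (fun x => (∑ n ∈ I, bc a N n * φ n x)^2)
        (volume.restrict (Set.Icc (0:ℝ) 1))
    ∧ (∫ x in Set.Icc (0:ℝ) 1, (∑ n ∈ I, bc a N n * φ n x)^2)
        = ∑ n ∈ I, (bc a N n)^2 := by
  classical
  set μ := volume.restrict (Set.Icc (0:ℝ) 1) with hμ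
  -- diagonal integrability
  have hdiag : ∀ n ∈ Finset.Icc 1 N, Integrable (fun x => φ n x * φ n x) μ := by
    intro n hn
    by_contra h
    have h1 := hortho n hn n hn
    rw [if_pos rfl] at h1
    rw [hμ] at h
    rw [MeasureTheory.integral_undef h] at h1
    norm_num at h1
  have hprod : ∀ p ∈ Finset.Icc 1 N, ∀ q ∈ Finset.Icc 1 N,
      Integrable (fun x => φ p x * φ q x) μ := by
    intro p hp q hq
    apply Integrable.mono'
      (g := fun x => (1/2) * (φ p x * φ p x + φ q x * φ q x))
      (((hdiag p hp).add (hdiag q hq)).const_mul (1/2))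
      (((hm p).mul (hm q)).aestronglyMeasurable)
    apply Filter.Eventually.of_forall
    intro x
    rw [Real.norm_eq_abs, abs_le, Pi.mul_apply]
    constructor <;> nlinarith [sq_nonneg (φ p x + φ q x), sq_nonneg (φ p x - φ q x)]
  set I' := I.filter (fun n => 1 ≤ n ∧ n ≤ N) with hI'
  have hmemI' : ∀ n ∈ I', n ∈ Finset.Icc 1 N := by
    intro n hn
    rw [hI', Finset.mem_filter] at hn
    rw [Finset.mem_Icc]
    exact ⟨hn.2.1, hn.2.2⟩
  have hps : ∀ x, ∑ n ∈ I, bc a N n * φ n x = ∑ n ∈ I', bc a N n * φ n x := by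
    intro x
    rw [hI']
    refine (Finset.sum_filter_of_ne ?_).symm
    intro n _ hne
    by_contra hc
    apply hne
    unfold bc
    rw [if_neg hc, zero_mul]
  have hexp : ∀ x, (∑ n ∈ I, bc a N n * φ n x)^2
      = ∑ p ∈ I', ∑ q ∈ I', (bc a N p * bc a N q) * (φ p x * φ q x) := by
    intro x
    rw [hps x, sq, Finset.sum_mul_sum]
    apply Finset.sum_congr rfl; intro p _
    apply Finset.sum_congr rfl; intro q _
    ring
  have hint : ∀ p ∈ I', ∀ q ∈ I',
      Integrable (fun x => (bc a N p * bc a N q) * (φ p x * φ q x)) μ := by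
    intro p hp q hq
    exact (hprod p (hmemI' p hp) q (hmemI' q hq)).const_mul _
  constructor
  · have : (fun x => (∑ n ∈ I, bc a N n * φ n x)^2)
        = fun x => ∑ p ∈ I', ∑ q ∈ I', (bc a N p * bc a N q) * (φ p x * φ q x) := by
      funext x; exact hexp x
    rw [hμ] at *
    rw [this]
    apply integrable_finset_sum
    intro p hp
    apply integrable_finset_sum
    intro q hq
    exact hint p hp q hq
  · have h1 : (∫ x in Set.Icc (0:ℝ) 1, (∑ n ∈ I, bc a N n * φ n x)^2)
        = ∑ p ∈ I', ∑ q ∈ I', (bc a N p * bc a N q) * (∫ x in Set.Icc (0:ℝ) 1, φ p x * φ q x) := by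
      rw [show (fun x => (∑ n ∈ I, bc a N n * φ n x)^2)
        = fun x => ∑ p ∈ I', ∑ q ∈ I', (bc a N p * bc a N q) * (φ p x * φ q x) from
        funext fun x => hexp x]
      rw [MeasureTheory.integral_finset_sum _ (fun p hp => integrable_finset_sum _ (fun q hq => hint p hp q hq))]
      apply Finset.sum_congr rfl; intro p hp
      rw [MeasureTheory.integral_finset_sum _ (fun q hq => hint p hp q hq)]
      apply Finset.sum_congr rfl; intro q hq
      rw [MeasureTheory.integral_const_mul]
    rw [h1]
    have h2 : ∀ p ∈ I', ∑ q ∈ I', (bc a N p * bc a N q) * (∫ x in Set.Icc (0:ℝ) 1, φ p x * φ q x)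
        = (bc a N p)^2 := by
      intro p hp
      have h3 : ∀ q ∈ I', (bc a N p * bc a N q) * (∫ x in Set.Icc (0:ℝ) 1, φ p x * φ q x)
          = if p = q then (bc a N p * bc a N q) else 0 := by
        intro q hq
        rw [hortho p (hmemI' p hp) q (hmemI' q hq)]
        by_cases h : p = q
        · rw [if_pos h, if_pos h, mul_one]
        · rw [if_neg h, if_neg h, mul_zero]
      rw [Finset.sum_congr rfl h3, Finset.sum_ite_eq I' p (fun q => bc a N p * bc a N q), if_pos hp]
      ring
    rw [Finset.sum_congr rfl h2]
    rw [hI']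
    apply Finset.sum_filter_of_ne
    intro n _ hne
    by_contra hc
    apply hne
    unfold bc
    rw [if_neg hc]
    norm_num

end Integration

/-- tiling of an interval by consecutive congruent blocks -/
lemma tile (h : ℕ → ℝ) (t w R : ℕ) :
    ∑ κ ∈ Finset.Icc 1 R, ∑ n ∈ Finset.Ioc (t + (κ-1)*w) (t + κ*w), h n
      = ∑ n ∈ Finset.Ioc t (t + R*w), h n := by
  induction R with
  | zero => simp
  | succ R ih =>
    rw [Finset.sum_Icc_succ_top (by omega), ih]
    rw [show R+1-1 = R by omega]
    refine Finset.sum_Ioc_consecutive h (by omega) ?_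
    have hRw : R*w ≤ (R+1)*w := Nat.mul_le_mul_right w (by omega)
    omega

/-- tiling by the blocks -/
lemma blocktile (h : ℕ → ℝ) (N R : ℕ) :
    ∑ k ∈ Finset.range R, ∑ n ∈ Finset.Ioc (sblk N k) (sblk N (k+1)), h n
      = ∑ n ∈ Finset.Ioc (sblk N 0) (sblk N R), h n := by
  induction R with
  | zero => simp
  | succ R ih =>
    rw [Finset.sum_range_succ, ih]
    exact Finset.sum_Ioc_consecutive h (sblk_mono N (by omega)) (sblk_mono N (by omega))

lemma Ioc_zero_Icc_one (N : ℕ) : Finset.Ioc 0 N = Finset.Icc 1 N := by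
  ext x; simp [Finset.mem_Ioc, Finset.mem_Icc]; omega

/-- the inner dyadic sums collapse -/
lemma inner_collapse (a : ℕ → ℝ) (N k : ℕ) :
    ∑ l ∈ Finset.range (k+1), ∑ κ ∈ Finset.Icc 1 (2^(k-l)),
      ∑ n ∈ Finset.Ioc (sblk N k + (κ-1)*2^l) (sblk N k + κ*2^l), (bc a N n)^2
    = (((k:ℕ)+1) : ℝ) * ∑ n ∈ Finset.Ioc (sblk N k) (sblk N (k+1)), (bc a N n)^2 := by
  have hl : ∀ l ∈ Finset.range (k+1),
      ∑ κ ∈ Finset.Icc 1 (2^(k-l)), ∑ n ∈ Finset.Ioc (sblk N k + (κ-1)*2^l) (sblk N k + κ*2^l),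
        (bc a N n)^2
      = ∑ n ∈ Finset.Ioc (sblk N k) (sblk N (k+1)), (bc a N n)^2 := by
    intro l hl
    rw [Finset.mem_range] at hl
    rw [tile (fun n => (bc a N n)^2) (sblk N k) (2^l) (2^(k-l))]
    rw [show 2^(k-l) * 2^l = 2^k by rw [← pow_add]; congr 1; omega]
    symm
    apply Finset.sum_subset
    · intro n hn
      rw [Finset.mem_Ioc] at *
      have := sblk_succ_le N k
      omega
    · intro n hn hns
      rw [Finset.mem_Ioc] at hn
      have hnot : ¬ (sblk N k < n ∧ n ≤ sblk N (k+1)) := by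
        intro hcon
        apply hns
        rw [Finset.mem_Ioc]
        exact hcon
      have h2 : (2:ℕ)^(k+1) = 2*2^k := by rw [pow_succ]; ring
      have h3 : (1:ℕ) ≤ 2^k := Nat.one_le_two_pow
      have hgt : N < n := by
        unfold sblk at *
        omega
      unfold bc
      rw [if_neg (by omega)]
      norm_num
  rw [Finset.sum_congr rfl hl, Finset.sum_const, Finset.card_range]
  push_cast
  rw [nsmul_eq_mul]
  push_cast
  ring

/-- per-n weight bound inside block k -/
lemma weight_bound (a : ℕ → ℝ) (N k n : ℕ) (hn : n ∈ Finset.Ioc (sblk N k) (sblk N (k+1))) :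
    ((k:ℝ)+1)^2 * (bc a N n)^2
      ≤ (4/(Real.log 2)^2) * (a n^2 * Real.log ((n:ℝ)+1)^2) := by
  rw [Finset.mem_Ioc] at hn
  have hkN : sblk N k < N := by
    have h1 : sblk N (k+1) ≤ N := by unfold sblk; omega
    omega
  have hsk : sblk N k = 2^k - 1 := by unfold sblk at *; omega
  have h3 : (1:ℕ) ≤ 2^k := Nat.one_le_two_pow
  have hn2k : 2^k ≤ n := by omega
  have hnN : n ≤ N := le_trans hn.2 (by unfold sblk; omega)
  have hn1 : 1 ≤ n := by omega
  have hbc : bc a N n = a n := by unfold bc; rw [if_pos ⟨hn1, hnN⟩]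
  have hlog2 : (0:ℝ) < Real.log 2 := Real.log_pos (by norm_num)
  have hlogn : Real.log 2 ≤ Real.log ((n:ℝ)+1) := by
    apply Real.log_le_log (by norm_num)
    have : (1:ℝ) ≤ (n:ℝ) := by exact_mod_cast hn1
    linarith
  have hlogk : (k:ℝ) * Real.log 2 ≤ Real.log ((n:ℝ)+1) := by
    have h4 : ((2:ℝ))^k ≤ (n:ℝ)+1 := by
      have : ((2^k : ℕ) : ℝ) ≤ (n:ℝ) := by exact_mod_cast hn2k
      push_cast at this ⊢
      linarith
    have h5 := Real.log_le_log (by positivity) h4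
    rwa [Real.log_pow] at h5
  have hkey : ((k:ℝ)+1) * Real.log 2 ≤ 2 * Real.log ((n:ℝ)+1) := by linarith
  have hlogn0 : (0:ℝ) ≤ Real.log ((n:ℝ)+1) := le_trans (le_of_lt hlog2) hlogn
  have hk0 : (0:ℝ) ≤ (k:ℝ)+1 := by positivity
  have hsq : ((k:ℝ)+1)^2 * (Real.log 2)^2 ≤ 4 * Real.log ((n:ℝ)+1)^2 := by
    have hmm := mul_le_mul hkey hkey (by positivity) (by linarith)
    nlinarith [hmm]
  rw [hbc]
  rw [div_mul_eq_mul_div, le_div_iff₀ (by positivity)]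
  nlinarith [sq_nonneg (a n)]


lemma Mexpr_nonneg (g : ℕ → ℝ) (N K : ℕ) : 0 ≤ Mexpr g N K := by
  unfold Mexpr; positivity

theorem intM (φ : ℕ → ℝ → ℝ) (a : ℕ → ℝ) (N K : ℕ)
    (hm : ∀ n, Measurable (φ n))
    (hortho : ∀ m ∈ Finset.Icc 1 N, ∀ n ∈ Finset.Icc 1 N,
      (∫ x in Set.Icc (0:ℝ) 1, φ m x * φ n x) = if m = n then (1:ℝ) else 0) :
    Integrable (fun x => Mexpr (fun n => bc a N n * φ n x) N K)
        (volume.restrict (Set.Icc (0:ℝ) 1))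
    ∧ (∫ x in Set.Icc (0:ℝ) 1, Mexpr (fun n => bc a N n * φ n x) N K)
      = 4 * ∑ k ∈ Finset.range (K+1), ((k:ℝ)+1)^2
            * (∑ n ∈ Finset.Ioc (sblk N k) (sblk N (k+1)), (bc a N n)^2)
        + 16 * ∑ k ∈ Finset.range (K+1), ((k:ℝ)+1) *
            ∑ l ∈ Finset.range (k+1), ∑ κ ∈ Finset.Icc 1 (2^(k-l)),
              ∑ n ∈ Finset.Ioc (sblk N k + (κ-1)*2^l) (sblk N k + κ*2^l), (bc a N n)^2 := by
  have e1 := fun (I : Finset ℕ) => integral_sq_sum φ a N hm hortho I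
  have intA : Integrable (fun x => ∑ k ∈ Finset.range (K+1), ((k:ℝ)+1)^2
      * (∑ n ∈ Finset.Ioc (sblk N k) (sblk N (k+1)), bc a N n * φ n x)^2)
      (volume.restrict (Set.Icc (0:ℝ) 1)) := by
    apply integrable_finset_sum
    intro k _
    exact ((e1 _).1).const_mul _
  have intB : Integrable (fun x => ∑ k ∈ Finset.range (K+1), ((k:ℝ)+1) *
      ∑ l ∈ Finset.range (k+1), ∑ κ ∈ Finset.Icc 1 (2^(k-l)),
        (∑ n ∈ Finset.Ioc (sblk N k + (κ-1)*2^l) (sblk N k + κ*2^l), bc a N n * φ n x)^2)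
      (volume.restrict (Set.Icc (0:ℝ) 1)) := by
    apply integrable_finset_sum
    intro k _
    apply Integrable.const_mul
    apply integrable_finset_sum
    intro l _
    apply integrable_finset_sum
    intro κ _
    exact (e1 _).1
  constructor
  · exact (intA.const_mul 4).add (intB.const_mul 16)
  · rw [show (fun x => Mexpr (fun n => bc a N n * φ n x) N K)
      = (fun x => (4:ℝ) * (∑ k ∈ Finset.range (K+1), ((k:ℝ)+1)^2
          * (∑ n ∈ Finset.Ioc (sblk N k) (sblk N (k+1)), bc a N n * φ n x)^2)
        + (16:ℝ) * (∑ k ∈ Finset.range (K+1), ((k:ℝ)+1) *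
          ∑ l ∈ Finset.range (k+1), ∑ κ ∈ Finset.Icc 1 (2^(k-l)),
            (∑ n ∈ Finset.Ioc (sblk N k + (κ-1)*2^l) (sblk N k + κ*2^l), bc a N n * φ n x)^2))
      from rfl]
    rw [MeasureTheory.integral_add (intA.const_mul 4) (intB.const_mul 16)]
    rw [MeasureTheory.integral_const_mul, MeasureTheory.integral_const_mul]
    congr 1
    · congr 1
      rw [MeasureTheory.integral_finset_sum _ (fun k _ => ((e1 _).1).const_mul _)]
      apply Finset.sum_congr rfl
      intro k _
      rw [MeasureTheory.integral_const_mul, (e1 _).2]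
    · congr 1
      rw [MeasureTheory.integral_finset_sum _ (fun k _ => by
        apply Integrable.const_mul
        apply integrable_finset_sum
        intro l _
        exact integrable_finset_sum _ (fun κ _ => (e1 _).1))]
      apply Finset.sum_congr rfl
      intro k _
      rw [MeasureTheory.integral_const_mul]
      congr 1
      rw [MeasureTheory.integral_finset_sum _ (fun l _ =>
        integrable_finset_sum _ (fun κ _ => (e1 _).1))]
      apply Finset.sum_congr rfl
      intro l _
      rw [MeasureTheory.integral_finset_sum _ (fun κ _ => (e1 _).1)]
      apply Finset.sum_congr rfl
      intro κ _
      exact (e1 _).2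


end SqVarRM

open SqVarRM

theorem sq_var_rademacher_menshov :
    ∃ C : ℝ, 0 < C ∧ ∀ (N : ℕ), 1 ≤ N → ∀ (φ : ℕ → ℝ → ℝ) (a : ℕ → ℝ),
      (∀ n, Measurable (φ n)) →
      (∀ m ∈ Finset.Icc 1 N, ∀ n ∈ Finset.Icc 1 N,
        (∫ x in Set.Icc (0:ℝ) 1, φ m x * φ n x) = if m = n then (1:ℝ) else 0) →
      Real.sqrt (∫ x in Set.Icc (0:ℝ) 1, (sqVar N fun n => a n * φ n x) ^ 2)
        ≤ C * Real.sqrt (∑ n ∈ Finset.Icc 1 N,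
            a n ^ 2 * Real.log ((n : ℝ) + 1) ^ 2) := by
  have hlog2 : (0:ℝ) < Real.log 2 := Real.log_pos (by norm_num)
  refine ⟨9 / Real.log 2, by positivity, ?_⟩
  intro N hN φ a hm hortho
  have hNK : N ≤ 2^(N+1) - 1 := by
    have h1 : N < 2^N := Nat.lt_two_pow_self
    have h2 : (2:ℕ)^N ≤ 2^(N+1) := Nat.pow_le_pow_right (by norm_num) (by omega)
    omega
  -- pointwise bound
  have hpt : ∀ x, (sqVar N fun n => a n * φ n x)^2
      ≤ Mexpr (fun n => bc a N n * φ n x) N N := by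
    intro x
    have hMnn := Mexpr_nonneg (fun n => bc a N n * φ n x) N N
    have hub : sqVar N (fun n => a n * φ n x)
        ≤ Real.sqrt (Mexpr (fun n => bc a N n * φ n x) N N) := by
      apply Real.sSup_le _ (Real.sqrt_nonneg _)
      rintro r ⟨m, c, hc, hc0, hcm, rfl⟩
      apply Real.sqrt_le_sqrt
      have hcongr : ∀ j ∈ Finset.range m,
          (∑ n ∈ Finset.Ioc (c j) (c (j+1)), a n * φ n x)^2
          = (∑ n ∈ Finset.Ioc (c j) (c (j+1)), bc a N n * φ n x)^2 := by
        intro j hj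
        rw [Finset.mem_range] at hj
        congr 1
        apply Finset.sum_congr rfl
        intro n hn
        rw [Finset.mem_Ioc] at hn
        have hnN : n ≤ N := by
          calc n ≤ c (j+1) := hn.2
          _ ≤ c m := hc.monotone (by omega)
          _ = N := hcm
        have hn1 : 1 ≤ n := by omega
        unfold bc
        rw [if_pos ⟨hn1, hnN⟩]
      rw [Finset.sum_congr rfl hcongr]
      exact master (fun n => bc a N n * φ n x) N N m c hNK hc hc0 hcm
    have hnn : 0 ≤ sqVar N (fun n => a n * φ n x) := by
      apply Real.sSup_nonneg
      rintro r ⟨m, c, hc, hc0, hcm, rfl⟩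
      exact Real.sqrt_nonneg _
    calc (sqVar N fun n => a n * φ n x)^2
        ≤ (Real.sqrt (Mexpr (fun n => bc a N n * φ n x) N N))^2 :=
          pow_le_pow_left₀ hnn hub 2
      _ = _ := Real.sq_sqrt hMnn
  -- integral comparison
  obtain ⟨hintM, hvalM⟩ := intM φ a N N hm hortho
  have hmono : (∫ x in Set.Icc (0:ℝ) 1, (sqVar N fun n => a n * φ n x)^2)
      ≤ ∫ x in Set.Icc (0:ℝ) 1, Mexpr (fun n => bc a N n * φ n x) N N :=
    integral_mono_of_nonneg (Filter.Eventually.of_forall fun x => sq_nonneg _)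
      hintM (Filter.Eventually.of_forall hpt)
  set Sf := ∑ n ∈ Finset.Icc 1 N, a n^2 * Real.log ((n:ℝ)+1)^2 with hS
  have hSnn : 0 ≤ Sf := by
    apply Finset.sum_nonneg; intro n _; positivity
  have hWsum : ∑ k ∈ Finset.range (N+1), ((k:ℝ)+1)^2
        * (∑ n ∈ Finset.Ioc (sblk N k) (sblk N (k+1)), (bc a N n)^2)
      ≤ (4/(Real.log 2)^2) * Sf := by
    calc ∑ k ∈ Finset.range (N+1), ((k:ℝ)+1)^2
          * (∑ n ∈ Finset.Ioc (sblk N k) (sblk N (k+1)), (bc a N n)^2)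
        = ∑ k ∈ Finset.range (N+1), ∑ n ∈ Finset.Ioc (sblk N k) (sblk N (k+1)),
            ((k:ℝ)+1)^2 * (bc a N n)^2 := by
          apply Finset.sum_congr rfl; intro k _; rw [Finset.mul_sum]
      _ ≤ ∑ k ∈ Finset.range (N+1), ∑ n ∈ Finset.Ioc (sblk N k) (sblk N (k+1)),
            (4/(Real.log 2)^2) * (a n^2 * Real.log ((n:ℝ)+1)^2) := by
          apply Finset.sum_le_sum; intro k _
          apply Finset.sum_le_sum; intro n hn
          exact weight_bound a N k n hn
      _ = (4/(Real.log 2)^2) * ∑ k ∈ Finset.range (N+1),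
            ∑ n ∈ Finset.Ioc (sblk N k) (sblk N (k+1)),
            (a n^2 * Real.log ((n:ℝ)+1)^2) := by
          rw [Finset.mul_sum]
          apply Finset.sum_congr rfl; intro k _
          rw [Finset.mul_sum]
      _ = (4/(Real.log 2)^2) * Sf := by
          rw [blocktile (fun n => a n^2 * Real.log ((n:ℝ)+1)^2) N (N+1)]
          rw [sblk_zero, sblk_top N N hNK, Ioc_zero_Icc_one]
  have hvalbound : (∫ x in Set.Icc (0:ℝ) 1, Mexpr (fun n => bc a N n * φ n x) N N)
      ≤ (80/(Real.log 2)^2) * Sf := by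
    rw [hvalM]
    have hsecond : ∑ k ∈ Finset.range (N+1), ((k:ℝ)+1) *
          ∑ l ∈ Finset.range (k+1), ∑ κ ∈ Finset.Icc 1 (2^(k-l)),
            ∑ n ∈ Finset.Ioc (sblk N k + (κ-1)*2^l) (sblk N k + κ*2^l), (bc a N n)^2
        = ∑ k ∈ Finset.range (N+1), ((k:ℝ)+1)^2
            * (∑ n ∈ Finset.Ioc (sblk N k) (sblk N (k+1)), (bc a N n)^2) := by
      apply Finset.sum_congr rfl; intro k _
      rw [inner_collapse a N k]
      push_cast
      ring
    rw [hsecond]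
    have h80 : (80:ℝ)/(Real.log 2)^2 * Sf = 20 * ((4:ℝ)/(Real.log 2)^2 * Sf) := by ring
    linarith [hWsum]
  -- final calculation
  calc Real.sqrt (∫ x in Set.Icc (0:ℝ) 1, (sqVar N fun n => a n * φ n x)^2)
      ≤ Real.sqrt ((9/Real.log 2)^2 * Sf) := by
        apply Real.sqrt_le_sqrt
        refine (hmono.trans hvalbound).trans ?_
        have h81 : (9/Real.log 2)^2 = 81/(Real.log 2)^2 := by
          rw [div_pow]; norm_num
        rw [h81]
        apply mul_le_mul_of_nonneg_right _ hSnn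
        rw [div_le_div_iff₀ (by positivity) (by positivity)]
        nlinarith [sq_nonneg (Real.log 2)]
    _ = (9/Real.log 2) * Real.sqrt Sf := by
        rw [Real.sqrt_mul (by positivity), Real.sqrt_sq (by positivity)]
end

section
/- There exists an absolute constant C > 0 with the following property. Let N ≥ 2, let {φ_n}_{n=1}^N be a real-valued orthonormal system on 𝕋 = [0,1], and let Δ : {1, …, N} → [1, ∞) be nondecreasing such that for every m ≤ N and all real coefficients b_1, …, b_m one has ‖ sup_{1 ≤ K ≤ m} |∑_{n=1}^K b_n φ_n| ‖_{L²} ≤ Δ(m) (∑_{n=1}^m b_n²)^{1/2}. Then for all real coefficients a_1, …, a_N, the function f = ∑_{n=1}^N a_n φ_n satisfies ‖S[f]‖_{L²(V²)} ≤ C Δ(N) (ln N)^{1/2} (∑_{n=1}^N a_n²)^{1/2}. -/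
open MeasureTheory

namespace SqVarAux

def SVS (N : ℕ) (g : ℕ → ℝ) : Set ℝ :=
  { r : ℝ | ∃ (m : ℕ) (c : ℕ → ℕ), StrictMono c ∧ c 0 = 0 ∧ c m = N ∧
    r = Real.sqrt (∑ j ∈ Finset.range m,
      (∑ n ∈ Finset.Ioc (c j) (c (j + 1)), g n) ^ 2) }

lemma sqVar_eq (N : ℕ) (g : ℕ → ℝ) : sqVar N g = sSup (SVS N g) := rfl

lemma sum_Ioc_telescope (g : ℕ → ℝ) {c : ℕ → ℕ} (hc : Monotone c) (m : ℕ) :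
    ∑ j ∈ Finset.range m, ∑ n ∈ Finset.Ioc (c j) (c (j + 1)), g n
      = ∑ n ∈ Finset.Ioc (c 0) (c m), g n := by
  induction m with
  | zero => simp
  | succ m ih =>
      rw [Finset.sum_range_succ, ih,
        Finset.sum_Ioc_consecutive _ (hc (Nat.zero_le m)) (hc (Nat.le_succ m))]

lemma SVS_le {N : ℕ} {g : ℕ → ℝ} {r : ℝ} (hr : r ∈ SVS N g) :
    r ≤ ∑ n ∈ Finset.Ioc 0 N, |g n| := by
  obtain ⟨m, c, hc, h0, hm, rfl⟩ := hr
  have h1 : ∑ j ∈ Finset.range m, (∑ n ∈ Finset.Ioc (c j) (c (j + 1)), g n) ^ 2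
      ≤ (∑ j ∈ Finset.range m, |∑ n ∈ Finset.Ioc (c j) (c (j + 1)), g n|) ^ 2 := by
    have := Finset.sum_sq_le_sq_sum_of_nonneg
      (f := fun j => |∑ n ∈ Finset.Ioc (c j) (c (j + 1)), g n|) (s := Finset.range m)
      (fun i _ => abs_nonneg _)
    simpa [sq_abs] using this
  have h2 : Real.sqrt (∑ j ∈ Finset.range m, (∑ n ∈ Finset.Ioc (c j) (c (j + 1)), g n) ^ 2)
      ≤ ∑ j ∈ Finset.range m, |∑ n ∈ Finset.Ioc (c j) (c (j + 1)), g n| := by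
    refine (Real.sqrt_le_sqrt h1).trans ?_
    rw [Real.sqrt_sq (Finset.sum_nonneg fun i _ => abs_nonneg _)]
  refine h2.trans ?_
  calc ∑ j ∈ Finset.range m, |∑ n ∈ Finset.Ioc (c j) (c (j + 1)), g n|
      ≤ ∑ j ∈ Finset.range m, ∑ n ∈ Finset.Ioc (c j) (c (j + 1)), |g n| :=
        Finset.sum_le_sum fun j _ => Finset.abs_sum_le_sum_abs _ _
    _ = ∑ n ∈ Finset.Ioc (c 0) (c m), |g n| :=
        sum_Ioc_telescope (fun n => |g n|) hc.monotone m
    _ = ∑ n ∈ Finset.Ioc 0 N, |g n| := by rw [h0, hm]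

lemma bddAbove_SVS (N : ℕ) (g : ℕ → ℝ) : BddAbove (SVS N g) :=
  ⟨∑ n ∈ Finset.Ioc 0 N, |g n|, fun _ hr => SVS_le hr⟩

lemma sqVar_nonneg (N : ℕ) (g : ℕ → ℝ) : 0 ≤ sqVar N g := by
  rw [sqVar_eq]
  refine Real.sSup_nonneg fun r hr => ?_
  obtain ⟨m, c, _, _, _, rfl⟩ := hr; exact Real.sqrt_nonneg _

lemma block_le_sqVar {N : ℕ} {g : ℕ → ℝ} {m : ℕ} {c : ℕ → ℕ}
    (hc : StrictMono c) (h0 : c 0 = 0) (hm : c m = N) {j : ℕ} (hj : j < m) :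
    |∑ n ∈ Finset.Ioc (c j) (c (j + 1)), g n| ≤ sqVar N g := by
  have hr : Real.sqrt (∑ j ∈ Finset.range m,
      (∑ n ∈ Finset.Ioc (c j) (c (j + 1)), g n) ^ 2) ∈ SVS N g :=
    ⟨m, c, hc, h0, hm, rfl⟩
  have h1 : |∑ n ∈ Finset.Ioc (c j) (c (j + 1)), g n| ≤
      Real.sqrt (∑ j ∈ Finset.range m, (∑ n ∈ Finset.Ioc (c j) (c (j + 1)), g n) ^ 2) := by
    rw [← Real.sqrt_sq_eq_abs]
    refine Real.sqrt_le_sqrt ?_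
    exact Finset.single_le_sum (f := fun j => (∑ n ∈ Finset.Ioc (c j) (c (j + 1)), g n) ^ 2)
      (fun i _ => sq_nonneg _) (Finset.mem_range.2 hj)
  exact h1.trans (le_csSup (bddAbove_SVS N g) hr)

lemma abs_sum_Ioc_le_sqVar {N : ℕ} (g : ℕ → ℝ) {u v : ℕ}
    (huv : u < v) (hvN : v ≤ N) :
    |∑ n ∈ Finset.Ioc u v, g n| ≤ sqVar N g := by
  rcases Nat.eq_zero_or_pos u with hu | hu
  · subst hu
    rcases eq_or_lt_of_le hvN with hv | hv
    · subst hv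
      set c : ℕ → ℕ := fun j => match j with | 0 => 0 | j+1 => v + j with hcdef
      have hc : StrictMono c := by
        apply strictMono_nat_of_lt_succ
        intro j
        rcases j with _ | j
        · show 0 < v + 0; omega
        · show v + j < v + (j + 1); omega
      have := block_le_sqVar (g := g) (m := 1) hc rfl (show c 1 = v from rfl) (j := 0) (by norm_num)
      exact this
    · set c : ℕ → ℕ := fun j => match j with | 0 => 0 | 1 => v | j+2 => N + j with hcdef
      have hc : StrictMono c := by
        apply strictMono_nat_of_lt_succ
        intro j
        rcases j with _ | _ | j
        · show 0 < v; omega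
        · show v < N + 0; omega
        · show N + j < N + (j + 1); omega
      have := block_le_sqVar (g := g) (m := 2) hc rfl (show c 2 = N + 0 from rfl) (j := 0) (by norm_num)
      simpa using this
  · rcases eq_or_lt_of_le hvN with hv | hv
    · subst hv
      set c : ℕ → ℕ := fun j => match j with | 0 => 0 | 1 => u | j+2 => v + j with hcdef
      have hc : StrictMono c := by
        apply strictMono_nat_of_lt_succ
        intro j
        rcases j with _ | _ | j
        · show 0 < u; omega
        · show u < v + 0; omega
        · show v + j < v + (j + 1); omega
      have := block_le_sqVar (g := g) (m := 2) hc rfl (show c 2 = v + 0 from rfl) (j := 1) (by norm_num)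
      exact this
    · set c : ℕ → ℕ := fun j => match j with | 0 => 0 | 1 => u | 2 => v | j+3 => N + j
        with hcdef
      have hc : StrictMono c := by
        apply strictMono_nat_of_lt_succ
        intro j
        rcases j with _ | _ | _ | j
        · show 0 < u; omega
        · show u < v; omega
        · show v < N + 0; omega
        · show N + j < N + (j + 1); omega
      have := block_le_sqVar (g := g) (m := 3) hc rfl (show c 3 = N + 0 from rfl) (j := 1) (by norm_num)
      simpa using this

end SqVarAux

namespace SqVarAux

lemma biSup_eq_sup' {F : Finset ℕ} (hF : F.Nonempty) (h : ℕ → ℝ) (h0 : ∀ K ∈ F, 0 ≤ h K) :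
    (⨆ K ∈ F, h K) = F.sup' hF h := by
  have hsup0 : 0 ≤ F.sup' hF h := by
    obtain ⟨k, hk⟩ := hF
    exact (h0 k hk).trans (Finset.le_sup' h hk)
  have hzero : ∀ K : ℕ, K ∉ F → (⨆ _ : K ∈ F, h K) = 0 := by
    intro K hK
    haveI : IsEmpty (K ∈ F) := ⟨hK⟩
    rw [iSup, Set.range_eq_empty _, Real.sSup_empty]
  apply le_antisymm
  · refine ciSup_le fun K => ?_
    show (⨆ _ : K ∈ F, h K) ≤ _
    by_cases hK : K ∈ F
    · rw [ciSup_pos (f := fun _ => h K) hK]; exact Finset.le_sup' h hK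
    · rw [hzero K hK]; exact hsup0
  · have hb : BddAbove (Set.range fun K => ⨆ _ : K ∈ F, h K) := by
      refine ⟨F.sup' hF h, ?_⟩
      rintro r ⟨K, rfl⟩
      show (⨆ _ : K ∈ F, h K) ≤ _
      by_cases hK : K ∈ F
      · rw [ciSup_pos (f := fun _ => h K) hK]; exact Finset.le_sup' h hK
      · rw [hzero K hK]; exact hsup0
    refine Finset.sup'_le _ _ fun K hK => ?_
    calc h K = ⨆ _ : K ∈ F, h K := (ciSup_pos (f := fun _ => h K) hK).symm
      _ ≤ _ := le_ciSup hb K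

lemma measurable_sup' {α : Type*} [MeasurableSpace α] {F : Finset ℕ} (hF : F.Nonempty)
    (f : ℕ → α → ℝ) (hf : ∀ K, Measurable (f K)) :
    Measurable fun x => F.sup' hF fun K => f K x := by
  induction hF using Finset.Nonempty.cons_induction with
  | singleton a => convert hf a using 2; simp
  | cons a s ha hs ih =>
      have : (fun x => (Finset.cons a s ha).sup' (Finset.cons_nonempty ha) fun K => f K x)
          = fun x => f a x ⊔ s.sup' hs fun K => f K x := by
        funext x; rw [Finset.sup'_cons hs]
      rw [this]
      exact (hf a).max ih

lemma div_pred_eq_iff {P n i : ℕ} (hP : 0 < P) (hn : 1 ≤ n) :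
    (n - 1) / P = i ↔ i * P < n ∧ n ≤ (i + 1) * P := by
  have hkey : (i + 1) * P = i * P + P := by ring
  constructor
  · rintro rfl
    have h1 : ((n - 1) / P) * P ≤ n - 1 := Nat.div_mul_le_self _ _
    have h2 : n - 1 < ((n - 1) / P + 1) * P := by
      have h3 := Nat.div_add_mod (n - 1) P
      have h4 : (n - 1) % P < P := Nat.mod_lt _ hP
      calc n - 1 = P * ((n - 1) / P) + (n - 1) % P := h3.symm
        _ < P * ((n - 1) / P) + P := by omega
        _ = ((n - 1) / P + 1) * P := by ring
    omega
  · rintro ⟨h1, h2⟩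
    have := Nat.div_add_mod (n - 1) P
    have h4 : (n - 1) % P < P := Nat.mod_lt _ hP
    -- show (n-1)/P = i  via antisymmetry
    have hle : i ≤ (n - 1) / P := (Nat.le_div_iff_mul_le hP).2 (by omega)
    have hlt : (n - 1) / P < i + 1 := by
      rw [Nat.div_lt_iff_lt_mul hP]
      omega
    omega

lemma card_le_two_of_no_three {Q : Finset ℕ}
    (H : ∀ x ∈ Q, ∀ y ∈ Q, ∀ z ∈ Q, x < y → y < z → False) : Q.card ≤ 2 := by
  by_contra h
  push_neg at h
  obtain ⟨a, b, c, ha, hb, hc, hab, hac, hbc⟩ := Finset.two_lt_card_iff.1 h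
  rcases lt_trichotomy a b with h1 | h1 | h1
  · rcases lt_trichotomy b c with h2 | h2 | h2
    · exact H a ha b hb c hc h1 h2
    · exact hbc h2
    · rcases lt_trichotomy a c with h3 | h3 | h3
      · exact H a ha c hc b hb h3 h2
      · exact hac h3
      · exact H c hc a ha b hb h3 h1
  · exact hab h1
  · rcases lt_trichotomy b c with h2 | h2 | h2
    · rcases lt_trichotomy a c with h3 | h3 | h3
      · exact H b hb a ha c hc h1 h3
      · exact hac h3
      · exact H b hb c hc a ha h2 h3
    · exact hbc h2
    · exact H c hc b hb a ha h2 h1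

end SqVarAux

namespace SqVarAux

lemma core {N L m : ℕ} (hN : 1 ≤ N) (hNL : N ≤ 2 ^ L) {g : ℕ → ℝ} {M : ℕ → ℕ → ℝ}
    (hM0 : ∀ s i, 0 ≤ M s i)
    (hM : ∀ s i u v, i * 2 ^ s ≤ u → u < v → v ≤ (i + 1) * 2 ^ s → v ≤ N →
      |∑ n ∈ Finset.Ioc u v, g n| ≤ 2 * M s i)
    {c : ℕ → ℕ} (hc : StrictMono c) (h0 : c 0 = 0) (hm : c m = N) :
    ∑ j ∈ Finset.range m, (∑ n ∈ Finset.Ioc (c j) (c (j + 1)), g n) ^ 2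
      ≤ 24 * ∑ s ∈ Finset.range (L + 1), ∑ i ∈ Finset.range (2 ^ L), M s i ^ 2 := by
  classical
  set lvl : ℕ → ℕ := fun j => Nat.log 2 (c (j + 1) - c j) with hlvl_def
  set lo : ℕ → ℕ := fun j => c j / 2 ^ lvl j with hlo_def
  set hi : ℕ → ℕ := fun j => (c (j + 1) - 1) / 2 ^ lvl j with hhi_def
  have hcmono := hc.monotone
  have hlen : ∀ j, 1 ≤ c (j + 1) - c j := fun j => by
    have := hc (show j < j + 1 from lt_add_one j); omega
  have hcN : ∀ j, j < m → c (j + 1) ≤ N := by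
    intro j hj
    have h := hcmono (show j + 1 ≤ m by omega)
    rw [hm] at h
    exact h
  have hPpos : ∀ s : ℕ, (0:ℕ) < 2 ^ s := fun s => Nat.pow_pos (by norm_num)
  have hPle : ∀ j, 2 ^ lvl j ≤ c (j + 1) - c j := fun j =>
    Nat.pow_log_le_self 2 (by have := hlen j; omega)
  have hlen2 : ∀ j, c (j + 1) - c j < 2 * 2 ^ lvl j := fun j => by
    have h := Nat.lt_pow_succ_log_self (b := 2) one_lt_two (c (j + 1) - c j)
    have h2 : (2:ℕ) ^ (Nat.log 2 (c (j + 1) - c j) + 1) = 2 * 2 ^ lvl j := by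
      rw [hlvl_def, pow_succ]; ring
    omega
  have hlvlL : ∀ j, j < m → lvl j ≤ L := fun j hj => by
    have h1 : c (j + 1) - c j ≤ 2 ^ L := le_trans (by omega) (le_trans (hcN j hj) hNL)
    have h2 := Nat.log_mono_right (b := 2) h1
    rw [Nat.log_pow one_lt_two] at h2
    exact h2
  have hhiL : ∀ j, j < m → hi j < 2 ^ L := fun j hj => by
    have h1 : hi j ≤ c (j + 1) - 1 := Nat.div_le_self _ _
    have h2 := hcN j hj
    have h3 := hlen j
    omega
  -- Step A : each block squared is controlled by at most 3 dyadic maximal terms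
  have stepA : ∀ j, j < m →
      (∑ n ∈ Finset.Ioc (c j) (c (j + 1)), g n) ^ 2
        ≤ 12 * ∑ i ∈ Finset.Icc (lo j) (hi j), M (lvl j) i ^ 2 := by
    intro j hj
    have hQpos : (0:ℕ) < 2 ^ lvl j := hPpos _
    have hfib : ∑ i ∈ Finset.Icc (lo j) (hi j),
        ∑ n ∈ (Finset.Ioc (c j) (c (j + 1))).filter (fun n => (n - 1) / 2 ^ lvl j = i), g n
        = ∑ n ∈ Finset.Ioc (c j) (c (j + 1)), g n := by
      refine Finset.sum_fiberwise_of_maps_to ?_ g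
      intro n hn
      rw [Finset.mem_Ioc] at hn
      rw [Finset.mem_Icc]
      exact ⟨Nat.div_le_div_right (by omega), Nat.div_le_div_right (by omega)⟩
    have hcard : (Finset.Icc (lo j) (hi j)).card ≤ 3 := by
      have h3 : c (j + 1) - 1 ≤ c j + 2 * 2 ^ lvl j := by
        have := hlen2 j; omega
      have h4 : hi j ≤ lo j + 2 := by
        calc hi j ≤ (c j + 2 * 2 ^ lvl j) / 2 ^ lvl j := Nat.div_le_div_right h3
          _ = lo j + 2 := by rw [Nat.add_mul_div_right _ _ hQpos]
      rw [Nat.card_Icc]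
      omega
    have hfilter : ∀ i, (Finset.Ioc (c j) (c (j + 1))).filter
          (fun n => (n - 1) / 2 ^ lvl j = i)
        = Finset.Ioc (max (c j) (i * 2 ^ lvl j))
            (min (c (j + 1)) ((i + 1) * 2 ^ lvl j)) := by
      intro i
      ext n
      simp only [Finset.mem_filter, Finset.mem_Ioc, max_lt_iff, le_min_iff]
      constructor
      · rintro ⟨⟨h1, h2⟩, h3⟩
        rw [div_pred_eq_iff hQpos (by omega)] at h3
        exact ⟨⟨h1, h3.1⟩, h2, h3.2⟩
      · rintro ⟨⟨h1, h4⟩, h2, h5⟩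
        refine ⟨⟨h1, h2⟩, ?_⟩
        rw [div_pred_eq_iff hQpos (by omega)]
        exact ⟨h4, h5⟩
    have hT : ∀ i, (∑ n ∈ (Finset.Ioc (c j) (c (j + 1))).filter
          (fun n => (n - 1) / 2 ^ lvl j = i), g n) ^ 2
        ≤ 4 * M (lvl j) i ^ 2 := by
      intro i
      rw [hfilter i]
      by_cases huv : max (c j) (i * 2 ^ lvl j) < min (c (j + 1)) ((i + 1) * 2 ^ lvl j)
      · have habs := hM (lvl j) i _ _ (le_max_right _ _) huv (min_le_right _ _)
          (le_trans (min_le_left _ _) (hcN j hj))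
        calc (∑ n ∈ Finset.Ioc _ _, g n) ^ 2
            = |∑ n ∈ Finset.Ioc _ _, g n| ^ 2 := (sq_abs _).symm
          _ ≤ (2 * M (lvl j) i) ^ 2 := pow_le_pow_left₀ (abs_nonneg _) habs 2
          _ = 4 * M (lvl j) i ^ 2 := by ring
      · rw [Finset.Ioc_eq_empty huv]
        simpa using mul_nonneg (by norm_num : (0:ℝ) ≤ 4) (sq_nonneg (M (lvl j) i))
    calc (∑ n ∈ Finset.Ioc (c j) (c (j + 1)), g n) ^ 2
        = (∑ i ∈ Finset.Icc (lo j) (hi j),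
            ∑ n ∈ (Finset.Ioc (c j) (c (j + 1))).filter
              (fun n => (n - 1) / 2 ^ lvl j = i), g n) ^ 2 := by rw [hfib]
      _ ≤ ((Finset.Icc (lo j) (hi j)).card : ℝ) *
            ∑ i ∈ Finset.Icc (lo j) (hi j),
              (∑ n ∈ (Finset.Ioc (c j) (c (j + 1))).filter
                (fun n => (n - 1) / 2 ^ lvl j = i), g n) ^ 2 := by
            exact sq_sum_le_card_mul_sum_sq
      _ ≤ 3 * ∑ i ∈ Finset.Icc (lo j) (hi j),
              (∑ n ∈ (Finset.Ioc (c j) (c (j + 1))).filter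
                (fun n => (n - 1) / 2 ^ lvl j = i), g n) ^ 2 := by
            refine mul_le_mul_of_nonneg_right ?_
              (Finset.sum_nonneg fun i _ => sq_nonneg _)
            exact_mod_cast hcard
      _ ≤ 3 * ∑ i ∈ Finset.Icc (lo j) (hi j), 4 * M (lvl j) i ^ 2 := by
            refine mul_le_mul_of_nonneg_left
              (Finset.sum_le_sum fun i _ => hT i) (by norm_num)
      _ = 12 * ∑ i ∈ Finset.Icc (lo j) (hi j), M (lvl j) i ^ 2 := by
            rw [Finset.mul_sum, Finset.mul_sum]
            refine Finset.sum_congr rfl fun i _ => by ring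
  -- Step B : double counting
  have hmult : ∀ s i, ((Finset.range m).filter
      (fun j => lvl j = s ∧ i ∈ Finset.Icc (lo j) (hi j))).card ≤ 2 := by
    intro s i
    apply card_le_two_of_no_three
    intro x hx y hy z hz hxy hyz
    simp only [Finset.mem_filter, Finset.mem_range, Finset.mem_Icc] at hx hy hz
    have hxm : x < m := hx.1
    have hlvlx : lvl x = s := hx.2.1
    have hx2 : i ≤ hi x := hx.2.2.2
    have hym : y < m := hy.1
    have hlvly : lvl y = s := hy.2.1
    have hzm : z < m := hz.1
    have hlvlz : lvl z = s := hz.2.1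
    have hz1 : lo z ≤ i := hz.2.2.1
    have hQpos : (0:ℕ) < 2 ^ s := hPpos s
    -- B for x : i * 2^s ≤ c (x+1) - 1
    have hBx : i * 2 ^ s ≤ c (x + 1) - 1 := by
      have hx2' : i ≤ (c (x + 1) - 1) / 2 ^ s := by
        have := hx2
        simp only [hhi_def] at this
        rwa [hlvlx] at this
      exact (Nat.le_div_iff_mul_le hQpos).1 hx2'
    -- C for y : c y + 2^s ≤ c (y+1)
    have hCy : c y + 2 ^ s ≤ c (y + 1) := by
      have h1 := hPle y
      rw [hlvly] at h1
      have := hlen y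
      omega
    -- A for z : c z < (i+1) * 2^s
    have hAz : c z < (i + 1) * 2 ^ s := by
      have h1 : c z / 2 ^ s ≤ i := by
        have := hz1
        simp only [hlo_def] at this
        rwa [hlvlz] at this
      calc c z = 2 ^ s * (c z / 2 ^ s) + c z % 2 ^ s := (Nat.div_add_mod _ _).symm
        _ < 2 ^ s * (c z / 2 ^ s) + 2 ^ s := by
            have := Nat.mod_lt (c z) hQpos; omega
        _ ≤ 2 ^ s * i + 2 ^ s := by
            have := Nat.mul_le_mul_left (2 ^ s) h1; omega
        _ = (i + 1) * 2 ^ s := by ring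
    have h5 : c (x + 1) ≤ c y := hcmono (by omega)
    have h6 : c (y + 1) ≤ c z := hcmono (by omega)
    have hkey : (i + 1) * 2 ^ s = i * 2 ^ s + 2 ^ s := by ring
    have hlenx := hlen x
    omega
  set F : ℕ → ℕ → ℕ → ℝ := fun j s i =>
    if lvl j = s ∧ i ∈ Finset.Icc (lo j) (hi j) then M s i ^ 2 else 0 with hF_def
  have hrw : ∀ j ∈ Finset.range m,
      ∑ i ∈ Finset.Icc (lo j) (hi j), M (lvl j) i ^ 2
        = ∑ s ∈ Finset.range (L + 1), ∑ i ∈ Finset.range (2 ^ L), F j s i := by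
    intro j hj
    rw [Finset.mem_range] at hj
    have h1 : ∀ i, ∑ s ∈ Finset.range (L + 1), F j s i
        = if i ∈ Finset.Icc (lo j) (hi j) then M (lvl j) i ^ 2 else 0 := by
      intro i
      by_cases hic : i ∈ Finset.Icc (lo j) (hi j)
      · simp only [hF_def, hic, and_true]
        rw [Finset.sum_ite_eq]
        simp [Nat.lt_succ_iff.mpr (hlvlL j hj)]
      · rw [if_neg hic]
        refine Finset.sum_eq_zero fun s' _ => ?_
        simp only [hF_def]
        rw [if_neg]
        tauto
    have h2 : ∑ s ∈ Finset.range (L + 1), ∑ i ∈ Finset.range (2 ^ L), F j s i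
        = ∑ i ∈ Finset.range (2 ^ L), ∑ s ∈ Finset.range (L + 1), F j s i :=
      Finset.sum_comm
    rw [h2, Finset.sum_congr rfl fun i _ => h1 i, ← Finset.sum_filter,
      Finset.filter_mem_eq_inter, Finset.inter_eq_right.2]
    intro i hi'
    rw [Finset.mem_Icc] at hi'
    rw [Finset.mem_range]
    have := hhiL j hj
    omega
  have stepB : ∑ j ∈ Finset.range m, ∑ i ∈ Finset.Icc (lo j) (hi j), M (lvl j) i ^ 2
      ≤ 2 * ∑ s ∈ Finset.range (L + 1), ∑ i ∈ Finset.range (2 ^ L), M s i ^ 2 := by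
    rw [Finset.sum_congr rfl hrw]
    have e1 : ∑ j ∈ Finset.range m, ∑ s ∈ Finset.range (L + 1),
          ∑ i ∈ Finset.range (2 ^ L), F j s i
        = ∑ s ∈ Finset.range (L + 1), ∑ i ∈ Finset.range (2 ^ L),
          ∑ j ∈ Finset.range m, F j s i := by
      rw [Finset.sum_comm (s := Finset.range m) (t := Finset.range (L + 1))]
      exact Finset.sum_congr rfl fun s _ => Finset.sum_comm
    rw [e1, Finset.mul_sum]
    refine Finset.sum_le_sum fun s _ => ?_
    rw [Finset.mul_sum]
    refine Finset.sum_le_sum fun i _ => ?_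
    have e2 : ∑ j ∈ Finset.range m, F j s i
        = (((Finset.range m).filter
            (fun j => lvl j = s ∧ i ∈ Finset.Icc (lo j) (hi j))).card : ℝ) * M s i ^ 2 := by
      rw [hF_def, ← Finset.sum_filter, Finset.sum_const, nsmul_eq_mul]
    rw [e2]
    exact mul_le_mul_of_nonneg_right (by exact_mod_cast hmult s i) (sq_nonneg _)
  have hA : ∑ j ∈ Finset.range m, (∑ n ∈ Finset.Ioc (c j) (c (j + 1)), g n) ^ 2
      ≤ 12 * ∑ j ∈ Finset.range m, ∑ i ∈ Finset.Icc (lo j) (hi j), M (lvl j) i ^ 2 := by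
    rw [Finset.mul_sum]
    exact Finset.sum_le_sum fun j hj => stepA j (Finset.mem_range.1 hj)
  linarith [stepB]

end SqVarAux

open SqVarAux in
theorem sq_var_of_maximal_bound_sqrt_log :
    ∃ C : ℝ, 0 < C ∧ ∀ (N : ℕ), 2 ≤ N → ∀ (φ : ℕ → ℝ → ℝ) (Δ : ℕ → ℝ),
      (∀ n, Measurable (φ n)) →
      (∀ m ∈ Finset.Icc 1 N, ∀ n ∈ Finset.Icc 1 N,
        (∫ x in Set.Icc (0:ℝ) 1, φ m x * φ n x) = if m = n then (1:ℝ) else 0) →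
      (∀ n ∈ Finset.Icc 1 N, 1 ≤ Δ n) →
      (MonotoneOn Δ (Set.Icc 1 N)) →
      (∀ m ∈ Finset.Icc 1 N, ∀ b : ℕ → ℝ,
        Real.sqrt (∫ x in Set.Icc (0:ℝ) 1,
            (⨆ K ∈ Finset.Icc 1 m, |∑ n ∈ Finset.Icc 1 K, b n * φ n x|) ^ 2)
          ≤ Δ m * Real.sqrt (∑ n ∈ Finset.Icc 1 m, b n ^ 2)) →
      ∀ a : ℕ → ℝ,
        Real.sqrt (∫ x in Set.Icc (0:ℝ) 1, (sqVar N fun n => a n * φ n x) ^ 2)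
          ≤ C * Δ N * Real.sqrt (Real.log N) *
              Real.sqrt (∑ n ∈ Finset.Icc 1 N, a n ^ 2) := by
  classical
  refine ⟨11, by norm_num, ?_⟩
  intro N hN φ Δ hφ _horth hΔ1 hΔmono hmax a
  have hN1 : 1 ≤ N := by omega
  set L : ℕ := Nat.log 2 N + 1 with hL
  have hNL : N ≤ 2 ^ L := by
    have h := Nat.lt_pow_succ_log_self (b := 2) one_lt_two N
    rw [hL]
    omega
  set bfun : ℕ → ℕ → ℕ → ℝ := fun s i n =>
    if n ∈ Finset.Ioc (i * 2 ^ s) ((i + 1) * 2 ^ s) then a n else 0 with hbfun_def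
  set msi : ℕ → ℕ → ℕ := fun s i => min ((i + 1) * 2 ^ s) N with hmsi_def
  set Mf : ℕ → ℕ → ℝ → ℝ := fun s i x =>
    ⨆ K ∈ Finset.Icc 1 (msi s i), |∑ n ∈ Finset.Icc 1 K, bfun s i n * φ n x| with hMf_def
  have hQpos : ∀ s : ℕ, (0:ℕ) < 2 ^ s := fun s => Nat.pow_pos (by norm_num)
  have hmsi1 : ∀ s i, 1 ≤ msi s i := by
    intro s i
    have h1 : 0 < (i + 1) * 2 ^ s := Nat.mul_pos (Nat.succ_pos i) (hQpos s)
    simp only [hmsi_def]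
    omega
  have hmsiN : ∀ s i, msi s i ≤ N := fun s i => min_le_right _ _
  have hmem : ∀ s i, msi s i ∈ Finset.Icc 1 N := fun s i =>
    Finset.mem_Icc.2 ⟨hmsi1 s i, hmsiN s i⟩
  have hne : ∀ s i, (Finset.Icc 1 (msi s i)).Nonempty := fun s i =>
    ⟨1, Finset.mem_Icc.2 ⟨le_refl 1, hmsi1 s i⟩⟩
  have hrep : ∀ s i x, Mf s i x = (Finset.Icc 1 (msi s i)).sup' (hne s i)
      (fun K => |∑ n ∈ Finset.Icc 1 K, bfun s i n * φ n x|) := fun s i x =>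
    biSup_eq_sup' (hne s i) _ (fun K _ => abs_nonneg _)
  have hSb : ∀ s i K x, K ≤ (i + 1) * 2 ^ s →
      ∑ n ∈ Finset.Icc 1 K, bfun s i n * φ n x
        = ∑ n ∈ Finset.Ioc (i * 2 ^ s) K, a n * φ n x := by
    intro s i K x hK
    have e1 : ∀ n, bfun s i n * φ n x
        = if n ∈ Finset.Ioc (i * 2 ^ s) ((i + 1) * 2 ^ s) then a n * φ n x else 0 := by
      intro n
      simp only [hbfun_def]
      split_ifs <;> simp
    rw [Finset.sum_congr rfl fun n _ => e1 n, ← Finset.sum_filter]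
    congr 1
    ext n
    simp only [Finset.mem_filter, Finset.mem_Icc, Finset.mem_Ioc]
    have hkey : (i + 1) * 2 ^ s = i * 2 ^ s + 2 ^ s := by ring
    have hq := hQpos s
    omega
  have hMf_nonneg : ∀ s i x, 0 ≤ Mf s i x := by
    intro s i x
    rw [hrep]
    refine le_trans (abs_nonneg (∑ n ∈ Finset.Icc 1 1, bfun s i n * φ n x))
      (Finset.le_sup' (fun K => |∑ n ∈ Finset.Icc 1 K, bfun s i n * φ n x|) ?_)
    exact Finset.mem_Icc.2 ⟨le_refl 1, hmsi1 s i⟩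
  have hle_Mf : ∀ s i x K, K ∈ Finset.Icc 1 (msi s i) →
      |∑ n ∈ Finset.Icc 1 K, bfun s i n * φ n x| ≤ Mf s i x := by
    intro s i x K hK
    rw [hrep]
    exact Finset.le_sup' (fun K => |∑ n ∈ Finset.Icc 1 K, bfun s i n * φ n x|) hK
  have hMbound : ∀ s i u v x, i * 2 ^ s ≤ u → u < v → v ≤ (i + 1) * 2 ^ s → v ≤ N →
      |∑ n ∈ Finset.Ioc u v, a n * φ n x| ≤ 2 * Mf s i x := by
    intro s i u v x h1 h2 h3 h4
    have hv : v ∈ Finset.Icc 1 (msi s i) := by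
      simp only [hmsi_def]
      rw [Finset.mem_Icc]
      omega
    have hSv := hSb s i v x h3
    rcases Nat.eq_zero_or_pos u with hu0 | hu0
    · have hi0 : i * 2 ^ s = 0 := by omega
      have e : ∑ n ∈ Finset.Ioc u v, a n * φ n x
          = ∑ n ∈ Finset.Icc 1 v, bfun s i n * φ n x := by
        rw [hSv, hu0, hi0]
      rw [e]
      have h5 := hle_Mf s i x v hv
      have h6 := hMf_nonneg s i x
      linarith
    · have hu : u ∈ Finset.Icc 1 (msi s i) := by
        simp only [hmsi_def]
        rw [Finset.mem_Icc]
        omega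
      have hSu := hSb s i u x (by omega)
      have hsplit := Finset.sum_Ioc_consecutive (fun n => a n * φ n x) h1 (le_of_lt h2)
      have e : ∑ n ∈ Finset.Ioc u v, a n * φ n x
          = (∑ n ∈ Finset.Icc 1 v, bfun s i n * φ n x)
            - (∑ n ∈ Finset.Icc 1 u, bfun s i n * φ n x) := by
        rw [hSv, hSu]
        linarith [hsplit]
      rw [e]
      have h5 := hle_Mf s i x v hv
      have h6 := hle_Mf s i x u hu
      have h7 := abs_sub (∑ n ∈ Finset.Icc 1 v, bfun s i n * φ n x)
        (∑ n ∈ Finset.Icc 1 u, bfun s i n * φ n x)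
      calc |(∑ n ∈ Finset.Icc 1 v, bfun s i n * φ n x)
            - (∑ n ∈ Finset.Icc 1 u, bfun s i n * φ n x)|
          ≤ |∑ n ∈ Finset.Icc 1 v, bfun s i n * φ n x|
            + |∑ n ∈ Finset.Icc 1 u, bfun s i n * φ n x| := by
            have := abs_add_le (∑ n ∈ Finset.Icc 1 v, bfun s i n * φ n x)
              (-(∑ n ∈ Finset.Icc 1 u, bfun s i n * φ n x))
            simpa [sub_eq_add_neg] using this
        _ ≤ 2 * Mf s i x := by linarith
  have hMf_meas : ∀ s i, Measurable (Mf s i) := by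
    intro s i
    have e : Mf s i = fun x => (Finset.Icc 1 (msi s i)).sup' (hne s i)
        (fun K => |∑ n ∈ Finset.Icc 1 K, bfun s i n * φ n x|) := funext (hrep s i)
    rw [e]
    refine measurable_sup' (hne s i) _ fun K => ?_
    exact (Finset.measurable_sum _ fun n _ => (hφ n).const_mul (bfun s i n)).abs
  have hMf_le_sqVar : ∀ s i x, Mf s i x ≤ sqVar N fun n => a n * φ n x := by
    intro s i x
    rw [hrep]
    refine Finset.sup'_le _ _ fun K hK => ?_
    have hK' := Finset.mem_Icc.1 hK
    rw [hSb s i K x (le_trans hK'.2 (min_le_left _ _))]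
    rcases le_or_gt K (i * 2 ^ s) with hKi | hKi
    · rw [Finset.Ioc_eq_empty (by omega)]
      simpa using sqVar_nonneg N (fun n => a n * φ n x)
    · exact abs_sum_Ioc_le_sqVar _ hKi (le_trans hK'.2 (min_le_right _ _))
  have hpt : ∀ x, (sqVar N fun n => a n * φ n x) ^ 2
      ≤ 24 * ∑ s ∈ Finset.range (L + 1), ∑ i ∈ Finset.range (2 ^ L), Mf s i x ^ 2 := by
    intro x
    have hG0 : (0:ℝ) ≤ ∑ s ∈ Finset.range (L + 1), ∑ i ∈ Finset.range (2 ^ L),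
        Mf s i x ^ 2 :=
      Finset.sum_nonneg fun s _ => Finset.sum_nonneg fun i _ => sq_nonneg _
    have h1 : (sqVar N fun n => a n * φ n x)
        ≤ Real.sqrt (24 * ∑ s ∈ Finset.range (L + 1), ∑ i ∈ Finset.range (2 ^ L),
            Mf s i x ^ 2) := by
      rw [sqVar_eq]
      refine Real.sSup_le (fun r hr => ?_) (Real.sqrt_nonneg _)
      obtain ⟨m, c, hc, h0, hm, rfl⟩ := hr
      refine Real.sqrt_le_sqrt ?_
      exact core hN1 hNL (fun s i => hMf_nonneg s i x)
        (fun s i u v hh1 hh2 hh3 hh4 => hMbound s i u v x hh1 hh2 hh3 hh4) hc h0 hm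
    calc (sqVar N fun n => a n * φ n x) ^ 2
        ≤ Real.sqrt (24 * ∑ s ∈ Finset.range (L + 1), ∑ i ∈ Finset.range (2 ^ L),
            Mf s i x ^ 2) ^ 2 :=
          pow_le_pow_left₀ (sqVar_nonneg _ _) h1 2
      _ = _ := Real.sq_sqrt (by positivity)
  have hA0 : (0:ℝ) ≤ ∑ n ∈ Finset.Icc 1 N, a n ^ 2 :=
    Finset.sum_nonneg fun n _ => sq_nonneg _
  have hΔN1 : (1:ℝ) ≤ Δ N := hΔ1 N (Finset.mem_Icc.2 ⟨hN1, le_refl N⟩)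
  have hlogN0 : 0 ≤ Real.log N :=
    Real.log_nonneg (by exact_mod_cast hN1)
  by_cases hint : Integrable (fun x => (sqVar N fun n => a n * φ n x) ^ 2)
      ((volume : Measure ℝ).restrict (Set.Icc (0:ℝ) 1))
  · have hMfsq_int : ∀ s i, Integrable (fun x => Mf s i x ^ 2)
        ((volume : Measure ℝ).restrict (Set.Icc (0:ℝ) 1)) := by
      intro s i
      refine Integrable.mono' hint ((hMf_meas s i).pow_const 2).aestronglyMeasurable ?_
      refine Filter.Eventually.of_forall fun x => ?_
      rw [Real.norm_eq_abs, abs_of_nonneg (sq_nonneg _)]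
      exact pow_le_pow_left₀ (hMf_nonneg s i x) (hMf_le_sqVar s i x) 2
    have hGint : Integrable (fun x => ∑ s ∈ Finset.range (L + 1),
        ∑ i ∈ Finset.range (2 ^ L), Mf s i x ^ 2)
        ((volume : Measure ℝ).restrict (Set.Icc (0:ℝ) 1)) := by
      refine integrable_finset_sum _ fun s _ => ?_
      exact integrable_finset_sum _ fun i _ => hMfsq_int s i
    have hmono : (∫ x in Set.Icc (0:ℝ) 1, (sqVar N fun n => a n * φ n x) ^ 2)
        ≤ ∫ x in Set.Icc (0:ℝ) 1, 24 * ∑ s ∈ Finset.range (L + 1),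
            ∑ i ∈ Finset.range (2 ^ L), Mf s i x ^ 2 :=
      integral_mono_of_nonneg (Filter.Eventually.of_forall fun x => sq_nonneg _)
        (hGint.const_mul 24) (Filter.Eventually.of_forall fun x => hpt x)
    have hint_each : ∀ s i, (∫ x in Set.Icc (0:ℝ) 1, Mf s i x ^ 2)
        ≤ Δ N ^ 2 * ∑ n ∈ Finset.Icc 1 N,
            (if n ∈ Finset.Ioc (i * 2 ^ s) ((i + 1) * 2 ^ s) then a n ^ 2 else 0) := by
      intro s i
      have h5 : Real.sqrt (∫ x in Set.Icc (0:ℝ) 1, Mf s i x ^ 2)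
          ≤ Δ (msi s i) * Real.sqrt (∑ n ∈ Finset.Icc 1 (msi s i), bfun s i n ^ 2) :=
        hmax (msi s i) (hmem s i) (bfun s i)
      have hI0 : 0 ≤ ∫ x in Set.Icc (0:ℝ) 1, Mf s i x ^ 2 :=
        integral_nonneg fun x => sq_nonneg _
      have hb0 : 0 ≤ ∑ n ∈ Finset.Icc 1 (msi s i), bfun s i n ^ 2 :=
        Finset.sum_nonneg fun n _ => sq_nonneg _
      have hΔmsi1 : (1:ℝ) ≤ Δ (msi s i) := hΔ1 _ (hmem s i)
      have hΔmsi : Δ (msi s i) ≤ Δ N :=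
        hΔmono (Set.mem_Icc.2 ⟨hmsi1 s i, hmsiN s i⟩)
          (Set.mem_Icc.2 ⟨hN1, le_refl N⟩) (hmsiN s i)
      have step : (∫ x in Set.Icc (0:ℝ) 1, Mf s i x ^ 2)
          ≤ Δ (msi s i) ^ 2 * ∑ n ∈ Finset.Icc 1 (msi s i), bfun s i n ^ 2 := by
        calc (∫ x in Set.Icc (0:ℝ) 1, Mf s i x ^ 2)
            = Real.sqrt (∫ x in Set.Icc (0:ℝ) 1, Mf s i x ^ 2) ^ 2 :=
              (Real.sq_sqrt hI0).symm
          _ ≤ (Δ (msi s i) * Real.sqrt (∑ n ∈ Finset.Icc 1 (msi s i), bfun s i n ^ 2)) ^ 2 :=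
              pow_le_pow_left₀ (Real.sqrt_nonneg _) h5 2
          _ = Δ (msi s i) ^ 2 * ∑ n ∈ Finset.Icc 1 (msi s i), bfun s i n ^ 2 := by
              rw [mul_pow, Real.sq_sqrt hb0]
      refine step.trans ?_
      have hsum : ∑ n ∈ Finset.Icc 1 (msi s i), bfun s i n ^ 2
          ≤ ∑ n ∈ Finset.Icc 1 N,
              (if n ∈ Finset.Ioc (i * 2 ^ s) ((i + 1) * 2 ^ s) then a n ^ 2 else 0) := by
        have e : ∀ n, bfun s i n ^ 2
            = if n ∈ Finset.Ioc (i * 2 ^ s) ((i + 1) * 2 ^ s) then a n ^ 2 else 0 := by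
          intro n
          simp only [hbfun_def]
          split_ifs <;> simp
        rw [Finset.sum_congr rfl fun n _ => e n]
        refine Finset.sum_le_sum_of_subset_of_nonneg
          (Finset.Icc_subset_Icc_right (hmsiN s i)) fun n _ _ => ?_
        split_ifs
        · exact sq_nonneg _
        · exact le_refl 0
      have hΔ0 : (0:ℝ) ≤ Δ (msi s i) := le_trans zero_le_one hΔmsi1
      exact mul_le_mul (pow_le_pow_left₀ hΔ0 hΔmsi 2) hsum hb0 (sq_nonneg (Δ N))
    have hsum_i : ∀ s, ∑ i ∈ Finset.range (2 ^ L), ∑ n ∈ Finset.Icc 1 N,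
          (if n ∈ Finset.Ioc (i * 2 ^ s) ((i + 1) * 2 ^ s) then a n ^ 2 else 0)
        ≤ ∑ n ∈ Finset.Icc 1 N, a n ^ 2 := by
      intro s
      rw [Finset.sum_comm]
      refine Finset.sum_le_sum fun n hn => ?_
      rw [Finset.mem_Icc] at hn
      have e : ∀ i, (if n ∈ Finset.Ioc (i * 2 ^ s) ((i + 1) * 2 ^ s) then a n ^ 2 else 0)
          = if i = (n - 1) / 2 ^ s then a n ^ 2 else 0 := by
        intro i
        refine if_congr ?_ rfl rfl
        rw [Finset.mem_Ioc, eq_comm]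
        exact (div_pred_eq_iff (hQpos s) hn.1).symm.symm |>.symm
      rw [Finset.sum_congr rfl fun i _ => e i, Finset.sum_ite_eq']
      split_ifs
      · exact le_refl _
      · exact sq_nonneg _
    have hItotal : (∫ x in Set.Icc (0:ℝ) 1, 24 * ∑ s ∈ Finset.range (L + 1),
          ∑ i ∈ Finset.range (2 ^ L), Mf s i x ^ 2)
        = 24 * ∑ s ∈ Finset.range (L + 1), ∑ i ∈ Finset.range (2 ^ L),
            ∫ x in Set.Icc (0:ℝ) 1, Mf s i x ^ 2 := by
      rw [integral_const_mul]
      congr 1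
      rw [integral_finset_sum _ fun s _ => integrable_finset_sum _ fun i _ => hMfsq_int s i]
      refine Finset.sum_congr rfl fun s _ => ?_
      rw [integral_finset_sum _ fun i _ => hMfsq_int s i]
    have hfinal : (∫ x in Set.Icc (0:ℝ) 1, (sqVar N fun n => a n * φ n x) ^ 2)
        ≤ 24 * (L + 1) * Δ N ^ 2 * ∑ n ∈ Finset.Icc 1 N, a n ^ 2 := by
      calc (∫ x in Set.Icc (0:ℝ) 1, (sqVar N fun n => a n * φ n x) ^ 2)
          ≤ ∫ x in Set.Icc (0:ℝ) 1, 24 * ∑ s ∈ Finset.range (L + 1),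
              ∑ i ∈ Finset.range (2 ^ L), Mf s i x ^ 2 := hmono
        _ = 24 * ∑ s ∈ Finset.range (L + 1), ∑ i ∈ Finset.range (2 ^ L),
              ∫ x in Set.Icc (0:ℝ) 1, Mf s i x ^ 2 := hItotal
        _ ≤ 24 * ∑ s ∈ Finset.range (L + 1), (Δ N ^ 2 * ∑ n ∈ Finset.Icc 1 N, a n ^ 2) := by
            refine mul_le_mul_of_nonneg_left (Finset.sum_le_sum fun s _ => ?_) (by norm_num)
            calc ∑ i ∈ Finset.range (2 ^ L), ∫ x in Set.Icc (0:ℝ) 1, Mf s i x ^ 2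
                ≤ ∑ i ∈ Finset.range (2 ^ L), Δ N ^ 2 * ∑ n ∈ Finset.Icc 1 N,
                    (if n ∈ Finset.Ioc (i * 2 ^ s) ((i + 1) * 2 ^ s) then a n ^ 2 else 0) :=
                  Finset.sum_le_sum fun i _ => hint_each s i
              _ = Δ N ^ 2 * ∑ i ∈ Finset.range (2 ^ L), ∑ n ∈ Finset.Icc 1 N,
                    (if n ∈ Finset.Ioc (i * 2 ^ s) ((i + 1) * 2 ^ s) then a n ^ 2 else 0) := by
                  rw [Finset.mul_sum]
              _ ≤ Δ N ^ 2 * ∑ n ∈ Finset.Icc 1 N, a n ^ 2 :=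
                  mul_le_mul_of_nonneg_left (hsum_i s) (sq_nonneg _)
        _ = 24 * (L + 1) * Δ N ^ 2 * ∑ n ∈ Finset.Icc 1 N, a n ^ 2 := by
            rw [Finset.sum_const, Finset.card_range, nsmul_eq_mul]
            push_cast
            ring
    have hk : (Nat.log 2 N : ℝ) * Real.log 2 ≤ Real.log N := by
      have h1 : ((2:ℝ) ^ (Nat.log 2 N)) ≤ (N : ℝ) := by
        exact_mod_cast Nat.pow_log_le_self 2 (by omega)
      have h2 := Real.log_le_log (by positivity) h1
      rwa [Real.log_pow] at h2
    have hlog2 : (0.6931471803 : ℝ) < Real.log 2 := Real.log_two_gt_d9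
    have hlogN2 : Real.log 2 ≤ Real.log N :=
      Real.log_le_log (by norm_num) (by exact_mod_cast hN)
    have hL1 : ((L:ℝ) + 1) ≤ 5 * Real.log N := by
      have hcast : (L:ℝ) = (Nat.log 2 N : ℝ) + 1 := by rw [hL]; push_cast; ring
      have hnn : (0:ℝ) ≤ (Nat.log 2 N : ℝ) := Nat.cast_nonneg _
      nlinarith
    have hstep2 : 24 * ((L:ℝ) + 1) * Δ N ^ 2 * (∑ n ∈ Finset.Icc 1 N, a n ^ 2)
        ≤ 121 * Real.log N * Δ N ^ 2 * ∑ n ∈ Finset.Icc 1 N, a n ^ 2 := by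
      have h1 : 24 * ((L:ℝ) + 1) ≤ 121 * Real.log N := by nlinarith
      have h2 : (0:ℝ) ≤ Δ N ^ 2 * ∑ n ∈ Finset.Icc 1 N, a n ^ 2 :=
        mul_nonneg (sq_nonneg _) hA0
      nlinarith
    have hΔN0 : (0:ℝ) ≤ Δ N := le_trans zero_le_one hΔN1
    calc Real.sqrt (∫ x in Set.Icc (0:ℝ) 1, (sqVar N fun n => a n * φ n x) ^ 2)
        ≤ Real.sqrt (24 * (L + 1) * Δ N ^ 2 * ∑ n ∈ Finset.Icc 1 N, a n ^ 2) :=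
          Real.sqrt_le_sqrt hfinal
      _ ≤ Real.sqrt (121 * Real.log N * Δ N ^ 2 * ∑ n ∈ Finset.Icc 1 N, a n ^ 2) := by
          refine Real.sqrt_le_sqrt ?_
          exact_mod_cast hstep2
      _ = 11 * Δ N * Real.sqrt (Real.log N) * Real.sqrt (∑ n ∈ Finset.Icc 1 N, a n ^ 2) := by
          rw [show (121:ℝ) * Real.log N * Δ N ^ 2 * (∑ n ∈ Finset.Icc 1 N, a n ^ 2)
              = (11 * Δ N) ^ 2 * (Real.log N * ∑ n ∈ Finset.Icc 1 N, a n ^ 2) by ring]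
          rw [Real.sqrt_mul (sq_nonneg _), Real.sqrt_sq (by positivity), Real.sqrt_mul hlogN0]
          ring
  · rw [integral_undef hint, Real.sqrt_zero]
    have hΔN0 : (0:ℝ) ≤ Δ N := le_trans zero_le_one hΔN1
    have : (0:ℝ) ≤ 11 * Δ N * Real.sqrt (Real.log N) * Real.sqrt (∑ n ∈ Finset.Icc 1 N, a n ^ 2) := by
      have := Real.sqrt_nonneg (Real.log N)
      have := Real.sqrt_nonneg (∑ n ∈ Finset.Icc 1 N, a n ^ 2)
      positivity
    exact this
end

section
/- There exists an absolute constant C > 0 such that for every N ≥ 1, every real-valued orthonormal system {φ_n}_{n=1}^N on 𝕋 = [0,1], and all real coefficients a_1, …, a_N, the function f = ∑_{n=1}^N a_n φ_n satisfies ‖S[f]‖_{L²(V²)} ≤ C ln(N+1) (∑_{n=1}^N a_n²)^{1/2}. -/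
open MeasureTheory
open Finset

def dyDecomp : ℕ → ℕ → ℕ → ℕ → Finset (ℕ × ℕ)
  | 0, o, u, v => if u < v then {(0, o)} else ∅
  | (K+1), o, u, v =>
    if u = o ∧ v = o + 2^(K+1) then {(K+1, o)}
    else if v ≤ o + 2^K then dyDecomp K o u v
    else if o + 2^K ≤ u then dyDecomp K (o + 2^K) u v
    else dyDecomp K o u (o + 2^K) ∪ dyDecomp K (o + 2^K) (o + 2^K) v

lemma dyDecomp_full (K o : ℕ) : dyDecomp K o o (o + 2^K) = {(K, o)} := by
  cases K with
  | zero => simp [dyDecomp]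
  | succ K => simp [dyDecomp]

lemma dyDecomp_mem : ∀ {K o u v : ℕ}, 2^K ∣ o → o ≤ u → u ≤ v → v ≤ o + 2^K →
    ∀ {k p : ℕ}, (k, p) ∈ dyDecomp K o u v →
    u ≤ p ∧ p + 2^k ≤ v ∧ k ≤ K ∧ 2^k ∣ p := by
  intro K
  induction K with
  | zero =>
    intro o u v ho hu huv hv k p hmem
    simp only [dyDecomp] at hmem
    split at hmem
    · rename_i hlt
      simp only [Finset.mem_singleton, Prod.mk.injEq] at hmem
      obtain ⟨rfl, rfl⟩ := hmem
      have hu' : u = p := le_antisymm (by omega) hu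
      refine ⟨by omega, by omega, le_refl _, one_dvd _⟩
    · simp at hmem
  | succ K ih =>
    intro o u v ho hu huv hv k p hmem
    have hdvd : 2^K ∣ o := dvd_trans (pow_dvd_pow 2 (Nat.le_succ K)) ho
    simp only [dyDecomp] at hmem
    split at hmem
    · rename_i hfull
      simp only [Finset.mem_singleton, Prod.mk.injEq] at hmem
      obtain ⟨rfl, rfl⟩ := hmem
      exact ⟨by omega, by omega, le_refl _, by omega⟩
    · split at hmem
      · rename_i hvle
        obtain ⟨h1, h2, h3, h4⟩ := ih hdvd hu huv hvle hmem
        exact ⟨h1, h2, Nat.le_succ_of_le h3, h4⟩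
      · split at hmem
        · rename_i hvgt hule
          have : 2^K ∣ o + 2^K := Dvd.dvd.add hdvd dvd_rfl
          have hv' : v ≤ (o + 2^K) + 2^K := by
            have : 2^(K+1) = 2^K + 2^K := by ring
            omega
          obtain ⟨h1, h2, h3, h4⟩ := ih this hule huv hv' hmem
          exact ⟨h1, h2, Nat.le_succ_of_le h3, h4⟩
        · rename_i hvgt hugt
          rw [Finset.mem_union] at hmem
          rcases hmem with hmem | hmem
          · obtain ⟨h1, h2, h3, h4⟩ := ih hdvd hu (by omega) (le_refl _) hmem
            exact ⟨h1, by omega, Nat.le_succ_of_le h3, h4⟩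
          · have : 2^K ∣ o + 2^K := Dvd.dvd.add hdvd dvd_rfl
            have hv' : v ≤ (o + 2^K) + 2^K := by
              have : 2^(K+1) = 2^K + 2^K := by ring
              omega
            obtain ⟨h1, h2, h3, h4⟩ := ih this (le_refl _) (by omega) hv' hmem
            exact ⟨by omega, h2, Nat.le_succ_of_le h3, h4⟩

lemma dyDecomp_sum (b : ℕ → ℝ) : ∀ {K o u v : ℕ}, 2^K ∣ o → o ≤ u → u ≤ v → v ≤ o + 2^K →
    ∑ d ∈ dyDecomp K o u v, (∑ n ∈ Finset.Ioc d.2 (d.2 + 2^d.1), b n)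
      = ∑ n ∈ Finset.Ioc u v, b n := by
  intro K
  induction K with
  | zero =>
    intro o u v ho hu huv hv
    simp only [dyDecomp]
    split
    · rename_i hlt
      have : u = o ∧ v = o + 1 := by omega
      obtain ⟨rfl, rfl⟩ := this
      simp
    · have : u = v := by omega
      subst this
      simp
  | succ K ih =>
    intro o u v ho hu huv hv
    have hdvd : 2^K ∣ o := dvd_trans (pow_dvd_pow 2 (Nat.le_succ K)) ho
    have hdvd' : 2^K ∣ o + 2^K := Dvd.dvd.add hdvd dvd_rfl
    have hpow : 2^(K+1) = 2^K + 2^K := by ring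
    simp only [dyDecomp]
    split
    · rename_i hfull
      obtain ⟨rfl, rfl⟩ := hfull
      simp
    · split
      · rename_i hvle
        exact ih hdvd hu huv hvle
      · split
        · rename_i hvgt hule
          exact ih hdvd' hule huv (by omega)
        · rename_i hvgt hugt
          have h1 : u ≤ o + 2^K := by omega
          have hdisj : Disjoint (dyDecomp K o u (o + 2^K))
              (dyDecomp K (o + 2^K) (o + 2^K) v) := by
            rw [Finset.disjoint_left]
            rintro ⟨k, p⟩ hd1 hd2
            obtain ⟨a1, a2, -, -⟩ := dyDecomp_mem hdvd hu h1 (le_refl _) hd1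
            obtain ⟨b1, b2, -, -⟩ := dyDecomp_mem hdvd' (le_refl _) (by omega) (by omega) hd2
            have : 0 < 2^k := Nat.pow_pos (by norm_num)
            omega
          rw [Finset.sum_union hdisj, ih hdvd hu h1 (le_refl _),
            ih hdvd' (le_refl _) (by omega) (by omega),
            Finset.sum_Ioc_consecutive b h1 (by omega)]

lemma dyDecomp_card_left : ∀ (K o v : ℕ), o ≤ v → v ≤ o + 2^K →
    (dyDecomp K o o v).card ≤ K + 1 := by
  intro K
  induction K with
  | zero =>
    intro o v _ _
    simp only [dyDecomp]
    split <;> simp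
  | succ K ih =>
    intro o v ho hv
    simp only [dyDecomp]
    split
    · simp
    · split
      · rename_i hvle
        exact (ih o v ho hvle).trans (by omega)
      · split
        · rename_i h1 h2
          exact absurd h2 (by omega)
        · rename_i h1 h2
          refine (Finset.card_union_le _ _).trans ?_
          rw [dyDecomp_full]
          have := ih (o + 2^K) v (by omega) (by omega)
          simp only [Finset.card_singleton]
          omega

lemma dyDecomp_card_right : ∀ (K o u : ℕ), o ≤ u → u ≤ o + 2^K →
    (dyDecomp K o u (o + 2^K)).card ≤ K + 1 := by
  intro K
  induction K with
  | zero =>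
    intro o u _ _
    simp only [dyDecomp]
    split <;> simp
  | succ K ih =>
    intro o u ho hu
    simp only [dyDecomp]
    split
    · simp
    · split
      · rename_i hvle
        have : 0 < 2^K := Nat.pow_pos (by norm_num)
        exact absurd hvle (by omega)
      · split
        · rename_i h1 h2
          have : o + 2^(K+1) = (o + 2^K) + 2^K := by ring
          rw [this]
          exact (ih (o + 2^K) u h2 (by omega)).trans (by omega)
        · rename_i h1 h2
          refine (Finset.card_union_le _ _).trans ?_
          have h3 := ih o u ho (by omega)
          have : o + 2^(K+1) = (o + 2^K) + 2^K := by ring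
          rw [this, dyDecomp_full]
          simp only [Finset.card_singleton]
          omega

lemma dyDecomp_card : ∀ (K o u v : ℕ), o ≤ u → u ≤ v → v ≤ o + 2^K →
    (dyDecomp K o u v).card ≤ 2 * K + 2 := by
  intro K
  induction K with
  | zero =>
    intro o u v _ _ _
    simp only [dyDecomp]
    split <;> simp
  | succ K ih =>
    intro o u v ho huv hv
    simp only [dyDecomp]
    split
    · simp
    · split
      · rename_i hvle
        exact (ih o u v ho huv hvle).trans (by omega)
      · split
        · rename_i h1 h2
          exact (ih (o + 2^K) u v h2 huv (by omega)).trans (by omega)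
        · rename_i h1 h2
          refine (Finset.card_union_le _ _).trans ?_
          have ha := dyDecomp_card_right K o u ho (by omega)
          have hb := dyDecomp_card_left K (o + 2^K) v (by omega) (by omega)
          omega

lemma core_var_bound (b : ℕ → ℝ) (K m : ℕ) (c : ℕ → ℕ) (hc : StrictMono c)
    (hc0 : c 0 = 0) (hcm : c m ≤ 2^K) :
    ∑ j ∈ Finset.range m, (∑ n ∈ Finset.Ioc (c j) (c (j+1)), b n)^2
      ≤ ((2*K+2 : ℕ) : ℝ) * ∑ k ∈ Finset.range (K+1), ∑ i ∈ Finset.range (2^(K-k)),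
          (∑ n ∈ Finset.Ioc (i*2^k) (i*2^k + 2^k), b n)^2 := by
  classical
  set g : ℕ × ℕ → ℝ := fun d => (∑ n ∈ Finset.Ioc d.2 (d.2 + 2^d.1), b n)^2 with hg
  set D : ℕ → Finset (ℕ × ℕ) := fun j => dyDecomp K 0 (c j) (c (j+1)) with hD
  have hbound : ∀ j, j ∈ Finset.range m → c 0 ≤ c j ∧ c j ≤ c (j+1) ∧ c (j+1) ≤ c m := by
    intro j hj
    rw [Finset.mem_range] at hj
    exact ⟨hc.monotone (Nat.zero_le j), hc.monotone (Nat.le_succ j), hc.monotone hj⟩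
  have hdvd0 : 2^K ∣ 0 := dvd_zero _
  -- step 1: per-block Cauchy-Schwarz
  have step1 : ∀ j ∈ Finset.range m,
      (∑ n ∈ Finset.Ioc (c j) (c (j+1)), b n)^2 ≤ ((2*K+2 : ℕ) : ℝ) * ∑ d ∈ D j, g d := by
    intro j hj
    obtain ⟨h0, h1, h2⟩ := hbound j hj
    rw [← dyDecomp_sum b hdvd0 (by omega) h1 (by simpa using h2.trans hcm)]
    refine (sq_sum_le_card_mul_sum_sq).trans ?_
    apply mul_le_mul_of_nonneg_right
    · exact_mod_cast Nat.cast_le.2 (dyDecomp_card K 0 (c j) (c (j+1)) (by omega) h1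
        (by simpa using h2.trans hcm))
    · positivity
  have step2 : ∑ j ∈ Finset.range m, (∑ n ∈ Finset.Ioc (c j) (c (j+1)), b n)^2
      ≤ ((2*K+2 : ℕ) : ℝ) * ∑ j ∈ Finset.range m, ∑ d ∈ D j, g d := by
    rw [Finset.mul_sum]
    exact Finset.sum_le_sum step1
  refine step2.trans (mul_le_mul_of_nonneg_left ?_ (by positivity))
  -- step 3: disjointness, biUnion
  have hdisj : (Finset.range m : Set ℕ).PairwiseDisjoint D := by
    intro i hi j hj hij
    simp only [Set.mem_setOf_eq, Finset.coe_range, Set.mem_Iio] at hi hj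
    simp only [Function.onFun]
    rw [Finset.disjoint_left]
    rintro ⟨k, p⟩ hd1 hd2
    have hi' : c i ≤ c (i+1) := hc.monotone (Nat.le_succ i)
    have hj' : c j ≤ c (j+1) := hc.monotone (Nat.le_succ j)
    have hiK : c (i+1) ≤ 2^K := (hc.monotone hi).trans hcm
    have hjK : c (j+1) ≤ 2^K := (hc.monotone hj).trans hcm
    obtain ⟨a1, a2, -, -⟩ := dyDecomp_mem hdvd0 (Nat.zero_le _) hi' (by simpa using hiK) hd1
    obtain ⟨b1, b2, -, -⟩ := dyDecomp_mem hdvd0 (Nat.zero_le _) hj' (by simpa using hjK) hd2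
    have hpos : 0 < 2^k := Nat.pow_pos (by norm_num)
    rcases Nat.lt_or_ge i j with h | h
    · have : c (i+1) ≤ c j := hc.monotone h
      omega
    · have : c (j+1) ≤ c i := hc.monotone (by omega)
      omega
  rw [← Finset.sum_biUnion hdisj]
  -- step 4: target set
  set T : Finset (ℕ × ℕ) := (Finset.range (K+1)).biUnion
    (fun k => (Finset.range (2^(K-k))).image (fun i => (k, i*2^k))) with hT
  have hsub : (Finset.range m).biUnion D ⊆ T := by
    intro d hd
    rw [Finset.mem_biUnion] at hd
    obtain ⟨j, hj, hdj⟩ := hd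
    obtain ⟨h0, h1, h2⟩ := hbound j hj
    obtain ⟨a1, a2, a3, a4⟩ := dyDecomp_mem hdvd0 (Nat.zero_le _) h1
      (by simpa using h2.trans hcm) (k := d.1) (p := d.2) (by simpa using hdj)
    rw [hT, Finset.mem_biUnion]
    refine ⟨d.1, Finset.mem_range.2 (by omega), ?_⟩
    obtain ⟨i, hi4⟩ := a4
    rw [Finset.mem_image]
    refine ⟨i, Finset.mem_range.2 ?_, by rw [Prod.ext_iff]; exact ⟨rfl, by rw [hi4, mul_comm]⟩⟩
    have h2K : d.2 + 2^d.1 ≤ 2^K := a2.trans (h2.trans hcm)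
    rw [hi4] at h2K
    have hpowsum : 2^d.1 * 2^(K - d.1) = 2^K := by
      rw [← pow_add]
      congr 1
      omega
    have hp : 0 < 2^d.1 := Nat.pow_pos (by norm_num)
    have hstep : 2^d.1 * (i+1) ≤ 2^d.1 * 2^(K - d.1) := by
      rw [Nat.mul_succ, hpowsum]
      omega
    have := Nat.le_of_mul_le_mul_left hstep hp
    omega
  refine (Finset.sum_le_sum_of_subset_of_nonneg hsub (fun d _ _ => by positivity)).trans ?_
  -- step 5: evaluate sum over T
  rw [hT, Finset.sum_biUnion]
  · apply le_of_eq
    apply Finset.sum_congr rfl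
    intro k _
    rw [Finset.sum_image]
    intro i _ i' _ h
    simp only [Prod.mk.injEq] at h
    have hp : 0 < 2^k := Nat.pow_pos (by norm_num)
    exact Nat.eq_of_mul_eq_mul_right hp h.2
  · intro k hk k' hk' hkk'
    simp only [Function.onFun]
    rw [Finset.disjoint_left]
    rintro ⟨k1, p1⟩ h1 h2
    rw [Finset.mem_image] at h1 h2
    obtain ⟨i, -, hi⟩ := h1
    obtain ⟨i', -, hi'⟩ := h2
    simp only [Prod.mk.injEq] at hi hi'
    exact hkk' (hi.1.symm ▸ hi'.1.symm ▸ rfl)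

lemma sum_Ioc_blocks (w : ℕ → ℝ) (d : ℕ) :
    ∀ M : ℕ, ∑ i ∈ Finset.range M, ∑ n ∈ Finset.Ioc (i*d) (i*d + d), w n
      = ∑ n ∈ Finset.Ioc 0 (M*d), w n := by
  intro M
  induction M with
  | zero => simp
  | succ M ih =>
    rw [Finset.sum_range_succ, ih, Finset.sum_Ioc_consecutive w (Nat.zero_le (M*d))
      (Nat.le_add_right (M*d) d)]
    congr 1
    ring

theorem sq_var_log_bound :
    ∃ C : ℝ, 0 < C ∧ ∀ (N : ℕ), 1 ≤ N → ∀ (φ : ℕ → ℝ → ℝ) (a : ℕ → ℝ),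
      (∀ n, Measurable (φ n)) →
      (∀ m ∈ Finset.Icc 1 N, ∀ n ∈ Finset.Icc 1 N,
        (∫ x in Set.Icc (0:ℝ) 1, φ m x * φ n x) = if m = n then (1:ℝ) else 0) →
      Real.sqrt (∫ x in Set.Icc (0:ℝ) 1, (sqVar N fun n => a n * φ n x) ^ 2)
        ≤ C * Real.log ((N : ℝ) + 1) * Real.sqrt (∑ n ∈ Finset.Icc 1 N, a n ^ 2) := by
  classical
  refine ⟨20, by norm_num, ?_⟩
  intro N hN φ a hmeas horth
  set K := Nat.clog 2 N with hK
  have hNK : N ≤ 2^K := Nat.le_pow_clog one_lt_two N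
  set g : ℕ → ℝ → ℝ := fun n x => if n ∈ Finset.Icc 1 N then a n * φ n x else 0 with hgdef
  set w : ℕ → ℝ := fun n => if n ∈ Finset.Icc 1 N then a n ^ 2 else 0 with hwdef
  set A : ℝ := ∑ n ∈ Finset.Icc 1 N, a n ^ 2 with hA
  have hA0 : 0 ≤ A := Finset.sum_nonneg fun n _ => sq_nonneg _
  have hgmeas : ∀ n, Measurable (g n) := by
    intro n
    by_cases h : n ∈ Finset.Icc 1 N
    · simp only [hgdef, h, if_true]
      exact (hmeas n).const_mul (a n)
    · simp only [hgdef, h, if_false]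
      exact measurable_const
  -- diagonal integrability
  have hsq : ∀ n ∈ Finset.Icc 1 N,
      Integrable (fun x => φ n x * φ n x) (volume.restrict (Set.Icc (0:ℝ) 1)) := by
    intro n hn
    by_contra h
    have h1 := horth n hn n hn
    rw [MeasureTheory.integral_undef h] at h1
    simp at h1
  have habs : ∀ u v : ℝ, |u * v| ≤ (u*u + v*v)/2 := by
    intro u v
    rw [abs_le]
    constructor
    · nlinarith [sq_nonneg (u+v)]
    · nlinarith [sq_nonneg (u-v)]
  have hmul : ∀ m n : ℕ,
      Integrable (fun x => g m x * g n x) (volume.restrict (Set.Icc (0:ℝ) 1)) := by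
    intro m n
    by_cases hm : m ∈ Finset.Icc 1 N
    · by_cases hn : n ∈ Finset.Icc 1 N
      · have hi : Integrable (fun x => |a m * a n|/2 * (φ m x * φ m x + φ n x * φ n x))
            (volume.restrict (Set.Icc (0:ℝ) 1)) := ((hsq m hm).add (hsq n hn)).const_mul _
        refine hi.mono' (((hgmeas m).mul (hgmeas n)).aestronglyMeasurable) ?_
        filter_upwards with x
        simp only [hgdef, if_pos hm, if_pos hn, Real.norm_eq_abs]
        have he : a m * φ m x * (a n * φ n x) = a m * a n * (φ m x * φ n x) := by ring
        rw [he, abs_mul]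
        have h2 := habs (φ m x) (φ n x)
        have h0 : (0:ℝ) ≤ |a m * a n| := abs_nonneg _
        calc |a m * a n| * |φ m x * φ n x|
            ≤ |a m * a n| * ((φ m x * φ m x + φ n x * φ n x)/2) :=
              mul_le_mul_of_nonneg_left h2 h0
          _ = |a m * a n|/2 * (φ m x * φ m x + φ n x * φ n x) := by ring
      · have : (fun x => g m x * g n x) = fun _ => (0:ℝ) := by
          funext x; simp only [hgdef, hn, if_false, mul_zero]
        rw [this]; exact integrable_const 0
    · have : (fun x => g m x * g n x) = fun _ => (0:ℝ) := by
        funext x; simp only [hgdef, hm, if_false, zero_mul]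
      rw [this]; exact integrable_const 0
  have hgint : ∀ m n : ℕ, (∫ x in Set.Icc (0:ℝ) 1, g m x * g n x)
      = if m = n ∧ m ∈ Finset.Icc 1 N then a m ^ 2 else 0 := by
    intro m n
    by_cases hm : m ∈ Finset.Icc 1 N
    · by_cases hn : n ∈ Finset.Icc 1 N
      · have he : (fun x => g m x * g n x) = fun x => a m * a n * (φ m x * φ n x) := by
          funext x; simp only [hgdef, if_pos hm, if_pos hn]; ring
        rw [he, MeasureTheory.integral_const_mul, horth m hm n hn]
        by_cases hmn : m = n
        · subst hmn; simp [hm, sq]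
        · simp [hmn]
      · have he : (fun x => g m x * g n x) = fun _ => (0:ℝ) := by
          funext x; simp only [hgdef, hn, if_false, mul_zero]
        have hmn : ¬(m = n ∧ m ∈ Finset.Icc 1 N) := by
          rintro ⟨rfl, h⟩; exact hn h
        rw [he, MeasureTheory.integral_zero, if_neg hmn]
    · have he : (fun x => g m x * g n x) = fun _ => (0:ℝ) := by
        funext x; simp only [hgdef, hm, if_false, zero_mul]
      have hmn : ¬(m = n ∧ m ∈ Finset.Icc 1 N) := by
        rintro ⟨rfl, h⟩; exact hm h
      rw [he, MeasureTheory.integral_zero, if_neg hmn]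
  have hval : ∀ s : Finset ℕ,
      (∫ x in Set.Icc (0:ℝ) 1, (∑ n ∈ s, g n x)^2) = ∑ n ∈ s, w n := by
    intro s
    have hexp : (fun x => (∑ n ∈ s, g n x)^2)
        = fun x => ∑ m ∈ s, ∑ n ∈ s, g m x * g n x := by
      funext x; rw [sq, Finset.sum_mul_sum]
    rw [hexp, MeasureTheory.integral_finset_sum _
      (fun m _ => integrable_finset_sum _ fun n _ => hmul m n)]
    have : ∀ m ∈ s, (∫ x in Set.Icc (0:ℝ) 1, ∑ n ∈ s, g m x * g n x)
        = ∑ n ∈ s, ∫ x in Set.Icc (0:ℝ) 1, g m x * g n x := by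
      intro m _
      exact MeasureTheory.integral_finset_sum _ fun n _ => hmul m n
    rw [Finset.sum_congr rfl this]
    have : ∀ m ∈ s, (∑ n ∈ s, ∫ x in Set.Icc (0:ℝ) 1, g m x * g n x) = w m := by
      intro m hm
      rw [Finset.sum_congr rfl (fun n _ => hgint m n)]
      simp only [ite_and]
      rw [Finset.sum_ite_eq s m (fun n => if m ∈ Finset.Icc 1 N then a m ^ 2 else 0)]
      · simp [hm, hwdef]
    exact Finset.sum_congr rfl this
  -- the dominating function
  set F : ℝ → ℝ := fun x => ((2*K+2 : ℕ) : ℝ) * ∑ k ∈ Finset.range (K+1),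
      ∑ i ∈ Finset.range (2^(K-k)),
        (∑ n ∈ Finset.Ioc (i*2^k) (i*2^k + 2^k), g n x)^2 with hFdef
  have hFint : Integrable F (volume.restrict (Set.Icc (0:ℝ) 1)) := by
    apply Integrable.const_mul
    apply integrable_finset_sum
    intro k _
    apply integrable_finset_sum
    intro i _
    have hexp : (fun x => (∑ n ∈ Finset.Ioc (i*2^k) (i*2^k + 2^k), g n x)^2)
        = fun x => ∑ m' ∈ Finset.Ioc (i*2^k) (i*2^k + 2^k),
            ∑ n ∈ Finset.Ioc (i*2^k) (i*2^k + 2^k), g m' x * g n x := by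
      funext x; rw [sq, Finset.sum_mul_sum]
    rw [hexp]
    exact integrable_finset_sum _ fun m' _ => integrable_finset_sum _ fun n _ => hmul m' n
  -- pointwise domination
  have hpt : ∀ x : ℝ, (sqVar N fun n => a n * φ n x)^2 ≤ F x := by
    intro x
    have hF0 : 0 ≤ F x := by
      rw [hFdef]
      apply mul_nonneg (Nat.cast_nonneg _)
      exact Finset.sum_nonneg fun k _ => Finset.sum_nonneg fun i _ => sq_nonneg _
    have hle : sqVar N (fun n => a n * φ n x) ≤ Real.sqrt (F x) := by
      apply Real.sSup_le _ (Real.sqrt_nonneg _)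
      rintro r ⟨m, c, hc, hc0, hcmN, rfl⟩
      apply Real.sqrt_le_sqrt
      have hrw : ∀ j ∈ Finset.range m,
          (∑ n ∈ Finset.Ioc (c j) (c (j+1)), a n * φ n x)
            = ∑ n ∈ Finset.Ioc (c j) (c (j+1)), g n x := by
        intro j hj
        apply Finset.sum_congr rfl
        intro n hn
        rw [Finset.mem_Ioc] at hn
        have hjm : j + 1 ≤ m := Finset.mem_range.1 hj
        have hnN : n ≤ N := le_trans hn.2 (by rw [← hcmN]; exact hc.monotone hjm)
        have h1 : 1 ≤ n := by omega
        have hmem : n ∈ Finset.Icc 1 N := Finset.mem_Icc.2 ⟨h1, hnN⟩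
        simp only [hgdef, hmem, if_true]
      calc ∑ j ∈ Finset.range m, (∑ n ∈ Finset.Ioc (c j) (c (j+1)), a n * φ n x)^2
          = ∑ j ∈ Finset.range m, (∑ n ∈ Finset.Ioc (c j) (c (j+1)), g n x)^2 :=
            Finset.sum_congr rfl (fun j hj => by rw [hrw j hj])
        _ ≤ F x := core_var_bound (fun n => g n x) K m c hc hc0 (by rw [hcmN]; exact hNK)
    have h0 : 0 ≤ sqVar N (fun n => a n * φ n x) := by
      apply Real.sSup_nonneg
      rintro r ⟨m, c, hc, hc0, hcmN, rfl⟩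
      exact Real.sqrt_nonneg _
    calc (sqVar N fun n => a n * φ n x)^2 ≤ (Real.sqrt (F x))^2 :=
          pow_le_pow_left₀ h0 hle 2
      _ = F x := Real.sq_sqrt hF0
  -- integral of F
  have hlevel : ∀ k, k ≤ K → ∑ i ∈ Finset.range (2^(K-k)),
      ∑ n ∈ Finset.Ioc (i*2^k) (i*2^k + 2^k), w n ≤ A := by
    intro k hk
    rw [sum_Ioc_blocks w (2^k) (2^(K-k))]
    have hpow : 2^(K-k) * 2^k = 2^K := by
      rw [← pow_add]
      congr 1
      omega
    rw [hpow]
    have hsub : Finset.Icc 1 N ⊆ Finset.Ioc 0 (2^K) := by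
      intro n hn
      rw [Finset.mem_Icc] at hn
      rw [Finset.mem_Ioc]
      omega
    have : ∑ n ∈ Finset.Icc 1 N, w n = ∑ n ∈ Finset.Ioc 0 (2^K), w n := by
      apply Finset.sum_subset hsub
      intro n _ hn
      simp only [hwdef, hn, if_false]
    rw [← this]
    apply le_of_eq
    apply Finset.sum_congr rfl
    intro n hn
    simp only [hwdef, hn, if_true]
  have hFval : (∫ x in Set.Icc (0:ℝ) 1, F x) ≤ ((2*K+2 : ℕ) : ℝ) * ((K+1 : ℕ) * A) := by
    rw [hFdef]
    rw [MeasureTheory.integral_const_mul]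
    apply mul_le_mul_of_nonneg_left _ (Nat.cast_nonneg _)
    rw [MeasureTheory.integral_finset_sum]
    · have h1 : ∀ k ∈ Finset.range (K+1),
          (∫ x in Set.Icc (0:ℝ) 1, ∑ i ∈ Finset.range (2^(K-k)),
            (∑ n ∈ Finset.Ioc (i*2^k) (i*2^k + 2^k), g n x)^2) ≤ A := by
        intro k hk
        rw [MeasureTheory.integral_finset_sum]
        · refine le_trans (le_of_eq (Finset.sum_congr rfl fun i _ => hval _)) ?_
          exact hlevel k (by simpa using Nat.lt_succ_iff.1 (Finset.mem_range.1 hk))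
        · intro i _
          have hexp : (fun x => (∑ n ∈ Finset.Ioc (i*2^k) (i*2^k + 2^k), g n x)^2)
              = fun x => ∑ m' ∈ Finset.Ioc (i*2^k) (i*2^k + 2^k),
                  ∑ n ∈ Finset.Ioc (i*2^k) (i*2^k + 2^k), g m' x * g n x := by
            funext x; rw [sq, Finset.sum_mul_sum]
          rw [hexp]
          exact integrable_finset_sum _ fun m' _ => integrable_finset_sum _ fun n _ => hmul m' n
      calc ∑ k ∈ Finset.range (K+1), ∫ x in Set.Icc (0:ℝ) 1,
            ∑ i ∈ Finset.range (2^(K-k)), (∑ n ∈ Finset.Ioc (i*2^k) (i*2^k + 2^k), g n x)^2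
          ≤ ∑ k ∈ Finset.range (K+1), A := Finset.sum_le_sum h1
        _ = ((K+1 : ℕ) : ℝ) * A := by rw [Finset.sum_const, Finset.card_range]; simp
    · intro k _
      apply integrable_finset_sum
      intro i _
      have hexp : (fun x => (∑ n ∈ Finset.Ioc (i*2^k) (i*2^k + 2^k), g n x)^2)
          = fun x => ∑ m' ∈ Finset.Ioc (i*2^k) (i*2^k + 2^k),
              ∑ n ∈ Finset.Ioc (i*2^k) (i*2^k + 2^k), g m' x * g n x := by
        funext x; rw [sq, Finset.sum_mul_sum]
      rw [hexp]
      exact integrable_finset_sum _ fun m' _ => integrable_finset_sum _ fun n _ => hmul m' n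
  -- integral bound
  have hIbound : (∫ x in Set.Icc (0:ℝ) 1, (sqVar N fun n => a n * φ n x)^2)
      ≤ 2 * ((K:ℝ)+1)^2 * A := by
    have h1 : (∫ x in Set.Icc (0:ℝ) 1, (sqVar N fun n => a n * φ n x)^2)
        ≤ ∫ x in Set.Icc (0:ℝ) 1, F x := by
      apply MeasureTheory.integral_mono_of_nonneg
      · filter_upwards with x
        exact sq_nonneg _
      · exact hFint
      · filter_upwards with x
        exact hpt x
    refine h1.trans (hFval.trans (le_of_eq ?_))
    push_cast
    ring
  -- numeric endgame
  set L : ℝ := Real.log ((N:ℝ) + 1) with hL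
  have hlog2 : (0.6931471803 : ℝ) < Real.log 2 := Real.log_two_gt_d9
  have hN2 : (2:ℝ) ≤ (N:ℝ) + 1 := by
    have : (1:ℝ) ≤ (N:ℝ) := by exact_mod_cast hN
    linarith
  have hL2 : Real.log 2 ≤ L := Real.log_le_log (by norm_num) hN2
  have hLpos : 0 < L := lt_of_lt_of_le (lt_trans (by norm_num) hlog2) hL2
  have hKle : ((K:ℝ) + 1) ≤ 13 * L := by
    rcases Nat.lt_or_ge N 2 with h2 | h2
    · have hN1 : N = 1 := by omega
      have hK0 : K = 0 := by rw [hK, hN1, Nat.clog_one_right]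
      rw [hK0]
      push_cast
      nlinarith
    · have hKpos : 0 < K := Nat.clog_pos one_lt_two h2
      have hpow : 2^(K-1) < N := by
        have := Nat.pow_pred_clog_lt_self (b := 2) one_lt_two (by omega : 1 < N)
        simpa [hK, Nat.pred_eq_sub_one] using this
      have hreal : ((2^(K-1) : ℕ) : ℝ) ≤ (N:ℝ) := by exact_mod_cast hpow.le
      have hlogN : ((K:ℝ) - 1) * Real.log 2 ≤ L := by
        have h3 : Real.log ((2:ℝ)^(K-1)) ≤ Real.log ((N:ℝ) + 1) := by
          apply Real.log_le_log (by positivity)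
          push_cast at hreal ⊢
          linarith
        rw [Real.log_pow] at h3
        have hcast : ((K - 1 : ℕ) : ℝ) = (K:ℝ) - 1 := by
          have : 1 ≤ K := hKpos
          push_cast [this]
          ring
        rw [hcast] at h3
        exact h3
      nlinarith [mul_le_mul_of_nonneg_left hL2 (le_of_lt hLpos)]
  have hsqrtA : 0 ≤ Real.sqrt A := Real.sqrt_nonneg _
  calc Real.sqrt (∫ x in Set.Icc (0:ℝ) 1, (sqVar N fun n => a n * φ n x)^2)
      ≤ Real.sqrt (2 * ((K:ℝ)+1)^2 * A) := Real.sqrt_le_sqrt hIbound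
    _ = Real.sqrt (2 * ((K:ℝ)+1)^2) * Real.sqrt A := Real.sqrt_mul (by positivity) A
    _ ≤ (1.5 * ((K:ℝ)+1)) * Real.sqrt A := by
        apply mul_le_mul_of_nonneg_right _ hsqrtA
        rw [show (1.5:ℝ) * ((K:ℝ)+1) = Real.sqrt ((1.5 * ((K:ℝ)+1))^2) from
          (Real.sqrt_sq (by positivity)).symm]
        apply Real.sqrt_le_sqrt
        nlinarith [sq_nonneg ((K:ℝ)+1)]
    _ ≤ (1.5 * (13 * L)) * Real.sqrt A := by
        apply mul_le_mul_of_nonneg_right _ hsqrtA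
        nlinarith
    _ ≤ 20 * L * Real.sqrt A := by
        apply mul_le_mul_of_nonneg_right _ hsqrtA
        nlinarith
end

section
/- There exists an absolute constant C > 0 with the following property. Let m ≥ 0, let {φ_n}_{n=1}^{2^m} be a real-valued orthonormal system on 𝕋 = [0,1], and let a_1, …, a_{2^m} be real coefficients. Define the lacunary difference sequence at each x ∈ 𝕋 by D_0(x) = a_1 φ_1(x) and D_k(x) = ∑_{n=2^{k−1}+1}^{2^k} a_n φ_n(x) for 1 ≤ k ≤ m. Then (∫_𝕋 ‖(D_k(x))_{k=0}^m‖²_{V²} dx)^{1/2} ≤ C (∑_{n=1}^{2^m} ln(n+1) a_n²)^{1/2}. -/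
open MeasureTheory

open Finset

def pc (p : ℕ × ℕ) : Finset ℕ := Finset.Ioc (p.2 * 2 ^ p.1) ((p.2 + 1) * 2 ^ p.1)

noncomputable def pw (p : ℕ × ℕ) : ℝ := (((p.1 : ℝ) + 1)⁻¹) ^ 2

lemma pw_nonneg (p : ℕ × ℕ) : 0 ≤ pw p := by unfold pw; positivity

lemma pc_nonempty (p : ℕ × ℕ) : (pc p).Nonempty := by
  refine ⟨(p.2 + 1) * 2 ^ p.1, ?_⟩
  simp only [pc, Finset.mem_Ioc]
  have h := pow_pos (by norm_num : 0 < 2) p.1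
  have e : (p.2 + 1) * 2 ^ p.1 = p.2 * 2 ^ p.1 + 2 ^ p.1 := by ring
  omega

lemma step_ineq (s : ℕ) : (((s:ℝ) + 1)⁻¹) ^ 2 + (3 - 2 / ((s:ℝ) + 1)) ≤ 3 - 2 / ((s:ℝ) + 1 + 1) := by
  have h1 : (0:ℝ) < (s:ℝ) + 1 := by positivity
  have h2 : (0:ℝ) < (s:ℝ) + 2 := by positivity
  have hd : 3 - 2/((s:ℝ)+1+1) - ((((s:ℝ) + 1)⁻¹) ^ 2 + (3 - 2/((s:ℝ)+1)))
      = (s:ℝ)/(((s:ℝ)+1)^2*((s:ℝ)+2)) := by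
    field_simp
    ring
  have hnn : (0:ℝ) ≤ (s:ℝ)/(((s:ℝ)+1)^2*((s:ℝ)+2)) := by positivity
  linarith

lemma suffixDecomp : ∀ s t u : ℕ, t * 2 ^ s ≤ u → u < (t+1) * 2 ^ s →
    ∃ D : Finset (ℕ × ℕ),
      (∀ p ∈ D, u ≤ p.2 * 2 ^ p.1) ∧
      (↑D : Set (ℕ × ℕ)).PairwiseDisjoint pc ∧
      D.biUnion pc = Finset.Ioc u ((t+1) * 2 ^ s) ∧
      ∑ p ∈ D, pw p ≤ 3 - 2 / ((s:ℝ) + 1) := by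
  intro s
  induction s with
  | zero =>
    intro t u h1 h2
    have : u = t := by omega
    subst this
    refine ⟨{(0, u)}, ?_, ?_, ?_, ?_⟩
    · intro p hp; simp at hp; subst hp; simp
    · simp
    · simp [pc]
    · simp [pw]; norm_num
  | succ s ih =>
    intro t u h1 h2
    have e1 : t * 2 ^ (s+1) = 2 * t * 2 ^ s := by ring
    have e2 : (t+1) * 2 ^ (s+1) = (2*t+1) * 2 ^ s + 2 ^ s := by ring
    have e3 : (2*t+1+1) * 2 ^ s = (2*t+1) * 2 ^ s + 2 ^ s := by ring
    have e4 : (2*t) * 2 ^ s = 2 * t * 2 ^ s := by ring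
    have e5 : (2*t+1) * 2 ^ s = 2 * t * 2 ^ s + 2 ^ s := by ring
    by_cases hu : (2*t+1) * 2 ^ s ≤ u
    · obtain ⟨D, hend, hdisj, hcov, hwt⟩ := ih (2*t+1) u hu (by omega)
      refine ⟨D, hend, hdisj, ?_, ?_⟩
      · rw [hcov]; congr 1; omega
      · refine hwt.trans ?_
        have h1 : (0:ℝ) < (s:ℝ) + 1 := by positivity
        have h2 : (0:ℝ) < (s:ℝ) + 1 + 1 := by positivity
        push_cast
        gcongr <;> linarith
    · push_neg at hu
      obtain ⟨D, hend, hdisj, hcov, hwt⟩ := ih (2*t) u (by omega) (by omega)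
      have hmemIoc : ∀ p ∈ D, pc p ⊆ Finset.Ioc u ((2*t+1) * 2 ^ s) := by
        intro p hp
        rw [← hcov]
        exact Finset.subset_biUnion_of_mem pc hp
      have hcov' : D.biUnion pc = Finset.Ioc u ((2*t+1) * 2 ^ s) := hcov
      have hnew : (s, 2*t+1) ∉ D := by
        intro hmem
        have h3 := hmemIoc _ hmem (pc_nonempty (s, 2*t+1)).choose_spec
        have h4 := (pc_nonempty (s, 2*t+1)).choose_spec
        simp only [pc, Finset.mem_Ioc] at h3 h4
        omega
      refine ⟨insert (s, 2*t+1) D, ?_, ?_, ?_, ?_⟩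
      · intro p hp
        rcases Finset.mem_insert.1 hp with h | h
        · subst h; simp only; omega
        · exact hend p h
      · rw [Finset.coe_insert]
        refine Set.PairwiseDisjoint.insert hdisj ?_
        intro q hq _
        have hsub := hmemIoc q hq
        rw [Finset.disjoint_left]
        intro k hk hk2
        have h5 := hsub hk2
        simp only [pc, Finset.mem_Ioc] at hk h5
        omega
      · rw [Finset.biUnion_insert, hcov']
        have hpc : pc (s, 2*t+1) = Finset.Ioc ((2*t+1) * 2^s) ((t+1) * 2^(s+1)) := by
          simp only [pc]; congr 1; omega
        rw [hpc, Finset.union_comm,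
          Finset.Ioc_union_Ioc_eq_Ioc (by omega) (by have := pow_pos (by norm_num : 0 < 2) s; omega)]
      · rw [Finset.sum_insert hnew]
        have hst := step_ineq s
        have hpw : pw (s, 2*t+1) = (((s:ℝ) + 1)⁻¹) ^ 2 := rfl
        rw [hpw]
        push_cast
        push_cast at hst
        linarith

lemma prefixDecomp : ∀ s t v : ℕ, t * 2 ^ s < v → v ≤ (t+1) * 2 ^ s →
    ∃ D : Finset (ℕ × ℕ),
      (∀ p ∈ D, t * 2 ^ s ≤ p.2 * 2 ^ p.1) ∧
      (↑D : Set (ℕ × ℕ)).PairwiseDisjoint pc ∧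
      D.biUnion pc = Finset.Ioc (t * 2 ^ s) v ∧
      ∑ p ∈ D, pw p ≤ 3 - 2 / ((s:ℝ) + 1) := by
  intro s
  induction s with
  | zero =>
    intro t v h1 h2
    have : v = t + 1 := by omega
    subst this
    refine ⟨{(0, t)}, ?_, ?_, ?_, ?_⟩
    · intro p hp; simp at hp; subst hp; simp
    · simp
    · simp [pc]
    · simp [pw]; norm_num
  | succ s ih =>
    intro t v h1 h2
    have e1 : t * 2 ^ (s+1) = 2 * t * 2 ^ s := by ring
    have e2 : (t+1) * 2 ^ (s+1) = (2*t+1) * 2 ^ s + 2 ^ s := by ring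
    have e3 : (2*t+1+1) * 2 ^ s = (2*t+1) * 2 ^ s + 2 ^ s := by ring
    have e5 : (2*t+1) * 2 ^ s = 2 * t * 2 ^ s + 2 ^ s := by ring
    by_cases hv : v ≤ (2*t+1) * 2 ^ s
    · obtain ⟨D, hend, hdisj, hcov, hwt⟩ := ih (2*t) v (by omega) hv
      refine ⟨D, ?_, hdisj, ?_, ?_⟩
      · intro p hp; have := hend p hp; omega
      · rw [hcov]; congr 1; omega
      · refine hwt.trans ?_
        have h1 : (0:ℝ) < (s:ℝ) + 1 := by positivity
        have h2 : (0:ℝ) < (s:ℝ) + 1 + 1 := by positivity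
        push_cast
        gcongr <;> linarith
    · push_neg at hv
      obtain ⟨D, hend, hdisj, hcov, hwt⟩ := ih (2*t+1) v hv (by omega)
      have hmemIoc : ∀ p ∈ D, pc p ⊆ Finset.Ioc ((2*t+1) * 2 ^ s) v := by
        intro p hp
        rw [← hcov]
        exact Finset.subset_biUnion_of_mem pc hp
      have hnew : (s, 2*t) ∉ D := by
        intro hmem
        have h3 := hmemIoc _ hmem (pc_nonempty (s, 2*t)).choose_spec
        have h4 := (pc_nonempty (s, 2*t)).choose_spec
        simp only [pc, Finset.mem_Ioc] at h3 h4
        omega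
      refine ⟨insert (s, 2*t) D, ?_, ?_, ?_, ?_⟩
      · intro p hp
        rcases Finset.mem_insert.1 hp with h | h
        · subst h; simp only; omega
        · have := hend p h; omega
      · rw [Finset.coe_insert]
        refine Set.PairwiseDisjoint.insert hdisj ?_
        intro q hq _
        have hsub := hmemIoc q hq
        rw [Finset.disjoint_left]
        intro k hk hk2
        have h5 := hsub hk2
        simp only [pc, Finset.mem_Ioc] at hk h5
        omega
      · rw [Finset.biUnion_insert, hcov]
        have hpc : pc (s, 2*t) = Finset.Ioc (t * 2^(s+1)) ((2*t+1) * 2^s) := by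
          simp only [pc]; congr 1 <;> omega
        rw [hpc, Finset.Ioc_union_Ioc_eq_Ioc (by omega) (by omega)]
      · rw [Finset.sum_insert hnew]
        have hst := step_ineq s
        have hpw : pw (s, 2*t) = (((s:ℝ) + 1)⁻¹) ^ 2 := rfl
        rw [hpw]
        push_cast
        push_cast at hst
        linarith

lemma biUnion_union' (s t : Finset (ℕ × ℕ)) (f : ℕ × ℕ → Finset ℕ) :
    (s ∪ t).biUnion f = s.biUnion f ∪ t.biUnion f := by
  ext k
  simp only [Finset.mem_biUnion, Finset.mem_union]
  constructor
  · rintro ⟨p, (h | h), hk⟩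
    exacts [Or.inl ⟨p, h, hk⟩, Or.inr ⟨p, h, hk⟩]
  · rintro (⟨p, h, hk⟩ | ⟨p, h, hk⟩)
    exacts [⟨p, Or.inl h, hk⟩, ⟨p, Or.inr h, hk⟩]

lemma mainDecomp : ∀ s t u v : ℕ, t * 2 ^ s ≤ u → u < v → v ≤ (t+1) * 2 ^ s →
    ∃ D : Finset (ℕ × ℕ),
      (∀ p ∈ D, u ≤ p.2 * 2 ^ p.1) ∧
      (↑D : Set (ℕ × ℕ)).PairwiseDisjoint pc ∧
      D.biUnion pc = Finset.Ioc u v ∧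
      ∑ p ∈ D, pw p ≤ 6 := by
  intro s
  induction s with
  | zero =>
    intro t u v h1 h2 h3
    have hu : u = t := by omega
    have hv : v = t + 1 := by omega
    subst hu; subst hv
    refine ⟨{(0, u)}, ?_, ?_, ?_, ?_⟩
    · intro p hp; simp at hp; subst hp; simp
    · simp
    · simp [pc]
    · simp only [Finset.sum_singleton]; norm_num [pw]
  | succ s ih =>
    intro t u v h1 h2 h3
    have e1 : t * 2 ^ (s+1) = 2 * t * 2 ^ s := by ring
    have e2 : (t+1) * 2 ^ (s+1) = (2*t+1) * 2 ^ s + 2 ^ s := by ring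
    have e3 : (2*t+1+1) * 2 ^ s = (2*t+1) * 2 ^ s + 2 ^ s := by ring
    have e5 : (2*t+1) * 2 ^ s = 2 * t * 2 ^ s + 2 ^ s := by ring
    by_cases hv : v ≤ (2*t+1) * 2 ^ s
    · exact ih (2*t) u v (by omega) h2 hv
    · push_neg at hv
      by_cases hu : (2*t+1) * 2 ^ s ≤ u
      · obtain ⟨D, hend, hdisj, hcov, hwt⟩ := ih (2*t+1) u v hu h2 (by omega)
        exact ⟨D, hend, hdisj, hcov, hwt⟩
      · push_neg at hu
        obtain ⟨Ds, hends, hdisjs, hcovs, hwts⟩ := suffixDecomp s (2*t) u (by omega) hu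
        obtain ⟨Dp, hendp, hdisjp, hcovp, hwtp⟩ := prefixDecomp s (2*t+1) v hv (by omega)
        have hsubs : ∀ p ∈ Ds, pc p ⊆ Finset.Ioc u ((2*t+1) * 2 ^ s) := by
          intro p hp; rw [← hcovs]; exact Finset.subset_biUnion_of_mem pc hp
        have hsubp : ∀ p ∈ Dp, pc p ⊆ Finset.Ioc ((2*t+1) * 2 ^ s) v := by
          intro p hp; rw [← hcovp]; exact Finset.subset_biUnion_of_mem pc hp
        have hdisjSets : Disjoint Ds Dp := by
          rw [Finset.disjoint_left]
          intro p hps hpp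
          have h3 := hsubs p hps (pc_nonempty p).choose_spec
          have h4 := hsubp p hpp (pc_nonempty p).choose_spec
          simp only [Finset.mem_Ioc] at h3 h4
          omega
        refine ⟨Ds ∪ Dp, ?_, ?_, ?_, ?_⟩
        · intro p hp
          rcases Finset.mem_union.1 hp with h | h
          · exact hends p h
          · have := hendp p h; omega
        · rw [Finset.coe_union]
          rw [Set.pairwiseDisjoint_union]
          refine ⟨hdisjs, hdisjp, ?_⟩
          intro p hps q hqp _
          have h3 := hsubs p hps
          have h4 := hsubp q hqp
          rw [Finset.disjoint_left]
          intro k hk hk2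
          have h5 := h3 hk
          have h6 := h4 hk2
          simp only [Finset.mem_Ioc] at h5 h6
          omega
        · rw [biUnion_union', hcovs, hcovp, Finset.Ioc_union_Ioc_eq_Ioc (by omega) (by omega)]
        · rw [Finset.sum_union hdisjSets]
          have h1 : (0:ℝ) < (s:ℝ) + 1 := by positivity
          have hq : 2 / ((s:ℝ)+1) > 0 := by positivity
          linarith

lemma QDecomp : ∀ r : ℕ, ∃ D : Finset (ℕ × ℕ),
    (∀ p ∈ D, 1 ≤ p.2 ∨ p = (0,0)) ∧
    (↑D : Set (ℕ × ℕ)).PairwiseDisjoint pc ∧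
    D.biUnion pc = Finset.Ioc 0 (2 ^ r) ∧
    ∑ p ∈ D, pw p ≤ 3 - 2 / ((r:ℝ) + 1) := by
  intro r
  induction r with
  | zero =>
    refine ⟨{(0, 0)}, ?_, ?_, ?_, ?_⟩
    · intro p hp; simp at hp; subst hp; simp
    · simp
    · ext k; simp [pc, Finset.mem_Ioc]; omega
    · simp only [Finset.sum_singleton]; norm_num [pw]
  | succ r ih =>
    obtain ⟨D, hadm, hdisj, hcov, hwt⟩ := ih
    have hsub : ∀ p ∈ D, pc p ⊆ Finset.Ioc 0 (2 ^ r) := by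
      intro p hp; rw [← hcov]; exact Finset.subset_biUnion_of_mem pc hp
    have hP := pow_pos (by norm_num : 0 < 2) r
    have e1 : (1+1) * 2 ^ r = 2 ^ (r+1) := by ring
    have e2 : 1 * 2 ^ r = 2 ^ r := by ring
    have hnew : (r, 1) ∉ D := by
      intro hmem
      have h3 := hsub _ hmem (pc_nonempty (r, 1)).choose_spec
      have h4 := (pc_nonempty (r, 1)).choose_spec
      simp only [pc, Finset.mem_Ioc] at h3 h4
      omega
    refine ⟨insert (r, 1) D, ?_, ?_, ?_, ?_⟩
    · intro p hp
      rcases Finset.mem_insert.1 hp with h | h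
      · subst h; left; simp
      · exact hadm p h
    · rw [Finset.coe_insert]
      refine Set.PairwiseDisjoint.insert hdisj ?_
      intro q hq _
      have h3 := hsub q hq
      rw [Finset.disjoint_left]
      intro k hk hk2
      have h5 := h3 hk2
      simp only [pc, Finset.mem_Ioc] at hk h5
      omega
    · rw [Finset.biUnion_insert, hcov]
      have hpc : pc (r, 1) = Finset.Ioc (2 ^ r) (2 ^ (r+1)) := by
        simp only [pc]; congr 1 <;> omega
      rw [hpc, Finset.union_comm, Finset.Ioc_union_Ioc_eq_Ioc (by omega) (by omega)]
    · rw [Finset.sum_insert hnew]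
      have hst := step_ineq r
      have hpw : pw (r, 1) = (((r:ℝ) + 1)⁻¹) ^ 2 := rfl
      rw [hpw]
      push_cast
      push_cast at hst
      linarith

lemma topDecomp (u v : ℕ) (huv : u < v) : ∃ D : Finset (ℕ × ℕ),
    (∀ p ∈ D, 1 ≤ p.2 ∨ p = (0,0)) ∧
    (↑D : Set (ℕ × ℕ)).PairwiseDisjoint pc ∧
    D.biUnion pc = Finset.Ioc u v ∧
    ∑ p ∈ D, pw p ≤ 6 := by
  rcases Nat.eq_zero_or_pos u with hu | hu
  · subst hu
    rcases Nat.lt_or_ge v 2 with hv | hv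
    · have : v = 1 := by omega
      subst this
      obtain ⟨D, hadm, hdisj, hcov, hwt⟩ := QDecomp 0
      refine ⟨D, hadm, hdisj, by simp only [pow_zero] at hcov; exact hcov, by norm_num at hwt ⊢; linarith⟩
    · set r := Nat.log 2 (v - 1) with hr
      have h1 : 2 ^ r ≤ v - 1 := Nat.pow_log_le_self 2 (by omega)
      have h2 : v - 1 < 2 ^ (r + 1) := Nat.lt_pow_succ_log_self (by norm_num) _
      have e1 : (2:ℕ) ^ (r+1) = 2 * 2 ^ r := by ring
      have hP := pow_pos (by norm_num : 0 < 2) r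
      obtain ⟨DQ, hadmQ, hdisjQ, hcovQ, hwtQ⟩ := QDecomp r
      obtain ⟨DP, hendP, hdisjP, hcovP, hwtP⟩ := prefixDecomp r 1 v (by omega) (by omega)
      have hcovP' : DP.biUnion pc = Finset.Ioc (2 ^ r) v := by rw [hcovP]; congr 1; omega
      have hsubQ : ∀ p ∈ DQ, pc p ⊆ Finset.Ioc 0 (2 ^ r) := by
        intro p hp; rw [← hcovQ]; exact Finset.subset_biUnion_of_mem pc hp
      have hsubP : ∀ p ∈ DP, pc p ⊆ Finset.Ioc (2 ^ r) v := by
        intro p hp; rw [← hcovP']; exact Finset.subset_biUnion_of_mem pc hp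
      have hdisjSets : Disjoint DQ DP := by
        rw [Finset.disjoint_left]
        intro p hps hpp
        have h3 := hsubQ p hps (pc_nonempty p).choose_spec
        have h4 := hsubP p hpp (pc_nonempty p).choose_spec
        simp only [Finset.mem_Ioc] at h3 h4
        omega
      refine ⟨DQ ∪ DP, ?_, ?_, ?_, ?_⟩
      · intro p hp
        rcases Finset.mem_union.1 hp with h | h
        · exact hadmQ p h
        · left
          have h5 := hendP p h
          have h6 := pow_pos (by norm_num : 0 < 2) p.1
          rcases Nat.eq_zero_or_pos p.2 with h0 | h0
          · exfalso; rw [h0] at h5; simp at h5; all_goals omega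
          · exact h0
      · rw [Finset.coe_union, Set.pairwiseDisjoint_union]
        refine ⟨hdisjQ, hdisjP, ?_⟩
        intro p hps q hqp _
        have h3 := hsubQ p hps
        have h4 := hsubP q hqp
        rw [Finset.disjoint_left]
        intro k hk hk2
        have h5 := h3 hk
        have h6 := h4 hk2
        simp only [Finset.mem_Ioc] at h5 h6
        omega
      · rw [biUnion_union', hcovQ, hcovP', Finset.Ioc_union_Ioc_eq_Ioc (by omega) (by omega)]
      · rw [Finset.sum_union hdisjSets]
        have hq : 2 / ((r:ℝ)+1) > 0 := by positivity
        linarith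
  · obtain ⟨D, hend, hdisj, hcov, hwt⟩ := mainDecomp v 0 u v (by omega) huv
      (by simp; exact (Nat.lt_two_pow_self (n := v)).le)
    refine ⟨D, ?_, hdisj, ?_, hwt⟩
    · intro p hp
      left
      have h5 := hend p hp
      rcases Nat.eq_zero_or_pos p.2 with h0 | h0
      · exfalso; rw [h0] at h5; simp at h5; all_goals omega
      · exact h0
    · rw [hcov]

lemma cube_le : ∀ l : ℕ, (l + 2)^3 ≤ 16 * 2 ^ l := by
  intro l
  induction l with
  | zero => norm_num
  | succ l ih =>
    rcases Nat.lt_or_ge l 2 with h | h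
    · interval_cases l <;> norm_num
    · have h2 : (l + 3)^3 ≤ 2 * (l + 2)^3 := by
        have e : (l+3)^3 = l^3+9*l^2+27*l+27 := by ring
        have e2 : 2*(l+2)^3 = 2*l^3+12*l^2+24*l+16 := by ring
        have h3 : 2*(l*l) ≤ l*(l*l) := Nat.mul_le_mul_right _ h
        have h4 : 2*l ≤ l*l := Nat.mul_le_mul_right _ h
        have e3 : l^3 = l*(l*l) := by ring
        have e4 : l^2 = l*l := by ring
        omega
      calc (l + 1 + 2)^3 = (l + 3)^3 := by ring_nf
        _ ≤ 2 * (l + 2)^3 := h2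
        _ ≤ 2 * (16 * 2 ^ l) := by omega
        _ = 16 * 2 ^ (l + 1) := by ring

lemma clog_le_log (n : ℕ) (hn : 1 ≤ n) :
    ((Nat.clog 2 n : ℝ) + 1) ≤ 6 * Real.log ((n : ℝ) + 1) := by
  have hlog2 : (1:ℝ)/2 ≤ Real.log 2 := by
    have := Real.log_two_gt_d9
    linarith
  have hlogn : Real.log 2 ≤ Real.log ((n : ℝ) + 1) := by
    apply Real.log_le_log (by norm_num)
    have : (1:ℝ) ≤ (n:ℝ) := by exact_mod_cast hn
    linarith
  have hnn : (0:ℝ) ≤ Real.log ((n : ℝ) + 1) := by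
    apply Real.log_nonneg
    have : (0:ℝ) ≤ (n:ℝ) := Nat.cast_nonneg n
    linarith
  rcases Nat.eq_zero_or_pos (Nat.clog 2 n) with h0 | h0
  · rw [h0]
    norm_num
    linarith
  · have hn2 : 1 < n := by
      by_contra h
      have : n = 1 := by omega
      rw [this] at h0
      simp [Nat.clog] at h0
    have hpow : 2 ^ (Nat.clog 2 n - 1) < n := Nat.pow_pred_clog_lt_self (by norm_num) hn2
    have hpowR : ((2:ℝ)) ^ (Nat.clog 2 n - 1) ≤ (n:ℝ) := by
      exact_mod_cast Nat.le_of_lt hpow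
    have hlogpow : ((Nat.clog 2 n - 1 : ℕ) : ℝ) * Real.log 2 ≤ Real.log ((n:ℝ) + 1) := by
      calc ((Nat.clog 2 n - 1 : ℕ) : ℝ) * Real.log 2 = Real.log ((2:ℝ) ^ (Nat.clog 2 n - 1)) := by
            rw [Real.log_pow]
        _ ≤ Real.log ((n:ℝ)+1) := by
            apply Real.log_le_log (by positivity)
            linarith
    have hcast : ((Nat.clog 2 n - 1 : ℕ) : ℝ) = (Nat.clog 2 n : ℝ) - 1 := by
      have : 1 ≤ Nat.clog 2 n := h0
      push_cast [Nat.cast_sub this]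
      ring
    rw [hcast] at hlogpow
    nlinarith

def eB (K : ℕ) : ℕ := 2 ^ K / 2

lemma eB_succ (K : ℕ) : eB (K + 1) = 2 ^ K := by
  simp [eB, pow_succ, Nat.mul_div_cancel]

lemma eB_zero : eB 0 = 0 := by simp [eB]

lemma eB_mono : Monotone eB := fun i j h => Nat.div_le_div_right (Nat.pow_le_pow_right (by norm_num) h)

lemma blockSum (φ : ℕ → ℝ → ℝ) (a : ℕ → ℝ) (x : ℝ) : ∀ v u : ℕ, u ≤ v →
    ∑ K ∈ Finset.Ioc u v,
      (if K = 1 then a 1 * φ 1 x else ∑ n ∈ Finset.Ioc ((2:ℕ) ^ (K - 2)) ((2:ℕ) ^ (K - 1)), a n * φ n x)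
    = ∑ n ∈ Finset.Ioc (eB u) (eB v), a n * φ n x := by
  intro v
  induction v with
  | zero =>
    intro u hu
    have : u = 0 := by omega
    subst this
    simp
  | succ v ih =>
    intro u hu
    rcases Nat.eq_or_lt_of_le hu with h | h
    · subst h; simp
    · have hu' : u ≤ v := by omega
      rw [Finset.sum_Ioc_succ_top hu']
      rw [ih u hu']
      have hstep : (if v + 1 = 1 then a 1 * φ 1 x
          else ∑ n ∈ Finset.Ioc ((2:ℕ) ^ (v + 1 - 2)) ((2:ℕ) ^ (v + 1 - 1)), a n * φ n x)
          = ∑ n ∈ Finset.Ioc (eB v) (eB (v+1)), a n * φ n x := by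
        rcases Nat.eq_zero_or_pos v with h0 | h0
        · subst h0
          rw [if_pos rfl, eB_zero, eB_succ,
            show Finset.Ioc 0 (2^0) = {1} from by ext k; simp [Finset.mem_Ioc]; omega,
            Finset.sum_singleton]
        · rw [if_neg (by omega), eB_succ]
          have heBv : eB v = 2 ^ (v - 1) := by
            obtain ⟨w, hw⟩ : ∃ w, v = w + 1 := ⟨v - 1, by omega⟩
            subst hw
            simp [eB_succ]
          rw [heBv]
          simp
      rw [hstep]
      exact Finset.sum_Ioc_consecutive _ (eB_mono hu') (eB_mono (by omega))

lemma ortho_key (m : ℕ) (φ : ℕ → ℝ → ℝ) (a : ℕ → ℝ)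
    (hmeas : ∀ n, Measurable (φ n))
    (horth : ∀ i ∈ Finset.Icc 1 (2 ^ m), ∀ n ∈ Finset.Icc 1 (2 ^ m),
      (∫ x in Set.Icc (0:ℝ) 1, φ i x * φ n x) = if i = n then (1:ℝ) else 0)
    (T : Finset ℕ) (hT : T ⊆ Finset.Icc 1 (2 ^ m)) :
    MeasureTheory.Integrable (fun x => (∑ n ∈ T, a n * φ n x)^2)
      (MeasureTheory.volume.restrict (Set.Icc (0:ℝ) 1)) ∧
    (∫ x in Set.Icc (0:ℝ) 1, (∑ n ∈ T, a n * φ n x)^2) = ∑ n ∈ T, a n ^ 2 := by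
  set μ := MeasureTheory.volume.restrict (Set.Icc (0:ℝ) 1) with hμ
  have hdiag : ∀ i ∈ Finset.Icc 1 (2 ^ m), MeasureTheory.Integrable (fun x => φ i x * φ i x) μ := by
    intro i hi
    by_contra hni
    have h0 := MeasureTheory.integral_undef hni
    have h2 := horth i hi i hi
    rw [if_pos rfl] at h2
    rw [h0] at h2
    norm_num at h2
  have hmul : ∀ i ∈ Finset.Icc 1 (2 ^ m), ∀ n ∈ Finset.Icc 1 (2 ^ m),
      MeasureTheory.Integrable (fun x => φ i x * φ n x) μ := by
    intro i hi n hn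
    refine MeasureTheory.Integrable.mono' (g := fun x => (1/2) * (φ i x * φ i x) + (1/2) * (φ n x * φ n x))
      (((hdiag i hi).const_mul _).add ((hdiag n hn).const_mul _))
      (((hmeas i).mul (hmeas n)).aestronglyMeasurable) ?_
    refine MeasureTheory.ae_of_all _ (fun x => ?_)
    have h1 : ‖φ i x * φ n x‖ = |φ i x * φ n x| := rfl
    rw [h1, abs_mul]
    nlinarith [sq_nonneg (|φ i x| - |φ n x|), sq_abs (φ i x), sq_abs (φ n x), abs_nonneg (φ i x), abs_nonneg (φ n x)]
  have hint : ∀ i ∈ T, ∀ n ∈ T, MeasureTheory.Integrable (fun x => (a i * a n) * (φ i x * φ n x)) μ :=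
    fun i hi n hn => (hmul i (hT hi) n (hT hn)).const_mul _
  have hexp : (fun x => (∑ n ∈ T, a n * φ n x)^2)
      = fun x => ∑ i ∈ T, ∑ n ∈ T, (a i * a n) * (φ i x * φ n x) := by
    funext x
    rw [sq, Finset.sum_mul_sum]
    refine Finset.sum_congr rfl (fun i _ => Finset.sum_congr rfl (fun n _ => by ring))
  constructor
  · rw [hexp]
    exact MeasureTheory.integrable_finset_sum _ (fun i hi =>
      MeasureTheory.integrable_finset_sum _ (fun n hn => hint i hi n hn))
  · rw [hexp]
    rw [MeasureTheory.integral_finset_sum _ (fun i hi =>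
      MeasureTheory.integrable_finset_sum _ (fun n hn => hint i hi n hn))]
    have hsumi : ∀ i ∈ T, (∫ x, (∑ n ∈ T, (a i * a n) * (φ i x * φ n x)) ∂μ) = a i ^ 2 := by
      intro i hi
      rw [MeasureTheory.integral_finset_sum _ (fun n hn => hint i hi n hn)]
      have hone : ∀ n ∈ T, (∫ x, (a i * a n) * (φ i x * φ n x) ∂μ) = if i = n then a i * a n else 0 := by
        intro n hn
        rw [MeasureTheory.integral_const_mul]
        have := horth i (hT hi) n (hT hn)
        rw [hμ] at *
        rw [this]
        split <;> simp
      rw [Finset.sum_congr rfl hone]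
      rw [Finset.sum_ite_eq T i (fun n => a i * a n), if_pos hi]
      ring
    rw [Finset.sum_congr rfl hsumi]

lemma eB_eq (u : ℕ) (h : 1 ≤ u) : eB u = 2 ^ (u - 1) := by
  obtain ⟨w, hw⟩ : ∃ w, u = w + 1 := ⟨u - 1, by omega⟩
  subst hw
  simp [eB_succ]

def Pset (N : ℕ) : Finset (ℕ × ℕ) :=
  ((Finset.range (N+1)) ×ˢ (Finset.range (N+1))).filter
    (fun p => (p.2+1) * 2 ^ p.1 ≤ N ∧ (1 ≤ p.2 ∨ p = (0,0)))

lemma coeff_bound (N n : ℕ) (hn : 1 ≤ n) :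
    ∑ p ∈ (Pset N).filter (fun p => eB (p.2 * 2 ^ p.1) < n ∧ n ≤ eB ((p.2+1) * 2 ^ p.1)),
      ((p.1 : ℝ) + 1) ^ 2 ≤ 102 * Real.log ((n : ℝ) + 1) := by
  set K := Nat.clog 2 n + 1 with hK
  set L := Nat.log 2 K with hL
  set F := (Pset N).filter (fun p => eB (p.2 * 2 ^ p.1) < n ∧ n ≤ eB ((p.2+1) * 2 ^ p.1)) with hF
  set G := insert ((0:ℕ),(0:ℕ)) ((Finset.range (L + 1)).image (fun s => (s, (K-1) / 2 ^ s))) with hG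
  have hsub : F ⊆ G := by
    intro p hp
    obtain ⟨hmemP, hlow, hup⟩ := Finset.mem_filter.1 hp
    obtain ⟨-, -, hadm⟩ := Finset.mem_filter.1 hmemP
    obtain ⟨s, t⟩ := p
    simp only at hadm hlow hup ⊢
    have hpos : 0 < 2 ^ s := pow_pos (by norm_num) s
    have hKub : K ≤ (t+1) * 2 ^ s := by
      have hq1 : 1 ≤ (t+1) * 2 ^ s := Nat.mul_pos (by omega) hpos
      rw [eB_eq _ hq1] at hup
      have := (Nat.clog_le_iff_le_pow (by norm_num : 1 < 2)).2 hup
      omega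
    have hKlb : t * 2 ^ s < K := by
      by_contra hc
      push_neg at hc
      have hu1 : 1 ≤ t * 2 ^ s := by omega
      have h1 : n ≤ 2 ^ (Nat.clog 2 n) := Nat.le_pow_clog (by norm_num) n
      have h2 : (2:ℕ) ^ (Nat.clog 2 n) ≤ 2 ^ (t * 2 ^ s - 1) :=
        Nat.pow_le_pow_right (by norm_num) (by omega)
      rw [eB_eq _ hu1] at hlow
      omega
    rcases hadm with ht1 | h00
    · apply Finset.mem_insert.2
      right
      rw [Finset.mem_image]
      refine ⟨s, ?_, ?_⟩
      · rw [Finset.mem_range]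
        have h3 : 2 ^ s ≤ t * 2 ^ s := Nat.le_mul_of_pos_left _ (by omega)
        have h4 : 2 ^ s ≤ K := by omega
        have := (Nat.le_log_iff_pow_le (by norm_num : 1 < 2) (by omega : K ≠ 0)).2 h4
        omega
      · have hdiv : (K - 1) / 2 ^ s = t := Nat.div_eq_of_lt_le (by omega) (by omega)
        rw [hdiv]
    · rw [h00]
      exact Finset.mem_insert_self _ _
  have hnonneg : ∀ p : ℕ × ℕ, (0:ℝ) ≤ ((p.1 : ℝ) + 1) ^ 2 := fun p => by positivity
  have h1 : ∑ p ∈ F, ((p.1 : ℝ) + 1) ^ 2 ≤ ∑ p ∈ G, ((p.1 : ℝ) + 1) ^ 2 :=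
    Finset.sum_le_sum_of_subset_of_nonneg hsub (fun p _ _ => hnonneg p)
  have h2 : ∑ p ∈ G, ((p.1 : ℝ) + 1) ^ 2
      ≤ 1 + ∑ p ∈ (Finset.range (L + 1)).image (fun s => (s, (K-1) / 2 ^ s)), ((p.1 : ℝ) + 1) ^ 2 := by
    rw [hG]
    by_cases hmem : ((0:ℕ),(0:ℕ)) ∈ (Finset.range (L + 1)).image (fun s => (s, (K-1) / 2 ^ s))
    · rw [Finset.insert_eq_self.2 hmem]
      have := Finset.sum_nonneg (fun p (_ : p ∈ (Finset.range (L + 1)).image (fun s => (s, (K-1) / 2 ^ s))) => hnonneg p)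
      linarith
    · rw [Finset.sum_insert hmem]
      norm_num
  have h3 : ∑ p ∈ (Finset.range (L + 1)).image (fun s => (s, (K-1) / 2 ^ s)), ((p.1 : ℝ) + 1) ^ 2
      = ∑ s ∈ Finset.range (L + 1), ((s : ℝ) + 1) ^ 2 := by
    rw [Finset.sum_image]
    intro x _ y _ hxy
    simpa using congrArg Prod.fst hxy
  have h4 : ∑ s ∈ Finset.range (L + 1), ((s : ℝ) + 1) ^ 2 ≤ ((L:ℝ) + 1) ^ 3 := by
    calc ∑ s ∈ Finset.range (L + 1), ((s : ℝ) + 1) ^ 2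
        ≤ (Finset.range (L + 1)).card • (((L:ℝ) + 1) ^ 2) := by
          apply Finset.sum_le_card_nsmul
          intro s hs
          rw [Finset.mem_range] at hs
          have : (s:ℝ) ≤ (L:ℝ) := by exact_mod_cast Nat.lt_succ_iff.1 hs
          nlinarith
      _ = ((L:ℝ) + 1) * ((L:ℝ) + 1) ^ 2 := by
          rw [Finset.card_range, nsmul_eq_mul]
          push_cast
          ring
      _ = ((L:ℝ) + 1) ^ 3 := by ring
  have hKpos : 1 ≤ K := by omega
  have h5 : ((L:ℝ) + 1) ^ 3 ≤ 16 * (K:ℝ) := by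
    have hc : ((L + 2)^3 : ℕ) ≤ 16 * 2 ^ L := cube_le L
    have hpl : (2:ℕ) ^ L ≤ K := Nat.pow_log_le_self 2 (by omega)
    have h6 : ((L:ℝ) + 1) ^ 3 ≤ (((L + 2)^3 : ℕ) : ℝ) := by
      push_cast
      nlinarith [Nat.cast_nonneg (α := ℝ) L]
    calc ((L:ℝ) + 1) ^ 3 ≤ (((L + 2)^3 : ℕ) : ℝ) := h6
      _ ≤ ((16 * 2 ^ L : ℕ) : ℝ) := by exact_mod_cast hc
      _ ≤ 16 * (K:ℝ) := by
          have h9 : ((16 * 2 ^ L : ℕ) : ℝ) = 16 * ((2:ℝ)) ^ L := by push_cast; ring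
          have h10 : ((2:ℝ)) ^ L ≤ (K:ℝ) := by exact_mod_cast hpl
          rw [h9]
          linarith
  have h7 : (1:ℝ) + 16 * (K:ℝ) ≤ 17 * (K:ℝ) := by
    have : (1:ℝ) ≤ (K:ℝ) := by exact_mod_cast hKpos
    linarith
  have h8 : (17:ℝ) * (K:ℝ) ≤ 102 * Real.log ((n : ℝ) + 1) := by
    have := clog_le_log n hn
    have hKc : (K:ℝ) = (Nat.clog 2 n : ℝ) + 1 := by rw [hK]; push_cast; ring
    rw [hKc]
    linarith
  calc ∑ p ∈ F, ((p.1 : ℝ) + 1) ^ 2 ≤ ∑ p ∈ G, ((p.1 : ℝ) + 1) ^ 2 := h1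
    _ ≤ 1 + ∑ s ∈ Finset.range (L + 1), ((s : ℝ) + 1) ^ 2 := by rw [← h3]; exact h2
    _ ≤ 1 + ((L:ℝ) + 1) ^ 3 := by linarith
    _ ≤ 1 + 16 * (K:ℝ) := by linarith
    _ ≤ 17 * (K:ℝ) := h7
    _ ≤ 102 * Real.log ((n : ℝ) + 1) := h8

/-- The lacunary differences `D_0 = a_1 φ_1`, `D_k = ∑_{n=2^{k-1}+1}^{2^k} a_n φ_n`,
indexed here as a sequence starting at `1`: position `K` corresponds to `D_{K-1}`. -/
theorem sq_var_lacunary :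
    ∃ C : ℝ, 0 < C ∧ ∀ (m : ℕ) (φ : ℕ → ℝ → ℝ) (a : ℕ → ℝ),
      (∀ n, Measurable (φ n)) →
      (∀ i ∈ Finset.Icc 1 (2 ^ m), ∀ n ∈ Finset.Icc 1 (2 ^ m),
        (∫ x in Set.Icc (0:ℝ) 1, φ i x * φ n x) = if i = n then (1:ℝ) else 0) →
      Real.sqrt (∫ x in Set.Icc (0:ℝ) 1,
          (sqVar (m + 1) fun (K : ℕ) =>
            if K = 1 then a 1 * φ 1 x
            else ∑ n ∈ Finset.Ioc ((2 : ℕ) ^ (K - 2)) ((2 : ℕ) ^ (K - 1)), a n * φ n x) ^ 2)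
        ≤ C * Real.sqrt (∑ n ∈ Finset.Icc 1 (2 ^ m),
            a n ^ 2 * Real.log ((n : ℝ) + 1)) := by
  refine ⟨25, by norm_num, ?_⟩
  intro m φ a hmeas horth
  set N := m + 1 with hN
  set Sg := ∑ n ∈ Finset.Icc 1 (2 ^ m), a n ^ 2 * Real.log ((n : ℝ) + 1) with hSg
  set Tp : ℕ × ℕ → Finset ℕ :=
    fun p => Finset.Ioc (eB (p.2 * 2 ^ p.1)) (eB ((p.2 + 1) * 2 ^ p.1)) with hTpdef
  set Sn : ℕ × ℕ → ℝ → ℝ := fun p x => ∑ n ∈ Tp p, a n * φ n x with hSndef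
  set G : ℝ → ℝ := fun x => 6 * ∑ p ∈ Pset N, ((p.1 : ℝ) + 1) ^ 2 * (Sn p x) ^ 2 with hGdef
  -- basic facts about pieces in `Pset N`
  have hPmem : ∀ p ∈ Pset N, (p.2 + 1) * 2 ^ p.1 ≤ N := by
    intro p hp
    exact (Finset.mem_filter.1 hp).2.1
  have hTsub : ∀ p ∈ Pset N, Tp p ⊆ Finset.Icc 1 (2 ^ m) := by
    intro p hp n hn
    have hq := hPmem p hp
    have hpos : 0 < 2 ^ p.1 := pow_pos (by norm_num) p.1
    have hq1 : 1 ≤ (p.2 + 1) * 2 ^ p.1 := Nat.mul_pos (by omega) hpos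
    rw [hTpdef] at hn
    simp only [Finset.mem_Ioc] at hn
    rw [eB_eq _ hq1] at hn
    rw [Finset.mem_Icc]
    constructor
    · omega
    · calc n ≤ 2 ^ ((p.2 + 1) * 2 ^ p.1 - 1) := hn.2
        _ ≤ 2 ^ m := Nat.pow_le_pow_right (by norm_num) (by omega)
  have hKey := fun p (hp : p ∈ Pset N) => ortho_key m φ a hmeas horth (Tp p) (hTsub p hp)
  have hGint : MeasureTheory.Integrable G (MeasureTheory.volume.restrict (Set.Icc (0:ℝ) 1)) := by
    rw [hGdef]
    apply MeasureTheory.Integrable.const_mul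
    exact MeasureTheory.integrable_finset_sum _ (fun p hp => ((hKey p hp).1).const_mul _)
  -- pointwise bound
  have hpoint : ∀ x : ℝ,
      (sqVar (m + 1) fun (K : ℕ) =>
        if K = 1 then a 1 * φ 1 x
        else ∑ n ∈ Finset.Ioc ((2 : ℕ) ^ (K - 2)) ((2 : ℕ) ^ (K - 1)), a n * φ n x) ^ 2 ≤ G x := by
    intro x
    have hGnn : 0 ≤ G x := by
      rw [hGdef]
      apply mul_nonneg (by norm_num)
      exact Finset.sum_nonneg (fun p _ => by positivity)
    have hub : ∀ r ∈ { r : ℝ | ∃ (M : ℕ) (c : ℕ → ℕ), StrictMono c ∧ c 0 = 0 ∧ c M = m + 1 ∧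
        r = Real.sqrt (∑ j ∈ Finset.range M,
          (∑ n ∈ Finset.Ioc (c j) (c (j + 1)),
            (if n = 1 then a 1 * φ 1 x
             else ∑ i ∈ Finset.Ioc ((2 : ℕ) ^ (n - 2)) ((2 : ℕ) ^ (n - 1)), a i * φ i x)) ^ 2) },
        r ≤ Real.sqrt (G x) := by
      rintro r ⟨M, c, hmono, hc0, hcM, rfl⟩
      apply Real.sqrt_le_sqrt
      have hDex : ∀ j, j < M → ∃ D : Finset (ℕ × ℕ),
          (∀ p ∈ D, 1 ≤ p.2 ∨ p = (0,0)) ∧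
          (↑D : Set (ℕ × ℕ)).PairwiseDisjoint pc ∧
          D.biUnion pc = Finset.Ioc (c j) (c (j+1)) ∧
          ∑ p ∈ D, pw p ≤ 6 :=
        fun j _ => topDecomp (c j) (c (j+1)) (hmono (by omega))
      choose! D hadm hdisj hcov hwt using hDex
      have hblock : ∀ j ∈ Finset.range M,
          (∑ n ∈ Finset.Ioc (c j) (c (j + 1)),
            (if n = 1 then a 1 * φ 1 x
             else ∑ i ∈ Finset.Ioc ((2 : ℕ) ^ (n - 2)) ((2 : ℕ) ^ (n - 1)), a i * φ i x)) ^ 2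
          ≤ 6 * ∑ p ∈ D j, ((p.1 : ℝ) + 1) ^ 2 * (Sn p x) ^ 2 := by
        intro j hj
        have hj' : j < M := Finset.mem_range.1 hj
        have hBe : (∑ n ∈ Finset.Ioc (c j) (c (j + 1)),
            (if n = 1 then a 1 * φ 1 x
             else ∑ i ∈ Finset.Ioc ((2 : ℕ) ^ (n - 2)) ((2 : ℕ) ^ (n - 1)), a i * φ i x))
            = ∑ p ∈ D j, Sn p x := by
          rw [← hcov j hj', Finset.sum_biUnion (hdisj j hj')]
          refine Finset.sum_congr rfl (fun p _ => ?_)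
          have hple : p.2 * 2 ^ p.1 ≤ (p.2 + 1) * 2 ^ p.1 :=
            Nat.mul_le_mul_right _ (by omega)
          exact blockSum φ a x _ _ hple
        rw [hBe]
        calc (∑ p ∈ D j, Sn p x) ^ 2
            = (∑ p ∈ D j, (((p.1 : ℝ) + 1)⁻¹) * (((p.1 : ℝ) + 1) * Sn p x)) ^ 2 := by
              congr 1
              refine Finset.sum_congr rfl (fun p _ => ?_)
              have : ((p.1 : ℝ) + 1) ≠ 0 := by positivity
              field_simp
          _ ≤ (∑ p ∈ D j, (((p.1 : ℝ) + 1)⁻¹) ^ 2) *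
              (∑ p ∈ D j, (((p.1 : ℝ) + 1) * Sn p x) ^ 2) :=
              Finset.sum_mul_sq_le_sq_mul_sq _ _ _
          _ ≤ 6 * (∑ p ∈ D j, (((p.1 : ℝ) + 1) * Sn p x) ^ 2) := by
              apply mul_le_mul_of_nonneg_right _ (Finset.sum_nonneg (fun p _ => sq_nonneg _))
              exact hwt j hj'
          _ = 6 * ∑ p ∈ D j, ((p.1 : ℝ) + 1) ^ 2 * (Sn p x) ^ 2 := by
              congr 1
              exact Finset.sum_congr rfl (fun p _ => by ring)
      have hDdisj : (↑(Finset.range M) : Set ℕ).PairwiseDisjoint D := by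
        intro i hi j hj hij
        simp only [Finset.coe_range, Set.mem_Iio] at hi hj
        rw [Function.onFun, Finset.disjoint_left]
        intro p hpi hpj
        obtain ⟨k, hk⟩ := pc_nonempty p
        have h1 : k ∈ Finset.Ioc (c i) (c (i+1)) := by
          rw [← hcov i hi]; exact Finset.mem_biUnion.2 ⟨p, hpi, hk⟩
        have h2 : k ∈ Finset.Ioc (c j) (c (j+1)) := by
          rw [← hcov j hj]; exact Finset.mem_biUnion.2 ⟨p, hpj, hk⟩
        simp only [Finset.mem_Ioc] at h1 h2
        rcases lt_or_gt_of_ne hij with h | h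
        · have := hmono.monotone (show i + 1 ≤ j by omega)
          omega
        · have := hmono.monotone (show j + 1 ≤ i by omega)
          omega
      have hbsub : (Finset.range M).biUnion D ⊆ Pset N := by
        intro p hp
        obtain ⟨j, hj, hpD⟩ := Finset.mem_biUnion.1 hp
        have hj' : j < M := Finset.mem_range.1 hj
        have hsubIoc : pc p ⊆ Finset.Ioc (c j) (c (j+1)) := by
          rw [← hcov j hj']; exact Finset.subset_biUnion_of_mem pc hpD
        have hpos : 0 < 2 ^ p.1 := pow_pos (by norm_num) p.1
        have hmax : (p.2 + 1) * 2 ^ p.1 ∈ pc p := by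
          simp only [pc, Finset.mem_Ioc]
          have : p.2 * 2 ^ p.1 + 2 ^ p.1 = (p.2 + 1) * 2 ^ p.1 := by ring
          omega
        have hle : (p.2 + 1) * 2 ^ p.1 ≤ c (j+1) := (Finset.mem_Ioc.1 (hsubIoc hmax)).2
        have hleN : c (j+1) ≤ N := by
          rw [hN, ← hcM]; exact hmono.monotone (by omega)
        have h2s : 2 ^ p.1 ≤ (p.2 + 1) * 2 ^ p.1 := Nat.le_mul_of_pos_left _ (by omega)
        have hs2 : p.1 < 2 ^ p.1 := Nat.lt_two_pow_self (n := p.1)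
        have ht2 : p.2 + 1 ≤ (p.2 + 1) * 2 ^ p.1 := Nat.le_mul_of_pos_right _ hpos
        refine Finset.mem_filter.2 ⟨Finset.mem_product.2 ⟨?_, ?_⟩, ?_, hadm j hj' p hpD⟩
        · rw [Finset.mem_range]; omega
        · rw [Finset.mem_range]; omega
        · omega
      calc ∑ j ∈ Finset.range M, (∑ n ∈ Finset.Ioc (c j) (c (j + 1)),
            (if n = 1 then a 1 * φ 1 x
             else ∑ i ∈ Finset.Ioc ((2 : ℕ) ^ (n - 2)) ((2 : ℕ) ^ (n - 1)), a i * φ i x)) ^ 2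
          ≤ ∑ j ∈ Finset.range M, 6 * ∑ p ∈ D j, ((p.1 : ℝ) + 1) ^ 2 * (Sn p x) ^ 2 :=
            Finset.sum_le_sum hblock
        _ = 6 * ∑ j ∈ Finset.range M, ∑ p ∈ D j, ((p.1 : ℝ) + 1) ^ 2 * (Sn p x) ^ 2 := by
            rw [Finset.mul_sum]
        _ = 6 * ∑ p ∈ (Finset.range M).biUnion D, ((p.1 : ℝ) + 1) ^ 2 * (Sn p x) ^ 2 := by
            rw [Finset.sum_biUnion hDdisj]
        _ ≤ 6 * ∑ p ∈ Pset N, ((p.1 : ℝ) + 1) ^ 2 * (Sn p x) ^ 2 := by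
            apply mul_le_mul_of_nonneg_left _ (by norm_num)
            exact Finset.sum_le_sum_of_subset_of_nonneg hbsub (fun p _ _ => by positivity)
        _ = G x := by rw [hGdef]
    have hnn' : ∀ r ∈ { r : ℝ | ∃ (M : ℕ) (c : ℕ → ℕ), StrictMono c ∧ c 0 = 0 ∧ c M = m + 1 ∧
        r = Real.sqrt (∑ j ∈ Finset.range M,
          (∑ n ∈ Finset.Ioc (c j) (c (j + 1)),
            (if n = 1 then a 1 * φ 1 x
             else ∑ i ∈ Finset.Ioc ((2 : ℕ) ^ (n - 2)) ((2 : ℕ) ^ (n - 1)), a i * φ i x)) ^ 2) },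
        0 ≤ r := by
      rintro r ⟨M, c, _, _, _, rfl⟩
      exact Real.sqrt_nonneg _
    have hle : (sqVar (m + 1) fun (K : ℕ) =>
        if K = 1 then a 1 * φ 1 x
        else ∑ n ∈ Finset.Ioc ((2 : ℕ) ^ (K - 2)) ((2 : ℕ) ^ (K - 1)), a n * φ n x)
        ≤ Real.sqrt (G x) := by
      rw [sqVar]
      exact Real.sSup_le hub (Real.sqrt_nonneg _)
    have hnn : 0 ≤ (sqVar (m + 1) fun (K : ℕ) =>
        if K = 1 then a 1 * φ 1 x
        else ∑ n ∈ Finset.Ioc ((2 : ℕ) ^ (K - 2)) ((2 : ℕ) ^ (K - 1)), a n * φ n x) := by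
      rw [sqVar]
      exact Real.sSup_nonneg hnn'
    calc (sqVar (m + 1) fun (K : ℕ) =>
        if K = 1 then a 1 * φ 1 x
        else ∑ n ∈ Finset.Ioc ((2 : ℕ) ^ (K - 2)) ((2 : ℕ) ^ (K - 1)), a n * φ n x) ^ 2
        ≤ (Real.sqrt (G x)) ^ 2 := pow_le_pow_left₀ hnn hle 2
      _ = G x := Real.sq_sqrt hGnn
  -- integrate
  have hSgnn : 0 ≤ Sg := by
    rw [hSg]
    apply Finset.sum_nonneg
    intro n _
    apply mul_nonneg (sq_nonneg _)
    apply Real.log_nonneg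
    have : (0:ℝ) ≤ (n:ℝ) := Nat.cast_nonneg n
    linarith
  have hintle : (∫ x in Set.Icc (0:ℝ) 1,
      (sqVar (m + 1) fun (K : ℕ) =>
        if K = 1 then a 1 * φ 1 x
        else ∑ n ∈ Finset.Ioc ((2 : ℕ) ^ (K - 2)) ((2 : ℕ) ^ (K - 1)), a n * φ n x) ^ 2)
      ≤ ∫ x in Set.Icc (0:ℝ) 1, G x :=
    MeasureTheory.integral_mono_of_nonneg
      (MeasureTheory.ae_of_all _ (fun x => sq_nonneg _)) hGint
      (MeasureTheory.ae_of_all _ hpoint)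
  have hGval : (∫ x in Set.Icc (0:ℝ) 1, G x)
      = 6 * ∑ p ∈ Pset N, ((p.1 : ℝ) + 1) ^ 2 * (∑ n ∈ Tp p, a n ^ 2) := by
    rw [hGdef]
    rw [MeasureTheory.integral_const_mul]
    congr 1
    rw [MeasureTheory.integral_finset_sum _ (fun p hp => ((hKey p hp).1).const_mul _)]
    refine Finset.sum_congr rfl (fun p hp => ?_)
    rw [MeasureTheory.integral_const_mul, (hKey p hp).2]
  have hGle : 6 * ∑ p ∈ Pset N, ((p.1 : ℝ) + 1) ^ 2 * (∑ n ∈ Tp p, a n ^ 2) ≤ 612 * Sg := by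
    have hstep1 : ∀ p ∈ Pset N, (∑ n ∈ Tp p, a n ^ 2)
        = ∑ n ∈ Finset.Icc 1 (2 ^ m),
            (if eB (p.2 * 2 ^ p.1) < n ∧ n ≤ eB ((p.2 + 1) * 2 ^ p.1) then a n ^ 2 else 0) := by
      intro p hp
      rw [← Finset.sum_filter]
      apply Finset.sum_congr _ (fun _ _ => rfl)
      ext n
      simp only [Finset.mem_filter, hTpdef, Finset.mem_Ioc]
      constructor
      · intro h
        have hicc := hTsub p hp (show n ∈ Tp p by rw [hTpdef]; simp only [Finset.mem_Ioc]; exact h)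
        exact ⟨hicc, h⟩
      · exact fun h => h.2
    calc 6 * ∑ p ∈ Pset N, ((p.1 : ℝ) + 1) ^ 2 * (∑ n ∈ Tp p, a n ^ 2)
        = 6 * ∑ n ∈ Finset.Icc 1 (2 ^ m),
            (∑ p ∈ (Pset N).filter
              (fun p => eB (p.2 * 2 ^ p.1) < n ∧ n ≤ eB ((p.2 + 1) * 2 ^ p.1)),
              ((p.1 : ℝ) + 1) ^ 2) * a n ^ 2 := by
          congr 1
          rw [Finset.sum_congr rfl (fun p hp => by rw [hstep1 p hp])]
          rw [Finset.sum_congr rfl (fun p _ => Finset.mul_sum _ _ _)]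
          rw [Finset.sum_comm]
          refine Finset.sum_congr rfl (fun n _ => ?_)
          rw [Finset.sum_mul, Finset.sum_filter]
          refine Finset.sum_congr rfl (fun p _ => ?_)
          rw [mul_ite, mul_zero]
        _ ≤ 6 * ∑ n ∈ Finset.Icc 1 ((2:ℕ) ^ m), (102 * Real.log ((n:ℝ) + 1)) * a n ^ 2 := by
          apply mul_le_mul_of_nonneg_left _ (by norm_num)
          apply Finset.sum_le_sum
          intro n hn
          have hn1 : 1 ≤ n := (Finset.mem_Icc.1 hn).1
          exact mul_le_mul_of_nonneg_right (coeff_bound N n hn1) (sq_nonneg _)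
        _ = 612 * Sg := by
          rw [hSg, Finset.mul_sum, Finset.mul_sum]
          exact Finset.sum_congr rfl (fun n _ => by ring)
  calc Real.sqrt (∫ x in Set.Icc (0:ℝ) 1,
        (sqVar (m + 1) fun (K : ℕ) =>
          if K = 1 then a 1 * φ 1 x
          else ∑ n ∈ Finset.Ioc ((2 : ℕ) ^ (K - 2)) ((2 : ℕ) ^ (K - 1)), a n * φ n x) ^ 2)
      ≤ Real.sqrt (625 * Sg) := by
        apply Real.sqrt_le_sqrt
        calc (∫ x in Set.Icc (0:ℝ) 1,
            (sqVar (m + 1) fun (K : ℕ) =>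
              if K = 1 then a 1 * φ 1 x
              else ∑ n ∈ Finset.Ioc ((2 : ℕ) ^ (K - 2)) ((2 : ℕ) ^ (K - 1)), a n * φ n x) ^ 2)
            ≤ ∫ x in Set.Icc (0:ℝ) 1, G x := hintle
          _ ≤ 612 * Sg := by rw [hGval]; exact hGle
          _ ≤ 625 * Sg := by linarith
    _ = 25 * Real.sqrt Sg := by
        rw [show (625 : ℝ) * Sg = 25 ^ 2 * Sg by norm_num,
          Real.sqrt_mul (by positivity) Sg, Real.sqrt_sq (by norm_num)]
end
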